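/- arXiv:2502.12679 — 7 statements merged into one kernel-verified Lean document; each statement's English description precedes it below -/
import Mathlib

section
/- Let f : I → ℝ have a primitive F on an interval I, and let φ : [α,β] → I be continuous and differentiable on (α,β). Let J be the closed interval with endpoints φ(α) and φ(β). If (f∘φ)·φ' is Riemann integrable on [α,β] and f is Riemann integrable on J, then ∫_{φ(α)}^{φ(β)} f(x) dx = ∫_α^β f(φ(t))·φ'(t) dt. -/
open MeasureTheory Set Filter Topology intervalIntegral

/-- A function is Riemann integrable on a set (Lebesgue criterion): it is bounded
on the set and continuous (within the set) at almost every point of the set. -/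
def RiemannIntegrableOn (f : ℝ → ℝ) (s : Set ℝ) : Prop :=
  (∃ M, ∀ x ∈ s, |f x| ≤ M) ∧
  ∀ᵐ x ∂(volume.restrict s), ContinuousWithinAt f s x

lemma RiemannIntegrableOn.integrableOn {f : ℝ → ℝ} {s : Set ℝ} (hs : MeasurableSet s)
    (hfin : volume s < ⊤) (h : RiemannIntegrableOn f s) : IntegrableOn f s volume := by
  obtain ⟨⟨M, hM⟩, hae⟩ := h
  set T : Set ℝ := {x | x ∈ s ∧ ContinuousWithinAt f s x} with hT
  have hTs : T ⊆ s := fun x hx => hx.1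
  have hTmeas : MeasurableSet T := by
    have himg : T = Subtype.val '' {y : s | ContinuousAt (s.restrict f) y} := by
      ext x
      constructor
      · rintro ⟨hxs, hc⟩
        exact ⟨⟨x, hxs⟩, (continuousWithinAt_iff_continuousAt_restrict f hxs).1 hc, rfl⟩
      · rintro ⟨⟨y, hy⟩, hc, rfl⟩
        exact ⟨hy, (continuousWithinAt_iff_continuousAt_restrict f hy).2 hc⟩
    rw [himg]
    exact (MeasurableEmbedding.subtype_coe hs).measurableSet_image.2
      (measurableSet_of_continuousAt _)
  have hnull : volume (s \ T) = 0 := by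
    have h1 : ∀ᵐ x ∂volume, x ∈ s → ContinuousWithinAt f s x :=
      (ae_restrict_iff' hs).1 hae
    have h2 : volume {x | ¬ (x ∈ s → ContinuousWithinAt f s x)} = 0 := ae_iff.1 h1
    refine measure_mono_null (fun x hx => ?_) h2
    exact fun hc => hx.2 ⟨hx.1, hc hx.1⟩
  have heq : s =ᵐ[volume] T := (ae_eq_set).2 ⟨hnull, by simp [diff_eq_empty.2 hTs]⟩
  have hrestr : volume.restrict s = volume.restrict T := Measure.restrict_congr_set heq
  have hcontT : ContinuousOn f T := fun x hx => hx.2.mono hTs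
  refine ⟨?_, ?_⟩
  · show AEStronglyMeasurable f (volume.restrict s)
    rw [hrestr]
    exact hcontT.aestronglyMeasurable hTmeas
  · have : Fact (volume s < ⊤) := ⟨hfin⟩
    refine HasFiniteIntegral.of_bounded (C := M) ?_
    filter_upwards [self_mem_ae_restrict hs] with x hx
    simpa [Real.norm_eq_abs] using hM x hx

theorem stmt0 (I : Set ℝ) (hI : I.OrdConnected) (f F : ℝ → ℝ)
    (hF : ∀ x ∈ I, HasDerivWithinAt F (f x) I x)
    (α β : ℝ) (hαβ : α ≤ β) (φ φ' : ℝ → ℝ)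
    (hmap : ∀ t ∈ Set.Icc α β, φ t ∈ I)
    (hφc : ContinuousOn φ (Set.Icc α β))
    (hφd : ∀ t ∈ Set.Ioo α β, HasDerivAt φ (φ' t) t)
    (hprod : RiemannIntegrableOn (fun t => f (φ t) * φ' t) (Set.Icc α β))
    (hfJ : RiemannIntegrableOn f (Set.uIcc (φ α) (φ β))) :
    ∫ x in (φ α)..(φ β), f x = ∫ t in α..β, f (φ t) * φ' t := by
  have hJI : Set.uIcc (φ α) (φ β) ⊆ I :=
    hI.uIcc_subset (hmap α ⟨le_rfl, hαβ⟩) (hmap β ⟨hαβ, le_rfl⟩)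
  have hFI : ContinuousOn F I := fun x hx => (hF x hx).continuousWithinAt
  -- LHS
  have h1 : ∫ x in (φ α)..(φ β), f x = F (φ β) - F (φ α) := by
    apply intervalIntegral.integral_eq_sub_of_hasDeriv_right
    · exact hFI.mono hJI
    · intro x hx
      have hmem : Set.uIcc (φ α) (φ β) ∈ 𝓝 x := by
        rw [Set.uIcc] at *
        exact Icc_mem_nhds hx.1 hx.2
      exact (((hF x (hJI (Set.Ioo_subset_Icc_self hx))).mono hJI).hasDerivAt
        hmem).hasDerivWithinAt
    · exact (hfJ.integrableOn measurableSet_uIcc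
        (by rw [Set.uIcc]; exact measure_Icc_lt_top)).intervalIntegrable
  -- RHS
  have h2 : ∫ t in α..β, f (φ t) * φ' t = F (φ β) - F (φ α) := by
    apply intervalIntegral.integral_eq_sub_of_hasDerivAt_of_le hαβ
    · exact hFI.comp hφc hmap
    · intro t ht
      have hd : HasDerivWithinAt (F ∘ φ) (f (φ t) * φ' t) (Set.Icc α β) t :=
        (hF (φ t) (hmap t (Set.Ioo_subset_Icc_self ht))).comp t
          ((hφd t ht).hasDerivWithinAt) hmap
      exact hd.hasDerivAt (Icc_mem_nhds ht.1 ht.2)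
    · have : IntegrableOn (fun t => f (φ t) * φ' t) (Set.Icc α β) volume :=
        hprod.integrableOn measurableSet_Icc measure_Icc_lt_top
      exact (this.mono_set (by rw [Set.uIcc_of_le hαβ])).intervalIntegrable
  rw [h1, h2]
end

section
/- Let φ : ℝ → ℝ be an arbitrary function that has a (finite or infinite) derivative at every point of a set M ⊆ ℝ. If the image φ(M) has Lebesgue measure zero, then φ'(t) = 0 for almost every t ∈ M. -/
open MeasureTheory Set Filter Topology intervalIntegral

open scoped NNReal ENNReal

/-- If `φ` is "expanding" on `S` with constant `1/K`, then the measure of `S` is at most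
`K` times the measure of `φ '' S`. -/
theorem aux_expand (φ : ℝ → ℝ) (S : Set ℝ) (K : ℝ≥0)
    (h : ∀ x ∈ S, ∀ y ∈ S, |x - y| ≤ K * |φ x - φ y|) :
    volume S ≤ K * volume (φ '' S) := by
  set ψ := Function.invFunOn φ S with hψ
  have hsub : S ⊆ ψ '' (φ '' S) := by
    intro t ht
    have h1 : ψ (φ t) ∈ S := Function.invFunOn_mem ⟨t, ht, rfl⟩
    have h2 : φ (ψ (φ t)) = φ t := Function.invFunOn_eq ⟨t, ht, rfl⟩
    have h3 : |ψ (φ t) - t| ≤ K * |φ (ψ (φ t)) - φ t| := h _ h1 _ ht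
    rw [h2, sub_self, abs_zero, mul_zero] at h3
    have h4 : ψ (φ t) = t := by
      have := abs_nonneg (ψ (φ t) - t)
      have : |ψ (φ t) - t| = 0 := le_antisymm h3 this
      have := abs_eq_zero.mp this
      linarith [sub_eq_zero.mp this]
    exact ⟨φ t, ⟨t, ht, rfl⟩, h4⟩
  have hlip : LipschitzOnWith K ψ (φ '' S) := by
    apply LipschitzOnWith.of_dist_le_mul
    rintro y₁ ⟨x₁, hx₁, rfl⟩ y₂ ⟨x₂, hx₂, rfl⟩
    have h1 : ψ (φ x₁) ∈ S := Function.invFunOn_mem ⟨x₁, hx₁, rfl⟩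
    have h2 : ψ (φ x₂) ∈ S := Function.invFunOn_mem ⟨x₂, hx₂, rfl⟩
    have e1 : φ (ψ (φ x₁)) = φ x₁ := Function.invFunOn_eq ⟨x₁, hx₁, rfl⟩
    have e2 : φ (ψ (φ x₂)) = φ x₂ := Function.invFunOn_eq ⟨x₂, hx₂, rfl⟩
    have h3 := h _ h1 _ h2
    rw [e1, e2] at h3
    simpa [Real.dist_eq] using h3
  calc volume S ≤ volume (ψ '' (φ '' S)) := measure_mono hsub
    _ = μH[1] (ψ '' (φ '' S)) := by rw [MeasureTheory.hausdorffMeasure_real]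
    _ ≤ (K : ℝ≥0∞) ^ (1 : ℝ) * μH[1] (φ '' S) := hlip.hausdorffMeasure_image_le zero_le_one
    _ = K * volume (φ '' S) := by rw [ENNReal.rpow_one, MeasureTheory.hausdorffMeasure_real]

theorem stmt1 (φ : ℝ → ℝ) (M : Set ℝ)
    (hder : ∀ t ∈ M,
      (∃ d : ℝ, HasDerivAt φ d t) ∨
      Tendsto (fun x => (φ x - φ t) / (x - t)) (𝓝[≠] t) atTop ∨
      Tendsto (fun x => (φ x - φ t) / (x - t)) (𝓝[≠] t) atBot)
    (himg : volume (φ '' M) = 0) :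
    ∀ᵐ t, t ∈ M → HasDerivAt φ 0 t := by
  -- the pieces
  set S : ℕ → ℤ → Set ℝ := fun n k =>
    {t | t ∈ M ∧ (∀ x : ℝ, |x - t| < 1 / (n + 1) → |x - t| ≤ (n + 1) * |φ x - φ t|) ∧
      t ∈ Ico ((k : ℝ) / (n + 1)) (((k : ℝ) + 1) / (n + 1))} with hS
  have hpos : ∀ n : ℕ, (0 : ℝ) < (n : ℝ) + 1 := fun n => by positivity
  -- each piece is null
  have hnull : ∀ n k, volume (S n k) = 0 := by
    intro n k
    have key : ∀ x ∈ S n k, ∀ y ∈ S n k, |x - y| ≤ ((n + 1 : ℝ≥0) : ℝ) * |φ x - φ y| := by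
      rintro x ⟨hxM, hx, hx1, hx2⟩ y ⟨hyM, hy, hy1, hy2⟩
      have hd : |x - y| < 1 / ((n : ℝ) + 1) := by
        have : ((k : ℝ) + 1) / (n + 1) - (k : ℝ) / (n + 1) = 1 / (n + 1) := by
          rw [div_sub_div_same]; ring_nf
        rw [abs_sub_lt_iff]; constructor <;> linarith
      have := hy x hd
      push_cast
      exact this
    have h1 := aux_expand φ (S n k) (n + 1) key
    have h2 : volume (φ '' S n k) = 0 :=
      measure_mono_null (image_mono (f := φ) (fun t ht => ht.1)) himg
    rw [h2, mul_zero] at h1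
    exact le_antisymm h1 (zero_le)
  -- coverage
  have hcov : {t | ¬(t ∈ M → HasDerivAt φ 0 t)} ⊆ ⋃ n, ⋃ k, S n k := by
    intro t ht
    simp only [Set.mem_setOf_eq, Classical.not_imp] at ht
    obtain ⟨htM, htd⟩ := ht
    -- get an expansion constant
    have hexp : ∃ c : ℝ, 0 < c ∧ ∀ᶠ x in 𝓝[≠] t, c ≤ |(φ x - φ t) / (x - t)| := by
      rcases hder t htM with ⟨d, hd⟩ | h | h
      · have hd0 : d ≠ 0 := fun h0 => htd (h0 ▸ hd)
        have hsl : Tendsto (fun x => (φ x - φ t) / (x - t)) (𝓝[≠] t) (𝓝 d) := by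
          exact (hasDerivAt_iff_tendsto_slope.mp hd).congr fun x => slope_def_field φ t x
        refine ⟨|d| / 2, by positivity, ?_⟩
        have : ∀ᶠ x in 𝓝[≠] t, |(φ x - φ t) / (x - t) - d| < |d| / 2 := by
          have := hsl (Metric.ball_mem_nhds d (by positivity : (0:ℝ) < |d|/2))
          filter_upwards [this] with x hx
          simpa [Real.dist_eq] using hx
        filter_upwards [this] with x hx
        have := abs_sub_abs_le_abs_sub ((φ x - φ t) / (x - t)) d
        have h2 := abs_sub_comm ((φ x - φ t) / (x - t)) d
        linarith [abs_sub_abs_le_abs_sub d ((φ x - φ t) / (x - t))]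
      · refine ⟨1, one_pos, ?_⟩
        filter_upwards [h.eventually_ge_atTop 1] with x hx
        calc (1:ℝ) ≤ (φ x - φ t) / (x - t) := hx
          _ ≤ |(φ x - φ t) / (x - t)| := le_abs_self _
      · refine ⟨1, one_pos, ?_⟩
        filter_upwards [h.eventually_le_atBot (-1)] with x hx
        calc (1:ℝ) ≤ -((φ x - φ t) / (x - t)) := by linarith
          _ ≤ |(φ x - φ t) / (x - t)| := neg_le_abs _
    obtain ⟨c, hc, hev⟩ := hexp
    rw [eventually_nhdsWithin_iff, Metric.eventually_nhds_iff] at hev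
    obtain ⟨δ, hδ, hev⟩ := hev
    obtain ⟨n, hn⟩ := exists_nat_gt (max (1 / δ) (1 / c))
    have hn1 : 1 / δ < (n : ℝ) + 1 := ((le_max_left _ _).trans_lt hn).trans (lt_add_one _)
    have hn2 : 1 / c < (n : ℝ) + 1 := ((le_max_right _ _).trans_lt hn).trans (lt_add_one _)
    have hδn : 1 / ((n : ℝ) + 1) < δ := by
      rw [div_lt_iff₀ (hpos n)]
      rw [div_lt_iff₀ hδ] at hn1
      linarith
    have hcn : 1 ≤ ((n : ℝ) + 1) * c := by
      rw [div_lt_iff₀ hc] at hn2; linarith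
    refine mem_iUnion.mpr ⟨n, mem_iUnion.mpr ⟨⌊t * ((n : ℝ) + 1)⌋, htM, ?_, ?_, ?_⟩⟩
    · intro x hx
      rcases eq_or_ne x t with rfl | hxt
      · simp
      · have hxδ : dist x t < δ := by rw [Real.dist_eq]; linarith
        have h1 : c ≤ |(φ x - φ t) / (x - t)| := hev hxδ hxt
        have hxt' : x - t ≠ 0 := sub_ne_zero.mpr hxt
        have h2 : |φ x - φ t| = |(φ x - φ t) / (x - t)| * |x - t| := by
          rw [← abs_mul, div_mul_cancel₀ _ hxt']
        have h3 : c * |x - t| ≤ |φ x - φ t| := by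
          rw [h2]; exact mul_le_mul_of_nonneg_right h1 (abs_nonneg _)
        nlinarith [abs_nonneg (x - t), abs_nonneg (φ x - φ t), hpos n]
    · rw [div_le_iff₀ (hpos n)]
      exact Int.floor_le _
    · rw [lt_div_iff₀ (hpos n)]
      push_cast
      exact Int.lt_floor_add_one _
  -- conclude
  rw [ae_iff]
  refine measure_mono_null hcov ?_
  exact measure_iUnion_null fun n => measure_iUnion_null fun k => hnull n k
end

section
/- Let f : I → ℝ be Riemann integrable (in particular bounded and almost everywhere continuous) on an interval I, and let φ : [α,β] → I be continuous, differentiable on (α,β), with φ' continuous almost everywhere on (α,β). If the product (f∘φ)·φ' is Riemann integrable on [α,β], then ∫_{φ(α)}^{φ(β)} f(x) dx = ∫_α^β f(φ(t))·φ'(t) dt. -/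
open MeasureTheory Set Filter Topology intervalIntegral

lemma lipOn_image_le {f : ℝ → ℝ} {s : Set ℝ} {K : NNReal}
    (hl : LipschitzOnWith K f s) : volume (f '' s) ≤ K * volume s := by
  have h := hl.hausdorffMeasure_image_le (d := 1) zero_le_one
  rw [hausdorffMeasure_real] at h
  simpa [ENNReal.rpow_one] using h

lemma lipOn_image_null {f : ℝ → ℝ} {s : Set ℝ} {K : NNReal}
    (hl : LipschitzOnWith K f s) (hs : volume s = 0) : volume (f '' s) = 0 := by
  have := lipOn_image_le hl
  rw [hs, mul_zero] at this
  exact le_antisymm this zero_le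

/-- pointwise Lipschitz on a null set ⇒ null image -/
lemma pw_lip_image_null {f : ℝ → ℝ} {s : Set ℝ} {K : ℝ}
    (hs : volume s = 0)
    (h : ∀ t ∈ s, ∃ δ > (0:ℝ), ∀ u ∈ s, |u - t| ≤ δ → |f u - f t| ≤ K * |u - t|) :
    volume (f '' s) = 0 := by
  set T : ℕ → ℤ → Set ℝ := fun m j =>
    {t ∈ s | ∀ u ∈ s, |u - t| ≤ 1 / (m + 1) → |f u - f t| ≤ K * |u - t|} ∩
      Icc (j / (2 * (m + 1))) ((j + 1) / (2 * (m + 1))) with hT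
  have hmpos : ∀ m : ℕ, (0:ℝ) < 2 * (m + 1) := by
    intro m; positivity
  have hcover : s ⊆ ⋃ (m : ℕ) (j : ℤ), T m j := by
    intro t ht
    obtain ⟨δ, hδ, hδp⟩ := h t ht
    obtain ⟨m, hm⟩ := exists_nat_one_div_lt hδ
    refine mem_iUnion.2 ⟨m, mem_iUnion.2 ⟨⌊2 * ((m:ℝ) + 1) * t⌋, ?_, ?_⟩⟩
    · exact ⟨ht, fun u hu hle => hδp u hu (hle.trans hm.le)⟩
    · constructor
      · rw [div_le_iff₀ (hmpos m)]
        calc (⌊2 * ((m:ℝ) + 1) * t⌋ : ℝ) ≤ 2 * ((m:ℝ) + 1) * t := Int.floor_le _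
          _ = t * (2 * ((m:ℝ)+1)) := by ring
      · rw [le_div_iff₀ (hmpos m)]
        calc t * (2 * ((m:ℝ)+1)) = 2 * ((m:ℝ) + 1) * t := by ring
          _ ≤ ⌊2 * ((m:ℝ) + 1) * t⌋ + 1 := (Int.lt_floor_add_one _).le
  have hlip : ∀ (m : ℕ) (j : ℤ), LipschitzOnWith K.toNNReal f (T m j) := by
    intro m j
    rw [lipschitzOnWith_iff_dist_le_mul]
    intro x hx y hy
    rw [Real.dist_eq, Real.dist_eq]
    have hxy : |x - y| ≤ 1 / (m + 1) := by
      have h1 := hx.2.1; have h2 := hx.2.2; have h3 := hy.2.1; have h4 := hy.2.2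
      have hW : ((j:ℝ)+1) / (2 * ((m:ℝ) + 1)) - (j:ℝ) / (2 * ((m:ℝ) + 1)) = 1 / (2*((m:ℝ)+1)) := by
        field_simp
        ring
      have hw2 : (1:ℝ)/(2*((m:ℝ)+1)) ≤ 1/((m:ℝ)+1) := by
        apply one_div_le_one_div_of_le (by positivity)
        nlinarith [(by positivity : (0:ℝ) < (m:ℝ)+1)]
      rw [abs_le]
      constructor <;> linarith
    have := hy.1.2 x hx.1.1 hxy
    calc |f x - f y| ≤ K * |x - y| := this
      _ ≤ K.toNNReal * |x - y| := by
        gcongr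
        exact Real.le_coe_toNNReal K
  have himnull : ∀ (m : ℕ) (j : ℤ), volume (f '' T m j) = 0 := by
    intro m j
    refine lipOn_image_null (hlip m j) (le_antisymm ?_ zero_le)
    rw [← hs]
    exact measure_mono (fun x hx => hx.1.1)
  have : f '' s ⊆ ⋃ (m : ℕ) (j : ℤ), f '' T m j := by
    intro y ⟨x, hx, hfx⟩
    obtain ⟨m, hm⟩ := mem_iUnion.1 (hcover hx)
    obtain ⟨j, hj⟩ := mem_iUnion.1 hm
    exact mem_iUnion.2 ⟨m, mem_iUnion.2 ⟨j, ⟨x, hj, hfx⟩⟩⟩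
  refine le_antisymm ((measure_mono this).trans ?_) zero_le
  rw [show (0:ENNReal) = ∑' (m : ℕ) (j : ℤ), volume (f '' T m j) by simp [himnull]]
  exact (measure_iUnion_le _).trans (by gcongr; exact measure_iUnion_le _)

/-- expanding map: null image ⇒ null set -/
lemma expand_null {φ : ℝ → ℝ} {s : Set ℝ} {c : ℝ} (hc : 0 < c)
    (h : ∀ x ∈ s, ∀ y ∈ s, c * |x - y| ≤ |φ x - φ y|)
    (h0 : volume (φ '' s) = 0) : volume s = 0 := by
  set g := Function.invFunOn φ s with hg
  have hginv : ∀ x ∈ s, g (φ x) = x := by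
    intro x hx
    have h1 : g (φ x) ∈ s := Function.invFunOn_mem ⟨x, hx, rfl⟩
    have h2 : φ (g (φ x)) = φ x := Function.invFunOn_eq ⟨x, hx, rfl⟩
    by_contra hne
    have := h _ h1 x hx
    rw [h2, sub_self, abs_zero] at this
    have : |g (φ x) - x| ≤ 0 := by
      by_contra hpos
      nlinarith [abs_nonneg (g (φ x) - x)]
    have := abs_nonpos_iff.1 this
    exact hne (by linarith [sub_eq_zero.1 this])
  have hsub : s ⊆ g '' (φ '' s) := by
    intro x hx
    exact ⟨φ x, mem_image_of_mem _ hx, hginv x hx⟩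
  have hlip : LipschitzOnWith (c⁻¹).toNNReal g (φ '' s) := by
    rw [lipschitzOnWith_iff_dist_le_mul]
    rintro u ⟨x, hx, rfl⟩ v ⟨y, hy, rfl⟩
    rw [Real.dist_eq, Real.dist_eq, hginv x hx, hginv y hy]
    have h2 := h x hx y hy
    have : (c⁻¹).toNNReal = (c⁻¹ : ℝ) := Real.coe_toNNReal _ (by positivity)
    rw [this]
    have h3 := h x hx y hy
    calc |x - y| = c⁻¹ * (c * |x - y|) := by field_simp
      _ ≤ c⁻¹ * |φ x - φ y| := by gcongr
  refine le_antisymm ?_ zero_le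
  calc volume s ≤ volume (g '' (φ '' s)) := measure_mono hsub
    _ ≤ (c⁻¹).toNNReal * volume (φ '' s) := lipOn_image_le hlip
    _ = 0 := by rw [h0, mul_zero]


lemma aesm_of_ae_cwa {f : ℝ → ℝ} {s : Set ℝ} (hs : MeasurableSet s)
    (h : ∀ᵐ x ∂(volume.restrict s), ContinuousWithinAt f s x) :
    AEStronglyMeasurable f (volume.restrict s) := by
  rw [ae_iff] at h
  obtain ⟨N, hNsub, hNmeas, hNnull⟩ := exists_measurable_superset_of_null h
  set T := s \ N with hTdef
  have hTmeas : MeasurableSet T := hs.diff hNmeas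
  have hcont : ContinuousOn f T := by
    intro x hx
    have : ContinuousWithinAt f s x := by
      by_contra hcwa
      exact hx.2 (hNsub hcwa)
    exact this.mono diff_subset
  have h1 : AEStronglyMeasurable f (volume.restrict T) :=
    hcont.aestronglyMeasurable hTmeas
  have h2 : AEStronglyMeasurable f (volume.restrict (s ∩ N)) := by
    have : volume.restrict (s ∩ N) = 0 := by
      rw [Measure.restrict_eq_zero]
      have hNs : volume (N ∩ s) = 0 := by
        rwa [Measure.restrict_apply hNmeas] at hNnull
      exact le_antisymm (le_trans (measure_mono (by rw [inter_comm])) hNs.le) zero_le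
    rw [this]
    exact aestronglyMeasurable_zero_measure f
  have hle : volume.restrict s ≤ volume.restrict T + volume.restrict (s ∩ N) := by
    rw [Measure.le_iff]
    intro A hA
    rw [Measure.coe_add, Pi.add_apply, Measure.restrict_apply hA, Measure.restrict_apply hA,
      Measure.restrict_apply hA]
    have hsub : A ∩ s ⊆ (A ∩ T) ∪ (A ∩ (s ∩ N)) := by
      rintro x ⟨hxA, hxs⟩
      by_cases hxN : x ∈ N
      · exact Or.inr ⟨hxA, hxs, hxN⟩
      · exact Or.inl ⟨hxA, hxs, hxN⟩
    exact (measure_mono hsub).trans (measure_union_le _ _)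
  exact (h1.add_measure h2).mono_measure hle

lemma integrableOn_of_bdd_ae_cwa {f : ℝ → ℝ} {s : Set ℝ} (hs : MeasurableSet s)
    (hvol : volume s ≠ ⊤) {M : ℝ} (hM : ∀ x ∈ s, |f x| ≤ M)
    (h : ∀ᵐ x ∂(volume.restrict s), ContinuousWithinAt f s x) :
    IntegrableOn f s := by
  haveI : IsFiniteMeasure (volume.restrict s) :=
    ⟨by rwa [Measure.restrict_apply_univ, lt_top_iff_ne_top]⟩
  refine ⟨aesm_of_ae_cwa hs h, HasFiniteIntegral.of_bounded (C := M) ?_⟩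
  filter_upwards [ae_restrict_mem hs] with x hx
  simpa [Real.norm_eq_abs] using hM x hx


theorem stmt5 (I : Set ℝ) (hI : I.OrdConnected) (f : ℝ → ℝ)
    (α β : ℝ) (hαβ : α ≤ β) (φ φ' : ℝ → ℝ)
    (hmap : ∀ t ∈ Set.Icc α β, φ t ∈ I)
    (hφc : ContinuousOn φ (Set.Icc α β))
    (hφd : ∀ t ∈ Set.Ioo α β, HasDerivAt φ (φ' t) t)
    (hφ'c : ∀ᵐ t, t ∈ Set.Ioo α β → ContinuousWithinAt φ' (Set.Ioo α β) t)
    (hf : RiemannIntegrableOn f I)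
    (hprod : RiemannIntegrableOn (fun t => f (φ t) * φ' t) (Set.Icc α β)) :
    ∫ x in (φ α)..(φ β), f x = ∫ t in α..β, f (φ t) * φ' t := by
  classical
  set p : ℝ → ℝ := fun t => f (φ t) * φ' t with hpdef
  obtain ⟨M₀, hM₀⟩ := hf.1
  set M := max M₀ 0 with hMdef
  have hM : ∀ x ∈ I, |f x| ≤ M := fun x hx => (hM₀ x hx).trans (le_max_left _ _)
  have hMnn : (0:ℝ) ≤ M := le_max_right _ _
  obtain ⟨M₁, hM₁⟩ := hprod.1
  set M' := max M₁ 0 with hM'def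
  have hM' : ∀ t ∈ Icc α β, |p t| ≤ M' := fun t ht => (hM₁ t ht).trans (le_max_left _ _)
  have hM'nn : (0:ℝ) ≤ M' := le_max_right _ _
  have hImeas : MeasurableSet I := hI.measurableSet
  -- the image interval J
  set J := φ '' Icc α β with hJdef
  have hJIcc : J = Icc (sInf J) (sSup J) := hφc.image_Icc hαβ
  have hφαJ : φ α ∈ J := mem_image_of_mem φ (left_mem_Icc.2 hαβ)
  have hφβJ : φ β ∈ J := mem_image_of_mem φ (right_mem_Icc.2 hαβ)
  have hmS : sInf J ≤ sSup J := by
    have h1 := hφαJ; rw [hJIcc] at h1; exact h1.1.trans h1.2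
  have hJsubI : J ⊆ I := by rintro _ ⟨t, ht, rfl⟩; exact hmap t ht
  have hJmeas : MeasurableSet J := by rw [hJIcc]; exact measurableSet_Icc
  have hJconn : OrdConnected J := by rw [hJIcc]; exact ordConnected_Icc
  have hJvol : volume J ≠ ⊤ := by
    rw [hJIcc, Real.volume_Icc]; exact ENNReal.ofReal_ne_top
  -- null set of discontinuity of f
  set D := {x | ¬ ContinuousWithinAt f I x} ∩ I with hDdef
  have hDnull : volume D = 0 := by
    have h2 := hf.2; rw [ae_iff] at h2
    rwa [Measure.restrict_apply' hImeas] at h2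
  -- integrability of f on J
  have hfae : ∀ᵐ x ∂(volume.restrict J), ContinuousWithinAt f J x := by
    rw [ae_iff, Measure.restrict_apply' hJmeas]
    refine measure_mono_null (fun x hx => ?_) hDnull
    exact ⟨fun hc => hx.1 (hc.mono hJsubI), hJsubI hx.2⟩
  have hfJ : IntegrableOn f J :=
    integrableOn_of_bdd_ae_cwa hJmeas hJvol (fun x hx => hM x (hJsubI hx)) hfae
  have hfInt : ∀ u ∈ J, IntervalIntegrable f volume (φ α) u := fun u hu =>
    (hfJ.mono_set (hJconn.uIcc_subset hφαJ hu)).intervalIntegrable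
  -- integrability of p on [α, β]
  have hpae : ∀ᵐ t ∂(volume.restrict (Icc α β)), ContinuousWithinAt p (Icc α β) t := hprod.2
  have hpInt : IntegrableOn p (Icc α β) :=
    integrableOn_of_bdd_ae_cwa measurableSet_Icc (by simp) hM' hpae
  have hpIntu : ∀ t ∈ Icc α β, IntervalIntegrable p volume α t := fun t ht =>
    (hpInt.mono_set (ordConnected_Icc.uIcc_subset (left_mem_Icc.2 hαβ) ht)).intervalIntegrable
  -- primitives
  set F : ℝ → ℝ := fun u => ∫ x in (φ α)..u, f x with hFdef
  set H : ℝ → ℝ := fun t => ∫ s in α..t, p s with hHdef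
  set Ψ : ℝ → ℝ := fun t => H t - F (φ t) with hΨdef
  -- continuity
  have hFcont : ContinuousOn F J := by
    rw [hJIcc, ← uIcc_of_le hmS]
    refine continuousOn_primitive_interval' ?_ ?_
    · exact (hfJ.mono_set (by rw [uIcc_of_le hmS, ← hJIcc])).intervalIntegrable
    · rw [uIcc_of_le hmS, ← hJIcc]; exact hφαJ
  have hHcont : ContinuousOn H (Icc α β) := by
    rw [← uIcc_of_le hαβ]
    exact continuousOn_primitive_interval (by rwa [uIcc_of_le hαβ])
  have hΨcont : ContinuousOn Ψ (Icc α β) :=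
    hHcont.sub (hFcont.comp hφc (fun t ht => mem_image_of_mem φ ht))
  -- Lipschitz-type bounds for the primitives
  have hHbd : ∀ t ∈ Icc α β, ∀ u ∈ Icc α β, |H u - H t| ≤ M' * |u - t| := by
    intro t ht u hu
    have h1 : H u - H t = ∫ s in t..u, p s :=
      integral_interval_sub_left (hpIntu u hu) (hpIntu t ht)
    rw [h1]
    have h2 := intervalIntegral.norm_integral_le_of_norm_le_const (C := M')
      (f := p) (a := t) (b := u) ?_
    · simpa [Real.norm_eq_abs] using h2
    · intro x hx
      have hxI : x ∈ Icc α β := ordConnected_Icc.uIcc_subset ht hu (Ioc_subset_Icc_self hx)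
      simpa [Real.norm_eq_abs] using hM' x hxI
  have hGbd : ∀ y ∈ J, ∀ v ∈ J, |F v - F y| ≤ M * |v - y| := by
    intro y hy v hv
    have h1 : F v - F y = ∫ x in y..v, f x :=
      integral_interval_sub_left (hfInt v hv) (hfInt y hy)
    rw [h1]
    have h2 := intervalIntegral.norm_integral_le_of_norm_le_const (C := M)
      (f := f) (a := y) (b := v) ?_
    · simpa [Real.norm_eq_abs] using h2
    · intro x hx
      have hxJ : x ∈ J := hJconn.uIcc_subset hy hv (Ioc_subset_Icc_self hx)
      simpa [Real.norm_eq_abs] using hM x (hJsubI hxJ)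
  -- derivatives of the primitives
  have hFderiv : ∀ y ∈ J, ContinuousWithinAt f I y →
      HasDerivWithinAt F (f y) (Icc (sInf J) (sSup J)) y := by
    intro y hy hcy
    haveI : Fact (y ∈ Icc (sInf J) (sSup J)) := ⟨by rwa [← hJIcc]⟩
    refine intervalIntegral.integral_hasDerivWithinAt_right
      (s := Icc (sInf J) (sSup J)) (t := Icc (sInf J) (sSup J)) (hfInt y hy)
      ⟨Icc (sInf J) (sSup J), self_mem_nhdsWithin, ?_⟩ (hcy.mono (by rw [← hJIcc]; exact hJsubI))
    rw [← hJIcc]; exact hfJ.aestronglyMeasurable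
  have hHderiv : ∀ t ∈ Ioo α β, ContinuousWithinAt p (Icc α β) t → HasDerivAt H (p t) t := by
    intro t ht hct
    haveI : Fact (t ∈ Icc α β) := ⟨Ioo_subset_Icc_self ht⟩
    have h1 := intervalIntegral.integral_hasDerivWithinAt_right
      (s := Icc α β) (t := Icc α β)
      (hpIntu t (Ioo_subset_Icc_self ht))
      ⟨Icc α β, self_mem_nhdsWithin, hpInt.aestronglyMeasurable⟩ hct
    exact h1.hasDerivAt (Icc_mem_nhds ht.1 ht.2)
  have hGderiv1 : ∀ t ∈ Ioo α β, ContinuousWithinAt f I (φ t) →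
      HasDerivAt (fun u => F (φ u)) (φ' t * f (φ t)) t := by
    intro t ht hc
    have h1 : HasDerivWithinAt (F ∘ φ) (φ' t • f (φ t)) (Ioo α β) t :=
      HasDerivWithinAt.scomp t (hFderiv (φ t) (mem_image_of_mem φ (Ioo_subset_Icc_self ht)) hc)
        ((hφd t ht).hasDerivWithinAt)
        (fun s hs => by rw [← hJIcc]; exact mem_image_of_mem φ (Ioo_subset_Icc_self hs))
    have h2 := h1.hasDerivAt (Ioo_mem_nhds ht.1 ht.2)
    exact h2
  have hGderiv0 : ∀ t ∈ Ioo α β, φ' t = 0 → HasDerivAt (fun u => F (φ u)) 0 t := by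
    intro t ht h0
    rw [hasDerivAt_iff_isLittleO]
    have hbig : (fun u => F (φ u) - F (φ t)) =O[𝓝 t] (fun u => φ u - φ t) := by
      rw [Asymptotics.isBigO_iff]
      refine ⟨M, ?_⟩
      filter_upwards [Icc_mem_nhds ht.1 ht.2] with u hu
      simpa [Real.norm_eq_abs] using
        hGbd (φ t) (mem_image_of_mem φ (Ioo_subset_Icc_self ht)) (φ u) (mem_image_of_mem φ hu)
    have hlit : (fun u => φ u - φ t) =o[𝓝 t] (fun u => u - t) := by
      have hd := hφd t ht
      rw [h0, hasDerivAt_iff_isLittleO] at hd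
      simpa using hd
    simpa using hbig.trans_isLittleO hlit
  -- the three null sets
  set N₁ := {t | ¬ (t ∈ Ioo α β → ContinuousWithinAt φ' (Ioo α β) t)} with hN₁def
  have hN₁ : volume N₁ = 0 := by rw [← ae_iff] at *; exact hφ'c
  set N₂ := {t | ¬ ContinuousWithinAt p (Icc α β) t} ∩ Icc α β with hN₂def
  have hN₂ : volume N₂ = 0 := by
    have h2 := hpae; rw [ae_iff] at h2
    rwa [Measure.restrict_apply' measurableSet_Icc] at h2
  set N₃ := {t | t ∈ Ioo α β ∧ ContinuousWithinAt φ' (Ioo α β) t ∧ φ' t ≠ 0 ∧ φ t ∈ D}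
    with hN₃def
  have hExpand : ∀ t ∈ N₃, ∃ V : Set ℝ, V ∈ 𝓝[N₃] t ∧ volume (N₃ ∩ V) = 0 := by
    intro t ht
    obtain ⟨htIoo, htc, htne, htD⟩ := ht
    set c := |φ' t| / 2 with hcdef
    have hcpos : 0 < c := by
      have := abs_pos.2 htne; positivity
    obtain ⟨δ, hδpos, hδ⟩ := Metric.tendsto_nhdsWithin_nhds.1 htc c hcpos
    refine ⟨Ioo (t - δ) (t + δ),
      mem_nhdsWithin_of_mem_nhds (Ioo_mem_nhds (by linarith) (by linarith)), ?_⟩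
    have key : ∀ x ∈ Ioo (t-δ) (t+δ) ∩ Ioo α β, ∀ y ∈ Ioo (t-δ) (t+δ) ∩ Ioo α β,
        x < y → c * (y - x) ≤ |φ y - φ x| := by
      intro x hx y hy hxy
      obtain ⟨ξ, hξ, hslope⟩ := exists_hasDerivAt_eq_slope φ φ' hxy
        (hφc.mono (Icc_subset_Icc hx.2.1.le hy.2.2.le))
        (fun z hz => hφd z ⟨lt_trans hx.2.1 hz.1, lt_trans hz.2 hy.2.2⟩)
      have hξV : ξ ∈ Ioo (t-δ) (t+δ) := ⟨lt_trans hx.1.1 hξ.1, lt_trans hξ.2 hy.1.2⟩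
      have hξIoo : ξ ∈ Ioo α β := ⟨lt_trans hx.2.1 hξ.1, lt_trans hξ.2 hy.2.2⟩
      have hdist : dist ξ t < δ := by
        rw [Real.dist_eq, abs_sub_lt_iff]
        constructor <;> [linarith [hξV.2]; linarith [hξV.1]]
      have hφξ : c ≤ |φ' ξ| := by
        have h3 := hδ hξIoo hdist
        rw [Real.dist_eq] at h3
        have h4 : |φ' t| = 2 * c := by rw [hcdef]; ring
        have h5 := abs_sub_abs_le_abs_sub (φ' t) (φ' ξ)
        rw [abs_sub_comm (φ' t) (φ' ξ)] at h5
        linarith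
      have h6 : φ y - φ x = φ' ξ * (y - x) := by
        rw [hslope, div_mul_cancel₀]
        exact sub_ne_zero.2 hxy.ne'
      rw [h6, abs_mul, abs_of_pos (sub_pos.2 hxy)]
      exact mul_le_mul_of_nonneg_right hφξ (by linarith)
    have hW : ∀ x ∈ Ioo (t-δ) (t+δ) ∩ Ioo α β, ∀ y ∈ Ioo (t-δ) (t+δ) ∩ Ioo α β,
        c * |x - y| ≤ |φ x - φ y| := by
      intro x hx y hy
      rcases lt_trichotomy x y with h|h|h
      · rw [abs_sub_comm x y, abs_sub_comm (φ x) (φ y), abs_of_pos (sub_pos.2 h)]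
        exact key x hx y hy h
      · simp [h]
      · rw [abs_of_pos (sub_pos.2 h)]
        exact key y hy x hx h
    have hsub : N₃ ∩ Ioo (t-δ) (t+δ) ⊆ Ioo (t-δ) (t+δ) ∩ Ioo α β :=
      fun x hx => ⟨hx.2, hx.1.1⟩
    refine expand_null hcpos (fun x hx y hy => hW x (hsub hx) y (hsub hy)) ?_
    refine measure_mono_null ?_ hDnull
    rintro _ ⟨x, hx, rfl⟩
    exact hx.1.2.2.2
  have hN₃ : volume N₃ = 0 := by
    choose! V hV1 hV2 using hExpand
    obtain ⟨T, hTsub, hTc, hTcover⟩ :=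
      TopologicalSpace.countable_cover_nhdsWithin (f := V) (s := N₃) hV1
    have hsub : N₃ ⊆ ⋃ x ∈ T, N₃ ∩ V x := by
      intro y hy
      obtain ⟨x, hx⟩ := mem_iUnion.1 (hTcover hy)
      simp only [mem_iUnion, exists_prop] at hx ⊢
      exact ⟨x, hx.1, hy, hx.2⟩
    refine measure_mono_null hsub ?_
    exact (measure_biUnion_null_iff hTc).2 (fun x hx => hV2 x (hTsub hx))
  -- the bad set and the good set
  set Bn := N₁ ∪ N₂ ∪ N₃ with hBndef
  have hBnnull : volume Bn = 0 :=
    measure_union_null (measure_union_null hN₁ hN₂) hN₃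
  set BadM := toMeasurable volume Bn with hBadMdef
  have hBadMnull : volume BadM = 0 := by
    rw [hBadMdef, measure_toMeasurable]; exact hBnnull
  have hBadMmeas : MeasurableSet BadM := measurableSet_toMeasurable _ _
  set Good := Ioo α β \ BadM with hGooddef
  have hGoodmeas : MeasurableSet Good := measurableSet_Ioo.diff hBadMmeas
  have hΨderiv : ∀ t ∈ Good, HasDerivAt Ψ 0 t := by
    rintro t ⟨htIoo, htB⟩
    have hnB : t ∉ Bn := fun h => htB (subset_toMeasurable _ _ h)
    have hφ'cont : ContinuousWithinAt φ' (Ioo α β) t := by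
      by_contra hcon
      exact hnB (Or.inl (Or.inl (fun h => hcon (h htIoo))))
    have hpc : ContinuousWithinAt p (Icc α β) t := by
      by_contra hcon
      exact hnB (Or.inl (Or.inr ⟨hcon, Ioo_subset_Icc_self htIoo⟩))
    have hHd := hHderiv t htIoo hpc
    by_cases h0 : φ' t = 0
    · have hGd := hGderiv0 t htIoo h0
      have h1 := hHd.sub hGd
      have h2 : p t - 0 = 0 := by simp [hpdef, h0]
      rw [h2] at h1
      exact h1
    · have hfD : ContinuousWithinAt f I (φ t) := by
        by_contra hcon
        exact hnB (Or.inr ⟨htIoo, hφ'cont, h0,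
          ⟨hcon, hmap t (Ioo_subset_Icc_self htIoo)⟩⟩)
      have hGd := hGderiv1 t htIoo hfD
      have h1 := hHd.sub hGd
      have h2 : p t - φ' t * f (φ t) = 0 := by simp [hpdef]; ring
      rw [h2] at h1
      exact h1
  -- image of the good set is null
  have hGoodim : volume (Ψ '' Good) = 0 := by
    have hzero : (ContinuousLinearMap.toSpanSingleton ℝ (0:ℝ)) = 0 := by ext x; simp
    have hder : ∀ x ∈ Good, HasFDerivWithinAt Ψ (0 : ℝ →L[ℝ] ℝ) Good x := by
      intro x hx
      have h1 := (hΨderiv x hx).hasFDerivAt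
      rw [hzero] at h1
      exact h1.hasFDerivWithinAt
    have h := addHaar_image_le_lintegral_abs_det_fderiv volume hGoodmeas hder
    refine le_antisymm (h.trans ?_) zero_le
    have hdet : ((0 : ℝ →L[ℝ] ℝ) : ℝ →ₗ[ℝ] ℝ).det = 0 := by
      rw [show ((0 : ℝ →L[ℝ] ℝ) : ℝ →ₗ[ℝ] ℝ) = 0 from rfl, LinearMap.det_zero]
      simp
    simp [ContinuousLinearMap.det, hdet]
  -- image of the bad set is null
  set Bad := Ioo α β ∩ BadM with hBaddef
  have hBadnull : volume Bad = 0 := measure_mono_null inter_subset_right hBadMnull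
  have hBadim : volume (Ψ '' Bad) = 0 := by
    have himk : ∀ k : ℕ, volume (Ψ '' {t ∈ Bad | |φ' t| ≤ k}) = 0 := by
      intro k
      refine pw_lip_image_null (K := M' + M * ((k:ℝ) + 1))
        (measure_mono_null (fun t ht => ht.1) hBadnull) ?_
      intro t ht
      have htIoo : t ∈ Ioo α β := ht.1.1
      have hd := hφd t htIoo
      rw [hasDerivAt_iff_isLittleO] at hd
      have hev := hd.def one_pos
      obtain ⟨δ, hδpos, hδ⟩ := Metric.eventually_nhds_iff.1 hev
      refine ⟨δ/2, by positivity, ?_⟩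
      intro u hu hle
      have hud : dist u t < δ := by rw [Real.dist_eq]; linarith [hle]
      have h2 := hδ hud
      rw [Real.norm_eq_abs, Real.norm_eq_abs, one_mul, smul_eq_mul] at h2
      have hφbd : |φ u - φ t| ≤ ((k:ℝ) + 1) * |u - t| := by
        calc |φ u - φ t| = |(φ u - φ t - (u - t) * φ' t) + (u - t) * φ' t| := by ring_nf
          _ ≤ |φ u - φ t - (u - t) * φ' t| + |(u - t) * φ' t| := abs_add_le _ _
          _ ≤ |u - t| + |u - t| * |φ' t| := by rw [abs_mul]; exact add_le_add h2 le_rfl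
          _ ≤ |u - t| + |u - t| * k := by
              have := ht.2
              gcongr
          _ = ((k:ℝ) + 1) * |u - t| := by ring
      have htIcc := Ioo_subset_Icc_self htIoo
      have huIcc := Ioo_subset_Icc_self hu.1.1
      have hbd1 := hHbd t htIcc u huIcc
      have hbd2 := hGbd (φ t) (mem_image_of_mem φ htIcc) (φ u) (mem_image_of_mem φ huIcc)
      calc |Ψ u - Ψ t| = |(H u - H t) - (F (φ u) - F (φ t))| := by
            simp only [hΨdef]; ring_nf
        _ ≤ |H u - H t| + |F (φ u) - F (φ t)| := abs_sub _ _
        _ ≤ M' * |u - t| + M * |φ u - φ t| := add_le_add hbd1 hbd2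
        _ ≤ M' * |u - t| + M * (((k:ℝ) + 1) * |u - t|) := by gcongr
        _ = (M' + M * ((k:ℝ) + 1)) * |u - t| := by ring
    have hsub : Ψ '' Bad ⊆ ⋃ k : ℕ, Ψ '' {t ∈ Bad | |φ' t| ≤ k} := by
      rintro _ ⟨t, ht, rfl⟩
      obtain ⟨k, hk⟩ := exists_nat_ge |φ' t|
      exact mem_iUnion.2 ⟨k, mem_image_of_mem _ ⟨ht, hk⟩⟩
    exact measure_mono_null hsub (measure_iUnion_null himk)
  -- the image of [α, β] under Ψ is null
  have hIm : volume (Ψ '' Icc α β) = 0 := by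
    have hsub : Ψ '' Icc α β ⊆ (Ψ '' Good ∪ Ψ '' Bad) ∪ {Ψ α, Ψ β} := by
      rintro _ ⟨t, ht, rfl⟩
      rcases eq_or_lt_of_le ht.1 with h|h
      · exact Or.inr (by simp [← h])
      rcases eq_or_lt_of_le ht.2 with h'|h'
      · exact Or.inr (by simp [h'])
      by_cases hB : t ∈ BadM
      · exact Or.inl (Or.inr (mem_image_of_mem _ ⟨⟨h, h'⟩, hB⟩))
      · exact Or.inl (Or.inl (mem_image_of_mem _ ⟨⟨h, h'⟩, hB⟩))
    refine measure_mono_null hsub ?_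
    refine measure_union_null (measure_union_null hGoodim hBadim) ?_
    exact (Set.toFinite _).measure_zero volume
  -- Ψ is constant
  have hconst : Ψ β = Ψ α := by
    by_contra hne
    have hconn : OrdConnected (Ψ '' Icc α β) :=
      ((isPreconnected_Icc).image Ψ hΨcont).ordConnected
    have h1 : Ψ α ∈ Ψ '' Icc α β := mem_image_of_mem _ (left_mem_Icc.2 hαβ)
    have h2 : Ψ β ∈ Ψ '' Icc α β := mem_image_of_mem _ (right_mem_Icc.2 hαβ)
    have hsub := hconn.uIcc_subset h1 h2
    have h3 : volume (uIcc (Ψ α) (Ψ β)) = 0 := measure_mono_null hsub hIm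
    rw [uIcc, Real.volume_Icc] at h3
    have h4 : Ψ α ⊔ Ψ β - Ψ α ⊓ Ψ β ≤ 0 := by
      by_contra h5
      push_neg at h5
      rw [ENNReal.ofReal_eq_zero] at h3
      linarith
    rw [max_sub_min_eq_abs] at h4
    exact hne (sub_eq_zero.1 (abs_nonpos_iff.1 h4))
  have hΨα : Ψ α = 0 := by
    simp only [hΨdef, hHdef, hFdef, intervalIntegral.integral_same, sub_self]
  have hfinal : H β - F (φ β) = 0 := by rw [← hΨα]; exact hconst
  have hFH : F (φ β) = H β := by linarith
  calc ∫ x in (φ α)..(φ β), f x = F (φ β) := rfl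
    _ = H β := hFH
    _ = ∫ t in α..β, p t := rfl
end

section
/- Let f : I → ℝ be almost everywhere continuous on an interval I, bounded on I, and let φ : [α,β] → I be continuous and differentiable on (α,β). Let J be the closed interval with endpoints φ(α) and φ(β). If f is Riemann integrable on J and (f∘φ)·φ' is Riemann integrable on [α,β], then ∫_{φ(α)}^{φ(β)} f(x) dx = ∫_α^β f(φ(t))·φ'(t) dt. -/
open MeasureTheory Set Filter Topology intervalIntegral
open scoped NNReal ENNReal

lemma lipOn_image_null_s6 {C : ℝ≥0} {u : ℝ → ℝ} {A : Set ℝ}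
    (h : LipschitzOnWith C u A) (hA : volume A = 0) : volume (u '' A) = 0 := by
  have h1 := h.hausdorffMeasure_image_le (d := 1) zero_le_one
  rw [hausdorffMeasure_real] at h1
  simpa [hA] using h1

/-- Image of a null set under a pointwise-Lipschitz (within the set) map is null. -/
lemma ptLip_image_null {u : ℝ → ℝ} {A : Set ℝ} (hA : volume A = 0)
    (h : ∀ t ∈ A, ∃ C : ℝ, ∃ δ > (0:ℝ), ∀ s ∈ A, |s - t| ≤ δ → |u s - u t| ≤ C * |s - t|) :
    volume (u '' A) = 0 := by
  classical
  set P : ℕ → ℕ → ℤ → Set ℝ := fun n m k =>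
    {t ∈ A | ∀ s ∈ A, |s - t| ≤ 1 / (n + 1 : ℝ) → |u s - u t| ≤ (m : ℝ) * |s - t|} ∩
      Icc ((k : ℝ) / (n + 1)) ((k + 1 : ℝ) / (n + 1)) with hP
  have hcover : A ⊆ ⋃ (n : ℕ) (m : ℕ) (k : ℤ), P n m k := by
    intro t ht
    obtain ⟨C, δ, hδ, hC⟩ := h t ht
    obtain ⟨n, hn⟩ := exists_nat_one_div_lt hδ
    refine mem_iUnion.2 ⟨n, mem_iUnion.2 ⟨⌈C⌉₊, mem_iUnion.2 ⟨⌊t * (n + 1)⌋, ?_, ?_⟩⟩⟩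
    · exact ⟨ht, fun s hs hst => (hC s hs (hst.trans hn.le)).trans
        (mul_le_mul_of_nonneg_right (Nat.le_ceil C) (abs_nonneg _))⟩
    · have hn1 : (0:ℝ) < (n:ℝ) + 1 := by positivity
      constructor
      · rw [div_le_iff₀ hn1]; linarith [Int.floor_le (t * (n + 1))]
      · rw [le_div_iff₀ hn1]; push_cast; linarith [Int.lt_floor_add_one (t * (n + 1))]
  have hPnull : ∀ n m k, volume (u '' P n m k) = 0 := by
    intro n m k
    have hsub : P n m k ⊆ A := fun t ht => ht.1.1
    have hlip : LipschitzOnWith (m : ℝ≥0) u (P n m k) := by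
      rw [lipschitzOnWith_iff_dist_le_mul]
      intro x hx y hy
      have hd : |y - x| ≤ 1 / (n + 1 : ℝ) := by
        have := Real.dist_le_of_mem_Icc hy.2 hx.2
        rw [Real.dist_eq] at this
        calc |y - x| = dist y x := (Real.dist_eq y x).symm
        _ ≤ ((k:ℝ) + 1) / (n + 1) - (k:ℝ) / (n + 1) := this
        _ = 1 / (n + 1 : ℝ) := by ring
      have := hx.1.2 y (hy.1.1) hd
      simpa [Real.dist_eq, abs_sub_comm (u y) (u x), abs_sub_comm y x] using this
    exact lipOn_image_null_s6 hlip (measure_mono_null hsub hA)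
  have : volume (u '' ⋃ (n : ℕ) (m : ℕ) (k : ℤ), P n m k) = 0 := by
    rw [image_iUnion]
    refine measure_iUnion_null fun n => ?_
    rw [image_iUnion]
    refine measure_iUnion_null fun m => ?_
    rw [image_iUnion]
    exact measure_iUnion_null fun k => hPnull n m k
  exact measure_mono_null (image_mono  hcover) this

/-- If a map is pointwise expanding (within a set) and the image is null, the set is null. -/
lemma expand_null_of_image_null {φ : ℝ → ℝ} {A : Set ℝ} (hA : volume (φ '' A) = 0)
    (h : ∀ t ∈ A, ∃ δ > (0:ℝ), ∃ c > (0:ℝ), ∀ s ∈ A, |s - t| ≤ δ → c * |s - t| ≤ |φ s - φ t|) :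
    volume A = 0 := by
  classical
  set P : ℕ → ℤ → Set ℝ := fun n k =>
    {t ∈ A | ∀ s ∈ A, |s - t| ≤ 1 / (n + 1 : ℝ) → |s - t| ≤ (n + 1 : ℝ) * |φ s - φ t|} ∩
      Icc ((k : ℝ) / (n + 1)) ((k + 1 : ℝ) / (n + 1)) with hP
  have hcover : A ⊆ ⋃ (n : ℕ) (k : ℤ), P n k := by
    intro t ht
    obtain ⟨δ, hδ, c, hc, hexp⟩ := h t ht
    obtain ⟨n, hn⟩ := exists_nat_one_div_lt (lt_min hδ hc)
    have hn1 : (0:ℝ) < (n:ℝ) + 1 := by positivity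
    refine mem_iUnion.2 ⟨n, mem_iUnion.2 ⟨⌊t * (n + 1)⌋, ⟨ht, ?_⟩, ?_, ?_⟩⟩
    · intro s hs hst
      have h1 := hexp s hs (hst.trans ((hn.trans_le (min_le_left _ _)).le))
      have h2 : (1 / (n + 1 : ℝ)) * |s - t| ≤ c * |s - t| :=
        mul_le_mul_of_nonneg_right (hn.le.trans (min_le_right _ _)) (abs_nonneg _)
      rw [div_mul_eq_mul_div, one_mul, div_le_iff₀ hn1] at h2
      calc |s - t| ≤ c * |s - t| * (n + 1) := h2
      _ ≤ |φ s - φ t| * (n+1) := mul_le_mul_of_nonneg_right (h1) hn1.le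
      _ = (n + 1 : ℝ) * |φ s - φ t| := by ring
    · rw [div_le_iff₀ hn1]; linarith [Int.floor_le (t * (n + 1))]
    · rw [le_div_iff₀ hn1]; linarith [Int.lt_floor_add_one (t * (n + 1))]
  have hPnull : ∀ n k, volume (P n k) = 0 := by
    intro n k
    have hdist : ∀ x ∈ P n k, ∀ y ∈ P n k, |y - x| ≤ 1 / (n + 1 : ℝ) := by
      intro x hx y hy
      have := Real.dist_le_of_mem_Icc hy.2 hx.2
      rw [Real.dist_eq] at this
      calc |y - x| = dist y x := (Real.dist_eq y x).symm
      _ ≤ ((k:ℝ) + 1) / (n + 1) - (k:ℝ) / (n + 1) := this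
      _ = 1 / (n + 1 : ℝ) := by ring
    have hinj : InjOn φ (P n k) := by
      intro x hx y hy hxy
      have h1 := hx.1.2 y hy.1.1 (hdist x hx y hy)
      rw [hxy] at h1
      simp only [sub_self, abs_zero, mul_zero] at h1
      have := abs_nonneg (y - x)
      have : |y - x| = 0 := le_antisymm h1 (abs_nonneg _)
      have := abs_eq_zero.mp this
      linarith [sub_eq_zero.mp this]
    set g := Function.invFunOn φ (P n k) with hg
    have himg : g '' (φ '' P n k) = P n k := hinj.invFunOn_image subset_rfl
    have hleft : ∀ x ∈ P n k, g (φ x) = x := fun x hx => hinj.leftInvOn_invFunOn hx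
    have hglip : LipschitzOnWith (⟨n+1, by positivity⟩ : ℝ≥0) g (φ '' P n k) := by
      refine LipschitzOnWith.of_dist_le_mul ?_
      rintro x ⟨x', hx', rfl⟩ y ⟨y', hy', rfl⟩
      rw [hleft x' hx', hleft y' hy', Real.dist_eq, Real.dist_eq]
      have h1 := hx'.1.2 y' hy'.1.1 (hdist x' hx' y' hy')
      calc |x' - y'| = |y' - x'| := abs_sub_comm _ _
      _ ≤ (n + 1 : ℝ) * |φ y' - φ x'| := hx'.1.2 y' hy'.1.1 (hdist x' hx' y' hy')
      _ = (n + 1 : ℝ) * |φ x' - φ y'| := by rw [abs_sub_comm]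
    have : volume (P n k) = volume (g '' (φ '' P n k)) := by rw [himg]
    rw [this]
    exact lipOn_image_null_s6 hglip
      (measure_mono_null (image_mono  (fun t ht => ht.1.1)) hA)
  exact measure_mono_null hcover
    (measure_iUnion_null fun n => measure_iUnion_null fun k => hPnull n k)

lemma aesm_of_ae_cont {g : ℝ → ℝ} {s : Set ℝ} (hs : MeasurableSet s)
    (h : ∀ᵐ x ∂(volume.restrict s), ContinuousWithinAt g s x) :
    AEStronglyMeasurable g (volume.restrict s) := by
  have hB : volume.restrict s {x | ¬ ContinuousWithinAt g s x} = 0 := ae_iff.mp h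
  obtain ⟨N, hBN, hNmeas, hN0⟩ := exists_measurable_superset_of_null hB
  have hD : MeasurableSet (s \ N) := hs.diff hNmeas
  have hgD : ContinuousOn g (s \ N) := fun x hx =>
    ((not_not.mp (fun hc => hx.2 (hBN hc))).mono diff_subset)
  have h1 : AEStronglyMeasurable g (volume.restrict (s \ N)) :=
    hgD.aestronglyMeasurable hD
  have hsN : volume (s ∩ N) = 0 := by
    have := hN0
    rw [Measure.restrict_apply' hs] at this
    exact measure_mono_null (inter_subset_inter_left _ subset_rfl) (by rwa [inter_comm] at this)
  have hae : s =ᵐ[volume] (s \ N) := by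
    refine (ae_eq_set.2 ⟨?_, ?_⟩)
    · refine measure_mono_null ?_ hsN
      intro x hx
      exact ⟨hx.1, by by_contra hN; exact hx.2 ⟨hx.1, hN⟩⟩
    · refine measure_mono_null ?_ (measure_empty (μ := volume))
      intro x hx
      exact absurd hx.1.1 hx.2
  rwa [Measure.restrict_congr_set hae]

theorem stmt6 (I : Set ℝ) (hI : I.OrdConnected) (f : ℝ → ℝ)
    (hbd : ∃ M, ∀ x ∈ I, |f x| ≤ M)
    (hcont : ∀ᵐ x ∂(volume.restrict I), ContinuousWithinAt f I x)
    (α β : ℝ) (hαβ : α ≤ β) (φ φ' : ℝ → ℝ)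
    (hmap : ∀ t ∈ Set.Icc α β, φ t ∈ I)
    (hφc : ContinuousOn φ (Set.Icc α β))
    (hφd : ∀ t ∈ Set.Ioo α β, HasDerivAt φ (φ' t) t)
    (hfJ : RiemannIntegrableOn f (Set.uIcc (φ α) (φ β)))
    (hprod : RiemannIntegrableOn (fun t => f (φ t) * φ' t) (Set.Icc α β)) :
    ∫ x in (φ α)..(φ β), f x = ∫ t in α..β, f (φ t) * φ' t := by
  classical
  obtain ⟨M₀, hM₀⟩ := hbd
  set M : ℝ := max M₀ 0 with hMdef
  have hM : ∀ x ∈ I, |f x| ≤ M := fun x hx => (hM₀ x hx).trans (le_max_left _ _)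
  have hM0 : (0:ℝ) ≤ M := le_max_right _ _
  obtain ⟨M₁, hM₁⟩ := hprod.1
  set M' : ℝ := max M₁ 0 with hM'def
  have hM' : ∀ t ∈ Set.Icc α β, |f (φ t) * φ' t| ≤ M' :=
    fun t ht => (hM₁ t ht).trans (le_max_left _ _)
  have hM'0 : (0:ℝ) ≤ M' := le_max_right _ _
  have hIccne : (Set.Icc α β).Nonempty := Set.nonempty_Icc.2 hαβ
  have hKcpt : IsCompact (φ '' Set.Icc α β) := isCompact_Icc.image_of_continuousOn hφc
  have hKne : (φ '' Set.Icc α β).Nonempty := hIccne.image φ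
  set a₀ : ℝ := sInf (φ '' Set.Icc α β) with ha₀
  set b₀ : ℝ := sSup (φ '' Set.Icc α β) with hb₀
  set K : Set ℝ := Set.Icc a₀ b₀ with hK
  have hKmeas : MeasurableSet K := measurableSet_Icc
  have hφK : ∀ t ∈ Set.Icc α β, φ t ∈ K := fun t ht =>
    ⟨csInf_le hKcpt.bddBelow ⟨t, ht, rfl⟩, le_csSup hKcpt.bddAbove ⟨t, ht, rfl⟩⟩
  have hKI : K ⊆ I := by
    obtain ⟨ta, hta, hfa⟩ := hKcpt.sInf_mem hKne
    obtain ⟨tb, htb, hfb⟩ := hKcpt.sSup_mem hKne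
    rw [hK, ha₀, hb₀, ← hfa, ← hfb]
    exact hI.out (hmap ta hta) (hmap tb htb)
  set ftil : ℝ → ℝ := K.indicator f with hftil
  have hftilbd : ∀ x, |ftil x| ≤ M := by
    intro x
    by_cases hx : x ∈ K
    · rw [hftil, indicator_of_mem hx]; exact hM x (hKI hx)
    · rw [hftil, indicator_of_notMem hx]; simpa using hM0
  have hfK : AEStronglyMeasurable f (volume.restrict K) := by
    refine aesm_of_ae_cont hKmeas ?_
    have hle : volume.restrict K ≤ volume.restrict I :=
      Measure.restrict_mono hKI le_rfl
    exact (hcont.filter_mono (ae_mono hle)).mono fun x hx => hx.mono hKI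
  have hftilm : AEStronglyMeasurable ftil volume :=
    (aestronglyMeasurable_indicator_iff hKmeas).2 hfK
  have hint : ∀ u v : ℝ, IntervalIntegrable ftil volume u v := by
    intro u v
    constructor <;>
    · refine Measure.integrableOn_of_bounded (M := M) (by simp) hftilm ?_
      exact Eventually.of_forall fun x => by
        simpa [Real.norm_eq_abs] using hftilbd x
  set F : ℝ → ℝ := fun u => ∫ x in (φ α)..u, ftil x with hF
  have hFlip : ∀ u v : ℝ, |F u - F v| ≤ M * |u - v| := by
    intro u v
    have h1 : F u - F v = ∫ x in v..u, ftil x := by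
      rw [hF]; exact integral_interval_sub_left (hint _ _) (hint _ _)
    rw [h1]
    have := intervalIntegral.norm_integral_le_of_norm_le_const
      (C := M) (f := ftil) (a := v) (b := u)
      (fun x _ => by simpa [Real.norm_eq_abs] using hftilbd x)
    simpa [Real.norm_eq_abs, abs_sub_comm u v] using this
  set h : ℝ → ℝ := fun t => f (φ t) * φ' t with hh
  have hhm : AEStronglyMeasurable h (volume.restrict (Set.Icc α β)) :=
    aesm_of_ae_cont measurableSet_Icc hprod.2
  have hIccInt : IntegrableOn h (Set.Icc α β) volume :=
    ⟨hhm, HasFiniteIntegral.restrict_of_bounded (C := M') (by simp)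
      ((ae_restrict_mem measurableSet_Icc).mono fun x hx => by
        simpa only [Real.norm_eq_abs] using hM' x hx)⟩
  have hinth : ∀ u ∈ Set.Icc α β, ∀ v ∈ Set.Icc α β, IntervalIntegrable h volume u v := by
    intro u hu v hv
    exact (hIccInt.mono_set (Set.uIcc_subset_Icc hu hv)).intervalIntegrable
  set ψ : ℝ → ℝ := fun t => ∫ s in α..t, h s with hψ
  have hαIcc : α ∈ Set.Icc α β := Set.left_mem_Icc.2 hαβ
  have hβIcc : β ∈ Set.Icc α β := Set.right_mem_Icc.2 hαβ
  have hψlip : ∀ u ∈ Set.Icc α β, ∀ v ∈ Set.Icc α β, |ψ u - ψ v| ≤ M' * |u - v| := by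
    intro u hu v hv
    have h1 : ψ u - ψ v = ∫ s in v..u, h s := by
      rw [hψ]; exact integral_interval_sub_left (hinth α hαIcc u hu) (hinth α hαIcc v hv)
    rw [h1]
    have := intervalIntegral.norm_integral_le_of_norm_le_const
      (C := M') (f := h) (a := v) (b := u)
      (fun x hx => by
        have hxIcc : x ∈ Set.Icc α β :=
          Set.uIoc_subset_uIcc.trans (Set.uIcc_subset_Icc hv hu) hx
        simpa only [Real.norm_eq_abs] using hM' x hxIcc)
    simpa [Real.norm_eq_abs, abs_sub_comm u v] using this
  -- the set where F fails to have derivative ftil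
  set E : Set ℝ := {u : ℝ | ¬ HasDerivAt F (ftil u) u} with hE
  have hImeas : MeasurableSet I := hI.measurableSet
  have hEnull : volume E = 0 := by
    have hsub : E ⊆ ({a₀, b₀} : Set ℝ) ∪
        ({u | ¬ ContinuousWithinAt f I u} ∩ I) := by
      intro u hu
      by_contra hctr
      rw [Set.mem_union] at hctr
      push_neg at hctr
      obtain ⟨hne, hgood⟩ := hctr
      have hne' : u ≠ a₀ ∧ u ≠ b₀ := by
        constructor <;> (intro hcc; exact hne (by simp [hcc]))
      apply hu
      have key : ∀ U : Set ℝ, IsOpen U → U.OrdConnected → u ∈ U →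
          (∀ x ∈ U, x ∉ K) → HasDerivAt F (ftil u) u := by
        intro U hUo hUord huU hUK
        have hloc : ∀ v ∈ U, F v = F u := by
          intro v hv
          have h1 : F v - F u = ∫ x in u..v, ftil x :=
            integral_interval_sub_left (hint _ _) (hint _ _)
          have hz : ∀ x ∈ Set.uIcc u v, ftil x = (0:ℝ) := fun x hx =>
            indicator_of_notMem (hUK x (hUord.uIcc_subset huU hv hx)) f
          have h2 : F v - F u = 0 := by
            rw [h1, intervalIntegral.integral_congr hz, intervalIntegral.integral_zero]
          linarith
        have heq : F =ᶠ[𝓝 u] fun _ => F u :=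
          (eventually_of_mem (hUo.mem_nhds huU) hloc)
        have h0 : ftil u = 0 := indicator_of_notMem (hUK u huU) f
        rw [h0]
        exact (Filter.EventuallyEq.hasDerivAt_iff heq).2 (hasDerivAt_const u (F u))
      by_cases huK : u ∈ K
      · have huIoo : u ∈ Set.Ioo a₀ b₀ := by
          rcases huK with ⟨h1, h2⟩
          exact ⟨lt_of_le_of_ne h1 (Ne.symm hne'.1), lt_of_le_of_ne h2 hne'.2⟩
        have hCWA : ContinuousWithinAt f I u := by
          by_contra hcc
          exact hgood ⟨hcc, hKI huK⟩
        have hIoo : Set.Ioo a₀ b₀ ∈ 𝓝 u := isOpen_Ioo.mem_nhds huIoo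
        have hIK : Set.Ioo a₀ b₀ ⊆ K := Set.Ioo_subset_Icc_self
        have hCA : ContinuousAt f u :=
          hCWA.continuousAt (mem_of_superset hIoo (hIK.trans hKI))
        have heq : ftil =ᶠ[𝓝 u] f :=
          eventually_of_mem hIoo fun x hx => indicator_of_mem (hIK hx) f
        have hCA2 : ContinuousAt ftil u := by
          have hfu : ftil u = f u := indicator_of_mem huK f
          unfold ContinuousAt
          rw [hfu]
          exact hCA.congr' heq.symm
        exact integral_hasDerivAt_right (hint _ _)
          ⟨Set.univ, univ_mem, by rwa [Measure.restrict_univ]⟩ hCA2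
      · rcases not_and_or.mp (huK : u ∉ Set.Icc a₀ b₀) with h1 | h2
        · exact key (Set.Iio a₀) isOpen_Iio Set.ordConnected_Iio (not_le.mp h1)
            (fun x hx hxK => absurd hxK.1 (not_le.2 hx))
        · exact key (Set.Ioi b₀) isOpen_Ioi Set.ordConnected_Ioi (not_le.mp h2)
            (fun x hx hxK => absurd hxK.2 (not_le.2 hx))
    refine measure_mono_null hsub (measure_union_null ?_ ?_)
    · exact Set.Finite.measure_zero (by simp) volume
    · have := ae_iff.mp hcont
      rwa [Measure.restrict_apply' hImeas] at this
  -- the bad set T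
  set T : Set ℝ := {t | t ∈ Set.Ioo α β ∧ φ' t ≠ 0 ∧ φ t ∈ E} with hT
  have hTIoo : T ⊆ Set.Ioo α β := fun t ht => ht.1
  have hslope : ∀ t ∈ Set.Ioo α β, ∀ c > (0:ℝ), ∃ δ > (0:ℝ), ∀ s,
      |s - t| ≤ δ → |φ' t| * |s - t| - c * |s - t| ≤ |φ s - φ t| ∧
        |φ s - φ t| ≤ |φ' t| * |s - t| + c * |s - t| := by
    intro t ht c hc
    have hd := (hasDerivAt_iff_isLittleO.mp (hφd t ht)).def hc
    rw [Metric.eventually_nhds_iff] at hd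
    obtain ⟨δ, hδ, hball⟩ := hd
    refine ⟨δ/2, by linarith, fun s hs => ?_⟩
    have hsd : dist s t < δ := by
      rw [Real.dist_eq]; linarith [abs_nonneg (s - t)]
    have h1 := hball hsd
    simp only [Real.norm_eq_abs, smul_eq_mul] at h1
    have e1 : |φ s - φ t| - |(s - t) * φ' t| ≤ c * |s - t| :=
      le_trans (abs_sub_abs_le_abs_sub _ _) h1
    have e2 : |(s - t) * φ' t| - |φ s - φ t| ≤ c * |s - t| := by
      refine le_trans (abs_sub_abs_le_abs_sub _ _) ?_
      rw [abs_sub_comm]; exact h1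
    rw [abs_mul] at e1 e2
    have hcomm : |s - t| * |φ' t| = |φ' t| * |s - t| := mul_comm _ _
    rw [hcomm] at e1 e2
    exact ⟨by linarith, by linarith⟩
  have hTnull : volume T = 0 := by
    refine expand_null_of_image_null
      (measure_mono_null (by rintro x ⟨t, ht, rfl⟩; exact ht.2.2) hEnull) ?_
    intro t ht
    have hc : (0:ℝ) < |φ' t| / 2 := by
      have := abs_pos.mpr ht.2.1; linarith
    obtain ⟨δ, hδ, hest⟩ := hslope t ht.1 (|φ' t| / 2) hc
    refine ⟨δ, hδ, |φ' t| / 2, hc, fun s _ hst => ?_⟩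
    have := (hest s hst).1
    nlinarith [abs_nonneg (s - t)]
  -- the bad set for ψ
  set Nψ : Set ℝ := {t | t ∈ Set.Ioo α β ∧ ¬ HasDerivAt ψ (h t) t} with hNψ
  have hNψnull : volume Nψ = 0 := by
    have hsub : Nψ ⊆ {t | ¬ ContinuousWithinAt h (Set.Icc α β) t} ∩ Set.Icc α β := by
      intro t ht
      by_contra hctr
      have hIcc : t ∈ Set.Icc α β := Set.Ioo_subset_Icc_self ht.1
      have hCWA : ContinuousWithinAt h (Set.Icc α β) t :=
        not_not.mp fun hcc => hctr ⟨hcc, hIcc⟩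
      have hmem : Set.Icc α β ∈ 𝓝 t := Icc_mem_nhds ht.1.1 ht.1.2
      have hCA : ContinuousAt h t := hCWA.continuousAt hmem
      exact ht.2 (integral_hasDerivAt_right (hinth α hαIcc t hIcc)
        ⟨Set.Icc α β, hmem, hhm⟩ hCA)
    refine measure_mono_null hsub ?_
    have := ae_iff.mp hprod.2
    rwa [Measure.restrict_apply' measurableSet_Icc] at this
  -- derivative of G = F ∘ φ off T
  set G : ℝ → ℝ := fun t => F (φ t) with hG
  have hGd : ∀ t ∈ Set.Ioo α β, t ∉ T → HasDerivAt G (h t) t := by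
    intro t ht htT
    by_cases hz : φ' t = 0
    · have h0 : h t = 0 := by rw [hh]; simp [hz]
      rw [h0]
      rw [hasDerivAt_iff_isLittleO]
      have hφo : (fun s => φ s - φ t) =o[𝓝 t] fun s => s - t := by
        have := hasDerivAt_iff_isLittleO.mp (hφd t ht)
        simpa [hz] using this
      have hGO : (fun s => G s - G t) =O[𝓝 t] fun s => φ s - φ t :=
        Asymptotics.IsBigO.of_bound M (Eventually.of_forall fun s => by
          simpa [Real.norm_eq_abs] using hFlip (φ s) (φ t))
      simpa using hGO.trans_isLittleO hφo
    · have hφtE : φ t ∉ E := fun hcc => htT ⟨ht, hz, hcc⟩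
      have hFd : HasDerivAt F (ftil (φ t)) (φ t) := not_not.mp hφtE
      have hchain := hFd.comp t (hφd t ht)
      have hfeq : ftil (φ t) = f (φ t) := by
        rw [hftil]; exact indicator_of_mem (hφK t (Set.Ioo_subset_Icc_self ht)) f
      show HasDerivAt G (f (φ t) * φ' t) t
      rw [← hfeq]
      exact hchain
  -- the good set
  set S : Set ℝ := Set.Ioo α β \ (T ∪ Nψ) with hS
  set H : ℝ → ℝ := fun t => G t - ψ t with hHdef
  have hHd : ∀ t ∈ S, HasDerivAt H 0 t := by
    intro t ht
    have h1 : HasDerivAt G (h t) t := hGd t ht.1 fun hc => ht.2 (Or.inl hc)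
    have h2 : HasDerivAt ψ (h t) t := not_not.mp fun hc => ht.2 (Or.inr ⟨ht.1, hc⟩)
    have := h1.sub h2; rw [sub_self] at this; exact this
  have hHS : volume (H '' S) = 0 := by
    refine MeasureTheory.addHaar_image_eq_zero_of_det_fderivWithin_eq_zero volume
      (f' := fun _ => (0 : ℝ →L[ℝ] ℝ)) (fun x hx => ?_) (fun x hx => ?_)
    · have := (hHd x hx).hasFDerivAt
      have h0 : ContinuousLinearMap.toSpanSingleton ℝ (0:ℝ) = 0 := by
        ext y; simp
      rw [h0] at this
      exact this.hasFDerivWithinAt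
    · simp [ContinuousLinearMap.det]
  -- H is pointwise Lipschitz at points of Ioo \ T
  have hHptLip : ∀ t ∈ Set.Ioo α β, t ∉ T → ∃ C : ℝ, ∃ δ > (0:ℝ),
      ∀ s ∈ Set.Icc α β, |s - t| ≤ δ → |H s - H t| ≤ C * |s - t| := by
    intro t ht htT
    have hG1 : HasDerivAt G (h t) t := hGd t ht htT
    have := (hasDerivAt_iff_isLittleO.mp hG1).def one_pos
    rw [Metric.eventually_nhds_iff] at this
    obtain ⟨δ, hδ, hball⟩ := this
    refine ⟨|h t| + 1 + M', δ/2, by linarith, fun s hs hst => ?_⟩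
    have hsd : dist s t < δ := by rw [Real.dist_eq]; linarith [abs_nonneg (s - t)]
    have h1 := hball hsd
    simp only [Real.norm_eq_abs, smul_eq_mul, one_mul] at h1
    have h2 : |G s - G t| ≤ (|h t| + 1) * |s - t| := by
      have h3 : |G s - G t| - |(s - t) * h t| ≤ |s - t| :=
        le_trans (abs_sub_abs_le_abs_sub _ _) h1
      rw [abs_mul] at h3
      nlinarith [abs_nonneg (s - t), abs_nonneg (h t)]
    have h4 : |ψ s - ψ t| ≤ M' * |s - t| :=
      hψlip s hs t (Set.Ioo_subset_Icc_self ht)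
    calc |H s - H t| = |(G s - G t) - (ψ s - ψ t)| := by rw [hHdef]; ring_nf
    _ ≤ |G s - G t| + |ψ s - ψ t| := abs_sub _ _
    _ ≤ (|h t| + 1) * |s - t| + M' * |s - t| := add_le_add h2 h4
    _ = (|h t| + 1 + M') * |s - t| := by ring
  -- image of T under H is null
  have hHT : volume (H '' T) = 0 := by
    refine ptLip_image_null hTnull ?_
    intro t ht
    obtain ⟨δ, hδ, hest⟩ := hslope t ht.1 1 one_pos
    refine ⟨M * (|φ' t| + 1) + M', δ, hδ, fun s hsT hst => ?_⟩
    have hs : s ∈ Set.Icc α β := Set.Ioo_subset_Icc_self (hTIoo hsT)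
    have h2 : |φ s - φ t| ≤ (|φ' t| + 1) * |s - t| := by
      have := (hest s hst).2; nlinarith [abs_nonneg (s - t)]
    have h3 : |G s - G t| ≤ M * ((|φ' t| + 1) * |s - t|) :=
      (hFlip (φ s) (φ t)).trans (mul_le_mul_of_nonneg_left h2 hM0)
    have h4 : |ψ s - ψ t| ≤ M' * |s - t| :=
      hψlip s hs t (Set.Ioo_subset_Icc_self ht.1)
    calc |H s - H t| = |(G s - G t) - (ψ s - ψ t)| := by rw [hHdef]; ring_nf
    _ ≤ |G s - G t| + |ψ s - ψ t| := abs_sub _ _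
    _ ≤ M * ((|φ' t| + 1) * |s - t|) + M' * |s - t| := add_le_add h3 h4
    _ = (M * (|φ' t| + 1) + M') * |s - t| := by ring
  -- image of Nψ \ T under H is null
  have hHNψ : volume (H '' (Nψ \ T)) = 0 := by
    refine ptLip_image_null (measure_mono_null diff_subset hNψnull) ?_
    intro t ht
    obtain ⟨C, δ, hδ, hC⟩ := hHptLip t ht.1.1 ht.2
    exact ⟨C, δ, hδ, fun s hsA hst =>
      hC s (Set.Ioo_subset_Icc_self hsA.1.1) hst⟩
  -- image of Icc under H is null
  have hHIcc : volume (H '' Set.Icc α β) = 0 := by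
    have hcov : Set.Icc α β ⊆ S ∪ T ∪ (Nψ \ T) ∪ {α, β} := by
      intro t ht
      rcases eq_or_lt_of_le ht.1 with h1 | h1
      · exact Or.inr (Set.mem_insert_iff.2 (Or.inl h1.symm))
      rcases eq_or_lt_of_le ht.2 with h2 | h2
      · exact Or.inr (Set.mem_insert_iff.2 (Or.inr (by simp [h2])))
      have htIoo : t ∈ Set.Ioo α β := ⟨h1, h2⟩
      by_cases hT' : t ∈ T
      · exact Or.inl (Or.inl (Or.inr hT'))
      by_cases hN' : t ∈ Nψ
      · exact Or.inl (Or.inr ⟨hN', hT'⟩)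
      · exact Or.inl (Or.inl (Or.inl ⟨htIoo, fun hc =>
          hc.elim hT' hN'⟩))
    refine measure_mono_null (image_mono  hcov) ?_
    rw [image_union, image_union, image_union]
    refine measure_union_null (measure_union_null (measure_union_null hHS hHT) hHNψ) ?_
    exact Set.Finite.measure_zero (((Set.finite_singleton β).insert α).image H) volume
  -- H is continuous on Icc
  have hFc : Continuous F := by
    have : LipschitzWith (Real.toNNReal M) F := by
      rw [lipschitzWith_iff_dist_le_mul]
      intro u v
      rw [Real.dist_eq, Real.dist_eq, Real.coe_toNNReal M hM0]
      exact hFlip u v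
    exact this.continuous
  have hψc : ContinuousOn ψ (Set.Icc α β) := by
    have : LipschitzOnWith (Real.toNNReal M') ψ (Set.Icc α β) := by
      rw [lipschitzOnWith_iff_dist_le_mul]
      intro u hu v hv
      rw [Real.dist_eq, Real.dist_eq, Real.coe_toNNReal M' hM'0]
      exact hψlip u hu v hv
    exact this.continuousOn
  have hHc : ContinuousOn H (Set.Icc α β) :=
    ((hFc.comp_continuousOn hφc).sub hψc)
  -- conclude H α = H β
  have hHconn : (H '' Set.Icc α β).OrdConnected :=
    (isPreconnected_Icc.image H hHc).ordConnected
  have hHα : H α ∈ H '' Set.Icc α β := ⟨α, hαIcc, rfl⟩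
  have hHβ : H β ∈ H '' Set.Icc α β := ⟨β, hβIcc, rfl⟩
  have huIcc : Set.uIcc (H α) (H β) ⊆ H '' Set.Icc α β :=
    hHconn.uIcc_subset hHα hHβ
  have hvol : volume (Set.uIcc (H α) (H β)) = 0 :=
    measure_mono_null huIcc hHIcc
  have hHαβ : H α = H β := by
    rw [Set.uIcc, Real.volume_Icc] at hvol
    have h0 : H α ⊔ H β - H α ⊓ H β ≤ 0 := ENNReal.ofReal_eq_zero.mp hvol
    rcases le_total (H α) (H β) with hc | hc
    · rw [sup_eq_right.2 hc, inf_eq_left.2 hc] at h0; linarith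
    · rw [sup_eq_left.2 hc, inf_eq_right.2 hc] at h0; linarith
  -- unfold
  have hψα : ψ α = 0 := by rw [hψ]; simp [intervalIntegral.integral_same]
  have hFα : F (φ α) = 0 := by rw [hF]; simp [intervalIntegral.integral_same]
  have hfinal : F (φ β) = ψ β := by
    have h2 := hHαβ
    rw [hHdef] at h2
    simp only at h2
    rw [hG] at h2
    simp only at h2
    rw [hψα, hFα] at h2
    linarith
  have hLHS : ∫ x in (φ α)..(φ β), f x = F (φ β) := by
    rw [hF]
    refine intervalIntegral.integral_congr fun x hx => ?_
    have hxK : x ∈ K := by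
      have hsub : Set.uIcc (φ α) (φ β) ⊆ K :=
        (Set.ordConnected_Icc).uIcc_subset (hφK α hαIcc) (hφK β hβIcc)
      exact hsub hx
    rw [hftil, indicator_of_mem hxK]
  rw [hLHS, hfinal, hψ]
end

section
/- Let f : [a,b] → ℝ be Riemann integrable and φ : [α,β] → [a,b] be continuous, differentiable on (α,β), with φ(α) = a and φ(β) = b. If (f∘φ)·φ' is Riemann integrable on [α,β], then ∫_a^b f(x) dx = ∫_α^β f(φ(t))·φ'(t) dt. -/
open MeasureTheory Set Filter Topology intervalIntegral
open scoped NNReal ENNReal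

lemma lip_image_le {K : ℝ≥0} {g : ℝ → ℝ} {s : Set ℝ} (h : LipschitzOnWith K g s) :
    volume (g '' s) ≤ K * volume s := by
  have h1 := h.hausdorffMeasure_image_le (d := 1) zero_le_one
  rw [MeasureTheory.hausdorffMeasure_real] at h1
  simpa using h1

lemma chunk_image_le {g : ℝ → ℝ} {s : Set ℝ} {c : ℝ≥0} {δ : ℝ} (hδ : 0 < δ)
    (H : ∀ x ∈ s, ∀ y ∈ s, |y - x| ≤ δ → dist (g y) (g x) ≤ c * dist y x) :
    volume (g '' s) ≤ c * volume s := by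
  set I : ℤ → Set ℝ := fun k => Ico (k * δ) ((k + 1) * δ) with hI
  have hIunion : (⋃ k : ℤ, I k) = univ := by
    ext x
    simp only [mem_iUnion, mem_univ, iff_true, hI, mem_Ico]
    refine ⟨⌊x / δ⌋, ?_, ?_⟩
    · calc (⌊x / δ⌋ : ℝ) * δ ≤ (x / δ) * δ := by
            gcongr; exact Int.floor_le _
        _ = x := by field_simp
    · calc x = (x / δ) * δ := by field_simp
        _ < (⌊x / δ⌋ + 1) * δ := by gcongr; exact Int.lt_floor_add_one _
  have hIdisj : Pairwise (Function.onFun Disjoint I) := by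
    intro k l hkl
    rcases hkl.lt_or_gt with h | h
    · apply Set.Ico_disjoint_Ico.2
      have : (k : ℝ) + 1 ≤ l := by exact_mod_cast h
      exact le_trans (min_le_left _ _) (le_trans (by nlinarith) (le_max_right _ _))
    · apply Set.Ico_disjoint_Ico.2
      have : (l : ℝ) + 1 ≤ k := by exact_mod_cast h
      exact le_trans (min_le_right _ _) (le_trans (by nlinarith) (le_max_left _ _))
  set u := toMeasurable volume s with hu
  have hlip : ∀ k : ℤ, LipschitzOnWith c g (s ∩ I k) := by
    intro k
    apply LipschitzOnWith.of_dist_le_mul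
    intro x hx y hy
    apply H y hy.1 x hx.1
    have h1 := hx.2; have h2 := hy.2
    rw [hI, mem_Ico] at h1 h2
    rw [abs_le]; constructor <;> nlinarith
  calc volume (g '' s) ≤ volume (⋃ k : ℤ, g '' (s ∩ I k)) := by
        apply measure_mono
        rw [← image_iUnion, ← inter_iUnion, hIunion, inter_univ]
    _ ≤ ∑' k : ℤ, volume (g '' (s ∩ I k)) := measure_iUnion_le (μ := volume) _
    _ ≤ ∑' k : ℤ, c * volume (u ∩ I k) := by
        apply ENNReal.tsum_le_tsum
        intro k
        refine le_trans (lip_image_le (hlip k)) ?_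
        exact mul_le_mul_right
          (measure_mono (inter_subset_inter_left _ (subset_toMeasurable _ _))) _
    _ = c * ∑' k : ℤ, volume (u ∩ I k) := by rw [ENNReal.tsum_mul_left]
    _ = c * volume (⋃ k : ℤ, u ∩ I k) := by
        rw [measure_iUnion]
        · exact hIdisj.mono fun k l h => h.mono inter_subset_right inter_subset_right
        · exact fun k => (measurableSet_toMeasurable _ _).inter measurableSet_Ico
    _ = c * volume s := by
        rw [← inter_iUnion, hIunion, inter_univ, hu, measure_toMeasurable]

lemma bad_null {f : ℝ → ℝ} {p q : ℝ}
    (h : ∀ᵐ x ∂(volume.restrict (Icc p q)), ContinuousWithinAt f (Icc p q) x) :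
    volume {x | x ∈ Icc p q ∧ ¬ ContinuousWithinAt f (Icc p q) x} = 0 := by
  have h1 : (volume.restrict (Icc p q)) {x | ¬ ContinuousWithinAt f (Icc p q) x} = 0 :=
    ae_iff.1 h
  rw [Measure.restrict_apply' measurableSet_Icc] at h1
  refine measure_mono_null ?_ h1
  intro x hx; exact ⟨hx.2, hx.1⟩

lemma riemann_integrableOn {f : ℝ → ℝ} {p q : ℝ}
    (hb : ∃ M, ∀ x ∈ Icc p q, |f x| ≤ M)
    (hc : ∀ᵐ x ∂(volume.restrict (Icc p q)), ContinuousWithinAt f (Icc p q) x) :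
    IntegrableOn f (Icc p q) volume := by
  obtain ⟨M, hM⟩ := hb
  set Z := toMeasurable (volume.restrict (Icc p q))
    {x | ¬ ContinuousWithinAt f (Icc p q) x} with hZ
  have hZm : MeasurableSet Z := measurableSet_toMeasurable _ _
  have hZ0 : volume.restrict (Icc p q) Z = 0 := by
    rw [hZ, measure_toMeasurable]; exact ae_iff.1 hc
  set C := Icc p q \ Z with hC
  have hCm : MeasurableSet C := measurableSet_Icc.diff hZm
  have hcont : ContinuousOn f C := by
    intro x hx
    have : ContinuousWithinAt f (Icc p q) x := by
      by_contra hcon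
      exact hx.2 (subset_toMeasurable _ _ hcon)
    exact this.mono diff_subset
  have haesm : AEStronglyMeasurable f (volume.restrict (Icc p q)) := by
    have h1 : AEStronglyMeasurable f (volume.restrict C) :=
      hcont.aestronglyMeasurable hCm
    have h2 : AEStronglyMeasurable f (volume.restrict (Icc p q ∩ Z)) := by
      have : volume.restrict (Icc p q ∩ Z) = 0 := by
        rw [Measure.restrict_eq_zero]
        have := hZ0
        rwa [Measure.restrict_apply' measurableSet_Icc, inter_comm] at this
      rw [this]
      exact aestronglyMeasurable_zero_measure f
    have hsub : Icc p q ⊆ C ∪ (Icc p q ∩ Z) := by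
      intro x hx
      by_cases hxz : x ∈ Z
      · exact Or.inr ⟨hx, hxz⟩
      · exact Or.inl ⟨hx, hxz⟩
    refine AEStronglyMeasurable.mono_measure ?_
      ((Measure.restrict_mono hsub le_rfl).trans (Measure.restrict_union_le _ _))
    exact h1.add_measure h2
  refine ⟨haesm, ?_⟩
  apply MeasureTheory.HasFiniteIntegral.of_bounded (C := M)
  rw [ae_restrict_iff' measurableSet_Icc]
  filter_upwards with x hx
  rw [Real.norm_eq_abs]; exact hM x hx

set_option maxHeartbeats 2000000 in
theorem stmt7 (a b α β : ℝ) (hab : a ≤ b) (hαβ : α ≤ β) (f φ φ' : ℝ → ℝ)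
    (hmap : ∀ t ∈ Set.Icc α β, φ t ∈ Set.Icc a b)
    (hφc : ContinuousOn φ (Set.Icc α β))
    (hφd : ∀ t ∈ Set.Ioo α β, HasDerivAt φ (φ' t) t)
    (hφα : φ α = a) (hφβ : φ β = b)
    (hf : RiemannIntegrableOn f (Set.Icc a b))
    (hprod : RiemannIntegrableOn (fun t => f (φ t) * φ' t) (Set.Icc α β)) :
    ∫ x in a..b, f x = ∫ t in α..β, f (φ t) * φ' t := by
  rcases eq_or_lt_of_le hαβ with heq | hαβ'
  · subst heq
    have hba : b = a := by rw [← hφα, ← hφβ]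
    rw [hba]
    simp
  obtain ⟨M₀, hM₀⟩ := hf.1
  obtain ⟨K₀, hK₀⟩ := hprod.1
  set M : ℝ := max M₀ 0 with hM
  set K : ℝ := max K₀ 0 with hK
  have hM0 : 0 ≤ M := le_max_right _ _
  have hK0 : 0 ≤ K := le_max_right _ _
  have hfint : IntegrableOn f (Icc a b) volume := riemann_integrableOn hf.1 hf.2
  have hpint : IntegrableOn (fun t => f (φ t) * φ' t) (Icc α β) volume :=
    riemann_integrableOn hprod.1 hprod.2
  set F : ℝ → ℝ := fun x => ∫ u in a..x, f u with hFdef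
  set G : ℝ → ℝ := fun s => ∫ t in α..s, f (φ t) * φ' t with hGdef
  set D : ℝ → ℝ := fun s => F (φ s) - G s with hDdef
  -- interval integrability within the base intervals
  have hfii : ∀ x ∈ Icc a b, ∀ y ∈ Icc a b, IntervalIntegrable f volume x y := by
    intro x hx y hy
    exact (hfint.mono_set (uIcc_subset_Icc hx hy)).intervalIntegrable
  have hpii : ∀ x ∈ Icc α β, ∀ y ∈ Icc α β,
      IntervalIntegrable (fun t => f (φ t) * φ' t) volume x y := by
    intro x hx y hy
    exact (hpint.mono_set (uIcc_subset_Icc hx hy)).intervalIntegrable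
  -- Lipschitz estimates for F and G
  have hFlip : ∀ x ∈ Icc a b, ∀ y ∈ Icc a b, |F y - F x| ≤ M * |y - x| := by
    intro x hx y hy
    have h1 : F y - F x = ∫ u in x..y, f u := by
      rw [hFdef]
      exact integral_interval_sub_left (hfii a (left_mem_Icc.2 hab) y hy)
        (hfii a (left_mem_Icc.2 hab) x hx)
    rw [h1, ← Real.norm_eq_abs (y - x), ← Real.norm_eq_abs]
    rw [show ‖y - x‖ = |y - x| from rfl]
    apply intervalIntegral.norm_integral_le_of_norm_le_const
    intro u hu
    have hu' : u ∈ Icc a b := (uIoc_subset_uIcc.trans (uIcc_subset_Icc hx hy)) hu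
    rw [Real.norm_eq_abs]
    exact le_trans (hM₀ u hu') (le_max_left _ _)
  have hGlip : ∀ x ∈ Icc α β, ∀ y ∈ Icc α β, |G y - G x| ≤ K * |y - x| := by
    intro x hx y hy
    have h1 : G y - G x = ∫ t in x..y, f (φ t) * φ' t := by
      rw [hGdef]
      exact integral_interval_sub_left (hpii α (left_mem_Icc.2 hαβ) y hy)
        (hpii α (left_mem_Icc.2 hαβ) x hx)
    rw [h1, ← Real.norm_eq_abs (y - x), ← Real.norm_eq_abs]
    apply intervalIntegral.norm_integral_le_of_norm_le_const
    intro u hu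
    have hu' : u ∈ Icc α β := (uIoc_subset_uIcc.trans (uIcc_subset_Icc hx hy)) hu
    rw [Real.norm_eq_abs]
    exact le_trans (hK₀ u hu') (le_max_left _ _)
  -- continuity of D
  have hFcont : ContinuousOn F (Icc a b) := by
    refine LipschitzOnWith.continuousOn (K := M.toNNReal) ?_
    apply LipschitzOnWith.of_dist_le_mul
    intro x hx y hy
    rw [Real.dist_eq, Real.dist_eq, Real.coe_toNNReal M hM0]
    exact hFlip y hy x hx
  have hGcont : ContinuousOn G (Icc α β) := by
    refine LipschitzOnWith.continuousOn (K := K.toNNReal) ?_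
    apply LipschitzOnWith.of_dist_le_mul
    intro x hx y hy
    rw [Real.dist_eq, Real.dist_eq, Real.coe_toNNReal K hK0]
    exact hGlip y hy x hx
  have hDcont : ContinuousOn D (Icc α β) :=
    (hFcont.comp hφc fun t ht => hmap t ht).sub hGcont
  -- null sets
  have hNf : volume {x | x ∈ Icc a b ∧ ¬ ContinuousWithinAt f (Icc a b) x} = 0 :=
    bad_null hf.2
  set Nf := {x | x ∈ Icc a b ∧ ¬ ContinuousWithinAt f (Icc a b) x} with hNfdef
  have hN2 : volume {t | t ∈ Icc α β ∧
      ¬ ContinuousWithinAt (fun t => f (φ t) * φ' t) (Icc α β) t} = 0 := bad_null hprod.2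
  set N2 := {t | t ∈ Icc α β ∧
      ¬ ContinuousWithinAt (fun t => f (φ t) * φ' t) (Icc α β) t} with hN2def
  set T := {t | t ∈ Ioo α β ∧ φ' t ≠ 0 ∧ φ t ∈ Nf} with hTdef
  -- T is null
  have hT : volume T = 0 := by
    set Tn : ℕ → Set ℝ := fun n =>
      {t ∈ T | ∀ u : ℝ, |u - t| ≤ 1 / (n + 1) → |u - t| ≤ (n + 1) * |φ u - φ t|} with hTndef
    have hTsub : T ⊆ ⋃ n, Tn n := by
      intro t ht
      have hd := hφd t ht.1
      have hc : 0 < |φ' t| := abs_pos.2 ht.2.1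
      have h2 := (hasDerivAt_iff_isLittleO.mp hd).def (half_pos hc)
      obtain ⟨δ, hδ0, hδ⟩ := Metric.eventually_nhds_iff.mp h2
      obtain ⟨n, hn⟩ := exists_nat_gt (max (2 / |φ' t|) (1 / δ))
      refine mem_iUnion.2 ⟨n, ht, fun u hu => ?_⟩
      have hn1 : (2 : ℝ) / |φ' t| < n + 1 := lt_of_le_of_lt (le_max_left _ _) (by linarith)
      have hn2 : (1 : ℝ) / δ < n + 1 := lt_of_le_of_lt (le_max_right _ _) (by linarith)
      have hnpos : (0 : ℝ) < n + 1 := by positivity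
      have hle : 1 / ((n : ℝ) + 1) < δ := by
        rw [div_lt_iff₀ hnpos]
        rw [div_lt_iff₀ hδ0] at hn2
        linarith
      have hud : dist u t < δ := lt_of_le_of_lt hu hle
      have h3 := hδ hud
      rw [Real.norm_eq_abs, Real.norm_eq_abs, smul_eq_mul] at h3
      have h4 : |(u - t) * φ' t| - |φ u - φ t| ≤ |φ u - φ t - (u - t) * φ' t| := by
        have h4' := abs_sub_abs_le_abs_sub ((u - t) * φ' t) (φ u - φ t)
        rwa [abs_sub_comm ((u - t) * φ' t)] at h4'
      rw [abs_mul] at h4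
      have h5 : |u - t| * |φ' t| - |φ u - φ t| ≤ |φ' t| / 2 * |u - t| := le_trans h4 h3
      have h6 : |φ' t| / 2 * |u - t| ≤ |φ u - φ t| := by nlinarith [abs_nonneg (u - t)]
      rw [div_lt_iff₀ hc] at hn1
      nlinarith [abs_nonneg (φ u - φ t), abs_nonneg (u - t)]
    refine measure_mono_null hTsub (measure_iUnion_null fun n => ?_)
    have hnpos : (0 : ℝ) < 1 / (n + 1) := by positivity
    set δn : ℝ := 1 / (n + 1) with hδn
    have hTn2 : Tn n ⊆ ⋃ k : ℤ, Tn n ∩ Ico (k * δn) ((k + 1) * δn) := by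
      intro t ht
      refine mem_iUnion.2 ⟨⌊t / δn⌋, ht, ?_, ?_⟩
      · calc (⌊t / δn⌋ : ℝ) * δn ≤ t / δn * δn := by gcongr; exact Int.floor_le _
          _ = t := by field_simp
      · calc t = t / δn * δn := by field_simp
          _ < (⌊t / δn⌋ + 1) * δn := by gcongr; exact Int.lt_floor_add_one _
    refine measure_mono_null hTn2 (measure_iUnion_null fun k => ?_)
    set S := Tn n ∩ Ico (k * δn) ((k + 1) * δn) with hS
    have hSsub : ∀ x ∈ S, ∀ y ∈ S, |y - x| ≤ δn := by
      intro x hx y hy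
      have h1 := hx.2; have h2 := hy.2
      rw [mem_Ico] at h1 h2
      rw [abs_le]; constructor <;> nlinarith
    set ψ := Function.invFunOn φ S with hψ
    have hψmem : ∀ x ∈ φ '' S, ψ x ∈ S ∧ φ (ψ x) = x := by
      intro x hx
      obtain ⟨s', hs', rfl⟩ := hx
      exact ⟨Function.invFunOn_mem ⟨s', hs', rfl⟩, Function.invFunOn_eq ⟨s', hs', rfl⟩⟩
    have hψlip : LipschitzOnWith ((n : ℝ≥0) + 1) ψ (φ '' S) := by
      apply LipschitzOnWith.of_dist_le_mul
      intro x hx y hy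
      obtain ⟨hx1, hx2⟩ := hψmem x hx
      obtain ⟨hy1, hy2⟩ := hψmem y hy
      have h1 : |ψ y - ψ x| ≤ δn := hSsub _ hx1 _ hy1
      have h2 := hx1.1.2 (ψ y) h1
      rw [hy2, hx2] at h2
      rw [Real.dist_eq, Real.dist_eq]
      calc |ψ x - ψ y| = |ψ y - ψ x| := abs_sub_comm _ _
        _ ≤ (n + 1) * |y - x| := h2
        _ = ((n : ℝ≥0) + 1 : ℝ≥0) * |x - y| := by
            rw [abs_sub_comm]; push_cast; ring
    have hSψ : S ⊆ ψ '' (φ '' S) := by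
      intro t ht
      obtain ⟨h1, h2⟩ := hψmem (φ t) (mem_image_of_mem _ ht)
      have h3 : |ψ (φ t) - t| ≤ δn := hSsub t ht _ h1
      have h4 := ht.1.2 (ψ (φ t)) h3
      rw [h2, sub_self, abs_zero, mul_zero] at h4
      have h5 : ψ (φ t) = t := by
        have := abs_nonneg (ψ (φ t) - t)
        have h6 : |ψ (φ t) - t| = 0 := le_antisymm h4 this
        rw [abs_eq_zero, sub_eq_zero] at h6
        exact h6
      exact ⟨φ t, mem_image_of_mem _ ht, h5⟩
    have hfin : volume S ≤ ((n : ℝ≥0) + 1) * volume (φ '' S) :=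
      le_trans (measure_mono hSψ) (lip_image_le hψlip)
    have hφS : volume (φ '' S) = 0 := by
      refine measure_mono_null ?_ hNf
      rintro x ⟨s', hs', rfl⟩
      exact hs'.1.1.2.2
    rw [hφS, mul_zero] at hfin
    exact le_antisymm hfin zero_le
  set B := T ∪ (N2 ∩ Ioo α β) with hBdef
  have hBIoo : B ⊆ Ioo α β := by
    intro t ht
    rcases ht with h | h
    · exact h.1
    · exact h.2
  have hB : volume B = 0 := by
    apply measure_union_null hT
    exact measure_mono_null inter_subset_left hN2
  -- derivative of D off B
  have hDderiv : ∀ t ∈ Ioo α β, t ∉ B → HasDerivAt D 0 t := by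
    intro t ht htB
    have hIccmem : Icc α β ∈ 𝓝 t := Icc_mem_nhds ht.1 ht.2
    have htIcc : t ∈ Icc α β := Ioo_subset_Icc_self ht
    have hcontG : ContinuousAt (fun t => f (φ t) * φ' t) t := by
      have hnot : t ∉ N2 := fun h => htB (Or.inr ⟨h, ht⟩)
      have hcw : ContinuousWithinAt (fun t => f (φ t) * φ' t) (Icc α β) t := by
        by_contra hc
        exact hnot ⟨htIcc, hc⟩
      exact hcw.continuousAt hIccmem
    have hG' : HasDerivAt G (f (φ t) * φ' t) t := by
      apply intervalIntegral.integral_hasDerivAt_right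
      · exact hpii α (left_mem_Icc.2 hαβ) t htIcc
      · exact ⟨Icc α β, hIccmem, hpint.aestronglyMeasurable⟩
      · exact hcontG
    have hFφ' : HasDerivAt (fun s => F (φ s)) (f (φ t) * φ' t) t := by
      by_cases h0 : φ' t = 0
      · rw [h0, mul_zero]
        rw [hasDerivAt_iff_isLittleO]
        simp only [smul_zero, sub_zero]
        have hφo : (fun u => φ u - φ t) =o[𝓝 t] fun u => u - t := by
          have h1 := hasDerivAt_iff_isLittleO.mp (hφd t ht)
          rw [h0] at h1
          simpa using h1
        refine Asymptotics.IsBigO.trans_isLittleO ?_ hφo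
        apply Asymptotics.IsBigO.of_bound M
        filter_upwards [hIccmem] with u hu
        rw [Real.norm_eq_abs, Real.norm_eq_abs]
        exact hFlip (φ t) (hmap t htIcc) (φ u) (hmap u hu)
      · have hfc : ContinuousWithinAt f (Icc a b) (φ t) := by
          by_contra hc
          exact htB (Or.inl ⟨ht, h0, hmap t htIcc, hc⟩)
        have hφtmem := hmap t htIcc
        have hna : φ t ≠ a := by
          intro hea
          apply h0
          have hmin : IsLocalMin φ t := by
            filter_upwards [hIccmem] with u hu
            rw [hea]; exact (hmap u hu).1
          exact hmin.hasDerivAt_eq_zero (hφd t ht)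
        have hnb : φ t ≠ b := by
          intro heb
          apply h0
          have hmax : IsLocalMax φ t := by
            filter_upwards [hIccmem] with u hu
            rw [heb]; exact (hmap u hu).2
          exact hmax.hasDerivAt_eq_zero (hφd t ht)
        have hφtIoo : φ t ∈ Ioo a b :=
          ⟨lt_of_le_of_ne hφtmem.1 (Ne.symm hna), lt_of_le_of_ne hφtmem.2 hnb⟩
        have hIccab : Icc a b ∈ 𝓝 (φ t) := Icc_mem_nhds hφtIoo.1 hφtIoo.2
        have hF' : HasDerivAt F (f (φ t)) (φ t) := by
          apply intervalIntegral.integral_hasDerivAt_right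
          · exact hfii a (left_mem_Icc.2 hab) (φ t) hφtmem
          · exact ⟨Icc a b, hIccab, hfint.aestronglyMeasurable⟩
          · exact hfc.continuousAt hIccab
        exact hF'.comp t (hφd t ht)
    have hsub := hFφ'.sub hG'
    rw [sub_self] at hsub
    exact hsub
  -- the key estimate
  have key : ∀ ε : ℝ, 0 < ε → |D β - D α| ≤ ε * (β - α) := by
    intro ε hε
    set Bmn : ℕ → ℕ → Set ℝ := fun m n =>
      {t ∈ B | ∀ u ∈ Icc α β, |u - t| ≤ 1 / (n + 1) → |D u - D t| ≤ m * |u - t|} with hBmndef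
    have hBcover : B ⊆ ⋃ m, ⋃ n, Bmn m n := by
      intro t htB
      have ht : t ∈ Ioo α β := hBIoo htB
      have htIcc : t ∈ Icc α β := Ioo_subset_Icc_self ht
      have hd := hφd t ht
      have h2 := (hasDerivAt_iff_isLittleO.mp hd).def one_pos
      obtain ⟨δ, hδ0, hδ⟩ := Metric.eventually_nhds_iff.mp h2
      obtain ⟨m, hm⟩ := exists_nat_ge (M * (|φ' t| + 1) + K)
      obtain ⟨n, hn⟩ := exists_nat_gt (1 / δ)
      have hnpos : (0 : ℝ) < n + 1 := by positivity
      have hle : 1 / ((n : ℝ) + 1) < δ := by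
        rw [div_lt_iff₀ hnpos]; rw [div_lt_iff₀ hδ0] at hn; linarith
      refine mem_iUnion.2 ⟨m, mem_iUnion.2 ⟨n, htB, fun u hu hud => ?_⟩⟩
      have hdist : dist u t < δ := lt_of_le_of_lt hud hle
      have h3 := hδ hdist
      rw [Real.norm_eq_abs, Real.norm_eq_abs, smul_eq_mul, one_mul] at h3
      have h4 : |φ u - φ t| ≤ (|φ' t| + 1) * |u - t| := by
        have h5 := abs_sub_abs_le_abs_sub (φ u - φ t) ((u - t) * φ' t)
        have h6 : |(u - t) * φ' t| = |u - t| * |φ' t| := abs_mul _ _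
        nlinarith [abs_nonneg (u - t)]
      have hDu : |D u - D t| ≤ M * |φ u - φ t| + K * |u - t| := by
        have h7 := hFlip (φ t) (hmap t htIcc) (φ u) (hmap u hu)
        have h8 := hGlip t htIcc u hu
        have h9 : D u - D t = (F (φ u) - F (φ t)) - (G u - G t) := by rw [hDdef]; ring
        rw [h9]
        calc |(F (φ u) - F (φ t)) - (G u - G t)| ≤ |F (φ u) - F (φ t)| + |G u - G t| := by
              have h10 := abs_add_le (F (φ u) - F (φ t)) (-(G u - G t))
              rw [abs_neg] at h10
              linarith [le_of_eq (congrArg abs (sub_eq_add_neg (F (φ u) - F (φ t)) (G u - G t)))]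
          _ ≤ M * |φ u - φ t| + K * |u - t| := add_le_add h7 h8
      calc |D u - D t| ≤ M * ((|φ' t| + 1) * |u - t|) + K * |u - t| := by
            refine le_trans hDu ?_
            have := mul_le_mul_of_nonneg_left h4 hM0
            linarith
        _ ≤ m * |u - t| := by
            have h10 := mul_le_mul_of_nonneg_right hm (abs_nonneg (u - t))
            nlinarith [h10]
    have hBmn : ∀ m n : ℕ, volume (D '' Bmn m n) = 0 := by
      intro m n
      have h0 : volume (Bmn m n) = 0 := measure_mono_null (sep_subset _ _) hB
      have hH : ∀ x ∈ Bmn m n, ∀ y ∈ Bmn m n, |y - x| ≤ 1 / (n + 1) →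
          dist (D y) (D x) ≤ (m : ℝ≥0) * dist y x := by
        intro x hx y hy hxy
        rw [Real.dist_eq, Real.dist_eq]
        have hyIcc : y ∈ Icc α β := Ioo_subset_Icc_self (hBIoo hy.1)
        have := hx.2 y hyIcc hxy
        push_cast
        exact this
      have hc := chunk_image_le (g := D) (c := (m : ℝ≥0)) (δ := 1 / (n + 1))
        (by positivity) hH
      rw [h0, mul_zero] at hc
      exact le_antisymm hc zero_le
    set A : ℕ → Set ℝ := fun n =>
      {t | t ∈ Ioo α β ∧ t ∉ B ∧
        ∀ u ∈ Icc α β, |u - t| ≤ 1 / (n + 1) → |D u - D t| ≤ ε * |u - t|} with hAdef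
    have hAmono : Monotone A := by
      intro n₁ n₂ hn t ht
      refine ⟨ht.1, ht.2.1, fun u hu hud => ht.2.2 u hu (le_trans hud ?_)⟩
      have h1 : ((n₁ : ℝ) + 1) ≤ (n₂ : ℝ) + 1 := by
        have : (n₁ : ℝ) ≤ n₂ := by exact_mod_cast hn
        linarith
      gcongr
    have hAcover : ∀ t ∈ Ioo α β, t ∉ B → t ∈ ⋃ n, A n := by
      intro t ht htB
      have h2 := (hasDerivAt_iff_isLittleO.mp (hDderiv t ht htB)).def hε
      simp only [smul_zero, sub_zero] at h2
      obtain ⟨δ, hδ0, hδ⟩ := Metric.eventually_nhds_iff.mp h2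
      obtain ⟨n, hn⟩ := exists_nat_gt (1 / δ)
      have hnpos : (0 : ℝ) < n + 1 := by positivity
      have hle : 1 / ((n : ℝ) + 1) < δ := by
        rw [div_lt_iff₀ hnpos]; rw [div_lt_iff₀ hδ0] at hn; linarith
      refine mem_iUnion.2 ⟨n, ht, htB, fun u hu hud => ?_⟩
      have h3 := hδ (lt_of_le_of_lt hud hle)
      rwa [Real.norm_eq_abs, Real.norm_eq_abs] at h3
    have hAvol : ∀ n, volume (D '' A n) ≤ (ε.toNNReal : ℝ≥0∞) * volume (Icc α β) := by
      intro n
      have hH : ∀ x ∈ A n, ∀ y ∈ A n, |y - x| ≤ 1 / (n + 1) →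
          dist (D y) (D x) ≤ ε.toNNReal * dist y x := by
        intro x hx y hy hxy
        rw [Real.dist_eq, Real.dist_eq, Real.coe_toNNReal ε hε.le]
        exact hx.2.2 y (Ioo_subset_Icc_self hy.1) hxy
      have hc := chunk_image_le (g := D) (c := ε.toNNReal) (δ := 1 / (n + 1))
        (by positivity) hH
      refine le_trans hc (mul_le_mul_right (measure_mono ?_) _)
      exact fun t ht => Ioo_subset_Icc_self ht.1
    have himg : D '' Icc α β ⊆
        (D '' (⋃ n, A n)) ∪ ((⋃ m, ⋃ n, D '' Bmn m n) ∪ D '' {α, β}) := by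
      rintro x ⟨t, htIcc, rfl⟩
      rcases eq_or_lt_of_le htIcc.1 with h1 | h1
      · exact Or.inr (Or.inr ⟨t, by simp [← h1], rfl⟩)
      rcases eq_or_lt_of_le htIcc.2 with h2 | h2
      · exact Or.inr (Or.inr ⟨t, by simp [h2], rfl⟩)
      have ht : t ∈ Ioo α β := ⟨h1, h2⟩
      by_cases htB : t ∈ B
      · obtain ⟨m, hm⟩ := mem_iUnion.1 (hBcover htB)
        obtain ⟨n, hn⟩ := mem_iUnion.1 hm
        exact Or.inr (Or.inl (mem_iUnion.2 ⟨m, mem_iUnion.2 ⟨n, mem_image_of_mem D hn⟩⟩))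
      · exact Or.inl (mem_image_of_mem D (hAcover t ht htB))
    have hDA : volume (D '' (⋃ n, A n)) ≤ (ε.toNNReal : ℝ≥0∞) * volume (Icc α β) := by
      rw [image_iUnion]
      rw [Directed.measure_iUnion (Monotone.directed_le fun i j h => image_mono (hAmono h))]
      exact iSup_le hAvol
    have hDB : volume ((⋃ m, ⋃ n, D '' Bmn m n) ∪ D '' {α, β}) = 0 := by
      apply measure_union_null
      · exact measure_iUnion_null fun m => measure_iUnion_null fun n => hBmn m n
      · apply Set.Countable.measure_zero
        exact ((Set.countable_singleton β).insert α).image D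
    have htot : volume (D '' Icc α β) ≤ (ε.toNNReal : ℝ≥0∞) * volume (Icc α β) := by
      calc volume (D '' Icc α β)
          ≤ volume (D '' (⋃ n, A n)) +
            volume ((⋃ m, ⋃ n, D '' Bmn m n) ∪ D '' {α, β}) :=
            le_trans (measure_mono himg) (measure_union_le _ _)
        _ ≤ (ε.toNNReal : ℝ≥0∞) * volume (Icc α β) + 0 := by
            rw [hDB]; exact add_le_add hDA le_rfl
        _ = _ := add_zero _
    have hsub : uIcc (D α) (D β) ⊆ D '' Icc α β := by
      have h1 := intermediate_value_uIcc (a := α) (b := β) (f := D)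
        (by rw [uIcc_of_le hαβ]; exact hDcont)
      rwa [uIcc_of_le hαβ] at h1
    have hlow : ENNReal.ofReal |D β - D α| ≤ volume (D '' Icc α β) := by
      rw [← Real.volume_interval]
      exact measure_mono hsub
    have hfinal : ENNReal.ofReal |D β - D α| ≤ ENNReal.ofReal (ε * (β - α)) := by
      refine le_trans hlow (le_trans htot ?_)
      rw [Real.volume_Icc, ENNReal.ofReal_mul hε.le]
      exact le_rfl
    rw [ENNReal.ofReal_le_ofReal_iff (by nlinarith)] at hfinal
    exact hfinal
  have hzero : D β = D α := by
    by_contra hne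
    have hc : 0 < |D β - D α| := abs_pos.2 (sub_ne_zero.2 hne)
    have h1 := key (|D β - D α| / (β - α + 1)) (div_pos hc (by linarith))
    rw [div_mul_eq_mul_div, le_div_iff₀ (by linarith)] at h1
    nlinarith
  have hDβ : F (φ β) - G β = F (φ α) - G α := hzero
  rw [hφα, hφβ] at hDβ
  have hFa : F a = 0 := by rw [hFdef]; simp
  have hGα : G α = 0 := by rw [hGdef]; simp
  have : F b = G β := by rw [hFa, hGα] at hDβ; linarith
  exact this
end

section
/- Let f : I → ℝ and φ : [α,β] → I be continuous, differentiable on (α,β), with φ' Riemann integrable on every compact subinterval [c,d] ⊂ (α,β). Let J be the closed interval with endpoints φ(α), φ(β). If (f∘φ)·φ' is Riemann integrable on [α,β] and the restriction of f to J is bounded, then f is Riemann integrable on J and ∫_{φ(α)}^{φ(β)} f(x) dx = ∫_α^β f(φ(t))·φ'(t) dt. -/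
open MeasureTheory Set Filter Topology intervalIntegral



/-- truncation -/
def trunc8 (C v : ℝ) : ℝ := max (-C) (min C v)

lemma trunc8_abs_le {C : ℝ} (hC : 0 ≤ C) (v : ℝ) : |trunc8 C v| ≤ C := by
  rw [abs_le]; constructor
  · exact le_max_left _ _
  · exact max_le (by linarith) (min_le_left _ _)

lemma trunc8_abs_le_abs {C : ℝ} (hC : 0 ≤ C) (v : ℝ) : |trunc8 C v| ≤ |v| := by
  unfold trunc8
  rcases le_total v C with h1 | h1
  · rw [min_eq_right h1]
    rcases le_total (-C) v with h2 | h2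
    · rw [max_eq_right h2]
    · rw [max_eq_left h2, abs_of_nonpos (by linarith : -C ≤ (0:ℝ))]
      have : v ≤ 0 := by linarith
      rw [abs_of_nonpos this]; linarith
  · rw [min_eq_left h1, max_eq_right (by linarith : -C ≤ C),
      abs_of_nonneg hC, abs_of_nonneg (hC.trans h1)]
    exact h1

lemma trunc8_eq_self {C v : ℝ} (h : |v| ≤ C) : trunc8 C v = v := by
  unfold trunc8
  rw [abs_le] at h
  rw [min_eq_right h.2, max_eq_right (by linarith)]

lemma trunc8_tendsto (v : ℝ) : Tendsto (fun n : ℕ => trunc8 n v) atTop (𝓝 v) := by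
  apply tendsto_atTop_of_eventually_const (i₀ := ⌈|v|⌉₊)
  intro n hn
  exact trunc8_eq_self (le_trans (Nat.le_ceil _) (by exact_mod_cast hn))

lemma trunc8_measurable {C : ℝ} {h : ℝ → ℝ} (hm : Measurable h) :
    Measurable fun y => trunc8 C (h y) := by
  unfold trunc8; fun_prop

lemma trunc8_zero {C : ℝ} (hC : 0 ≤ C) : trunc8 C 0 = 0 := by
  unfold trunc8
  rw [min_eq_right hC, max_eq_right (by linarith)]

/-- Indicator of the set of continuity points is measurable. -/
lemma measurable_indicator_continuousAt (f : ℝ → ℝ) :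
    Measurable (({x | ContinuousAt f x}).indicator f) := by
  set D := {x | ContinuousAt f x} with hDdef
  have hD : MeasurableSet D := (IsGδ.setOf_continuousAt f).measurableSet
  have hcont : ContinuousOn f D := fun x hx => (hx : ContinuousAt f x).continuousWithinAt
  apply measurable_of_isOpen
  intro U hU
  obtain ⟨V, hV, hVeq⟩ := continuousOn_iff'.mp hcont U hU
  have key : ∀ W : Set ℝ, ((0:ℝ) ∈ U → W = univ) → ((0:ℝ) ∉ U → W = ∅) →
      D.indicator f ⁻¹' U = (V ∩ D) ∪ (Dᶜ ∩ W) := by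
    intro W hW1 hW2
    ext x
    by_cases hx : x ∈ D
    · simp only [mem_preimage, Set.indicator_of_mem hx, mem_union, mem_inter_iff, hx,
        and_true, mem_compl_iff, not_true, false_and, or_false]
      constructor
      · intro h; have : x ∈ f ⁻¹' U ∩ D := ⟨h, hx⟩
        rw [hVeq] at this; exact this.1
      · intro h; have : x ∈ V ∩ D := ⟨h, hx⟩
        rw [← hVeq] at this; exact this.1
    · simp only [mem_preimage, Set.indicator_of_notMem hx, mem_union, mem_inter_iff, hx,
        and_false, false_or, mem_compl_iff, not_false_iff, true_and]
      constructor
      · intro h0; rw [hW1 h0]; exact mem_univ x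
      · intro hw; by_contra h0; rw [hW2 h0] at hw; exact hw
  by_cases h0 : (0:ℝ) ∈ U
  · rw [key univ (fun _ => rfl) (fun h => absurd h0 h)]
    exact (hV.measurableSet.inter hD).union (hD.compl.inter MeasurableSet.univ)
  · rw [key ∅ (fun h => absurd h h0) (fun _ => rfl)]
    exact (hV.measurableSet.inter hD).union (hD.compl.inter MeasurableSet.empty)


lemma intervalIntegrable_of_bdd {F : ℝ → ℝ} {p q C : ℝ} (hm : Measurable F)
    (hb : ∀ᵐ x ∂volume, x ∈ Set.uIoc p q → |F x| ≤ C) :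
    IntervalIntegrable F volume p q := by
  rw [intervalIntegrable_iff]
  apply Measure.integrableOn_of_bounded (M := C)
  · exact (measure_Ioc_lt_top).ne
  · exact hm.aestronglyMeasurable
  · rw [ae_restrict_iff' measurableSet_uIoc]
    simpa [Real.norm_eq_abs] using hb

lemma interval_dct {F : ℕ → ℝ → ℝ} {G : ℝ → ℝ} {p q C : ℝ}
    (hm : ∀ n, Measurable (F n))
    (hb : ∀ n, ∀ᵐ x ∂volume, x ∈ Set.uIoc p q → |F n x| ≤ C)
    (hlim : ∀ᵐ x ∂volume, x ∈ Set.uIoc p q → Tendsto (fun n => F n x) atTop (𝓝 (G x))) :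
    Tendsto (fun n => ∫ x in p..q, F n x) atTop (𝓝 (∫ x in p..q, G x)) := by
  have key : Tendsto (fun n => ∫ x in Set.uIoc p q, F n x) atTop
      (𝓝 (∫ x in Set.uIoc p q, G x)) := by
    apply MeasureTheory.tendsto_integral_of_dominated_convergence (fun _ => C)
    · exact fun n => (hm n).aestronglyMeasurable
    · exact integrableOn_const measure_Ioc_lt_top.ne
    · intro n
      rw [ae_restrict_iff' measurableSet_uIoc]
      simpa [Real.norm_eq_abs] using hb n
    · rw [ae_restrict_iff' measurableSet_uIoc]
      exact hlim
  rw [intervalIntegral_eq_integral_uIoc G p q volume]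
  exact Tendsto.congr (fun n => (intervalIntegral_eq_integral_uIoc (F n) p q volume).symm) (key.const_smul _)

lemma subst_bdd {φ : ℝ → ℝ} {c d : ℝ} (hcd : c ≤ d) (hφco : Continuous φ)
    (hφd : ∀ t ∈ Set.Icc c d, DifferentiableAt ℝ φ t)
    {B : ℝ} (hB : ∀ t ∈ Set.Icc c d, |deriv φ t| ≤ B)
    {h : ℝ → ℝ} (hm : Measurable h) {C : ℝ} (hC : ∀ y, |h y| ≤ C) :
    ∫ t in c..d, deriv φ t * h (φ t) = ∫ u in φ c..φ d, h u := by
  have huIcc : Set.uIcc c d = Set.Icc c d := Set.uIcc_of_le hcd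
  have hB0 : 0 ≤ B := (abs_nonneg _).trans (hB c (Set.left_mem_Icc.mpr hcd))
  -- interval integrability of the left-hand integrand, for any bounded measurable k
  have int_left : ∀ (k : ℝ → ℝ), Measurable k → ∀ (Ck : ℝ), (∀ y, |k y| ≤ Ck) →
      IntervalIntegrable (fun t => deriv φ t * k (φ t)) volume c d := by
    intro k hk Ck hCk
    apply intervalIntegrable_of_bdd (C := B * Ck) ((measurable_deriv φ).mul (hk.comp hφco.measurable))
    refine Filter.Eventually.of_forall (fun t ht => ?_)
    rw [Set.uIoc_of_le hcd] at ht
    have ht' : t ∈ Set.Icc c d := Set.Ioc_subset_Icc_self ht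
    rw [Pi.mul_apply, Function.comp_apply, abs_mul]
    exact mul_le_mul (hB t ht') (hCk _) (abs_nonneg _) hB0
  have int_right : ∀ (k : ℝ → ℝ), Measurable k → ∀ (Ck : ℝ), (∀ y, |k y| ≤ Ck) →
      IntervalIntegrable k volume (φ c) (φ d) := by
    intro k hk Ck hCk
    exact intervalIntegrable_of_bdd (C := Ck) hk (Filter.Eventually.of_forall fun t _ => hCk t)
  have int_deriv : IntervalIntegrable (deriv φ) volume c d := by
    apply intervalIntegrable_of_bdd (C := B) (measurable_deriv φ)
    refine Filter.Eventually.of_forall (fun t ht => ?_)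
    rw [Set.uIoc_of_le hcd] at ht
    exact hB t (Set.Ioc_subset_Icc_self ht)
  have ftc : ∫ t in c..d, deriv φ t = φ d - φ c := by
    apply intervalIntegral.integral_deriv_eq_sub
    · intro x hx; rw [huIcc] at hx; exact hφd x hx
    · exact int_deriv
  -- base case : continuous k
  have base : ∀ (k : ℝ → ℝ), Continuous k →
      (∫ t in c..d, deriv φ t * k (φ t)) = ∫ u in φ c..φ d, k u := by
    intro k hk
    have himg : IsCompact (φ '' Set.uIcc c d) := (isCompact_uIcc).image hφco
    obtain ⟨Ck, hCk⟩ : ∃ Ck, ∀ t ∈ Set.uIcc c d, |k (φ t)| ≤ Ck := by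
      rcases himg.exists_bound_of_continuousOn hk.continuousOn with ⟨Ck, hCk⟩
      exact ⟨Ck, fun t ht => by simpa [Real.norm_eq_abs] using hCk _ (Set.mem_image_of_mem φ ht)⟩
    have key := intervalIntegral.integral_comp_smul_deriv''' (f := φ) (f' := deriv φ) (g := k)
      hφco.continuousOn
      (fun x hx => by
        refine ((hφd x ?_).hasDerivAt).hasDerivWithinAt
        rw [min_eq_left hcd, max_eq_right hcd] at hx
        exact Set.Ioo_subset_Icc_self hx)
      hk.continuousOn
      (hk.continuousOn.integrableOn_compact himg)
      ?hg2
    · simpa [smul_eq_mul, Function.comp] using key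
    case hg2 =>
      apply Measure.integrableOn_of_bounded (M := B * Ck)
      · exact (measure_Icc_lt_top (a := min c d) (b := max c d)).ne
      · exact (((measurable_deriv φ).mul ((hk.measurable).comp hφco.measurable)).aestronglyMeasurable)
      · rw [ae_restrict_iff' measurableSet_uIcc]
        refine Filter.Eventually.of_forall (fun t ht => ?_)
        have ht' : t ∈ Set.Icc c d := by rwa [huIcc] at ht
        rw [Real.norm_eq_abs]
        simp only [smul_eq_mul, Function.comp]
        rw [abs_mul]
        exact mul_le_mul (hB t ht') (hCk t (huIcc ▸ ht')) (abs_nonneg _) hB0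
  have ind_bd : ∀ (s : Set ℝ) (y : ℝ), |Set.indicator s (fun _ => (1:ℝ)) y| ≤ 1 := by
    intro s y; by_cases hy : y ∈ s <;> simp [hy]
  -- the equality for indicators of measurable sets
  have Pmeas : ∀ s : Set ℝ, MeasurableSet s →
      (∫ t in c..d, deriv φ t * Set.indicator s (fun _ => (1:ℝ)) (φ t)) =
        ∫ u in φ c..φ d, Set.indicator s (fun _ => (1:ℝ)) u := by
    refine fun s hs => MeasurableSet.induction_on_open
      (C := fun s _ => (∫ t in c..d, deriv φ t * Set.indicator s (fun _ => (1:ℝ)) (φ t)) =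
        ∫ u in φ c..φ d, Set.indicator s (fun _ => (1:ℝ)) u) ?_ ?_ ?_ s hs
    · -- open sets
      intro U hU
      by_cases hUc : Uᶜ = ∅
      · have hUuniv : U = univ := by
          rw [← compl_compl U, hUc, Set.compl_empty]
        subst hUuniv
        simp only [Set.indicator_univ, mul_one]
        rw [ftc, integral_one]
      · have hUcne : Uᶜ.Nonempty := Set.nonempty_iff_ne_empty.mpr hUc
        set F : ℕ → ℝ → ℝ := fun n y => min 1 ((n : ℝ) * Metric.infDist y Uᶜ) with hF
        have hFc : ∀ n, Continuous (F n) :=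
          fun n => continuous_const.min (continuous_const.mul (Metric.continuous_infDist_pt Uᶜ))
        have hFb : ∀ n y, |F n y| ≤ 1 := by
          intro n y
          rw [abs_le]
          have h0 : (0:ℝ) ≤ (n : ℝ) * Metric.infDist y Uᶜ := mul_nonneg (Nat.cast_nonneg n) Metric.infDist_nonneg
          exact ⟨le_trans (by norm_num) (le_min zero_le_one h0), min_le_left _ _⟩
        have hFlim : ∀ y, Tendsto (fun n => F n y) atTop
            (𝓝 (Set.indicator U (fun _ => (1:ℝ)) y)) := by
          intro y
          by_cases hy : y ∈ U
          · rw [Set.indicator_of_mem hy]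
            have hpos : 0 < Metric.infDist y Uᶜ :=
              (hU.isClosed_compl.notMem_iff_infDist_pos hUcne).mp (by simpa using hy)
            apply tendsto_atTop_of_eventually_const (i₀ := ⌈(Metric.infDist y Uᶜ)⁻¹⌉₊)
            intro n hn
            have h1 : (Metric.infDist y Uᶜ)⁻¹ ≤ (n : ℝ) :=
              (Nat.le_ceil _).trans (by exact_mod_cast hn)
            have : (1:ℝ) ≤ (n : ℝ) * Metric.infDist y Uᶜ := by
              rw [← inv_mul_cancel₀ hpos.ne']
              exact mul_le_mul_of_nonneg_right h1 hpos.le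
            simp only [hF, min_eq_left this]
          · rw [Set.indicator_of_notMem hy]
            have : Metric.infDist y Uᶜ = 0 := Metric.infDist_zero_of_mem (by simpa using hy)
            simp only [hF, this, mul_zero, min_eq_right (le_refl (0:ℝ)) ]
            simpa using tendsto_const_nhds
        have e1 : ∀ n, (∫ t in c..d, deriv φ t * F n (φ t)) = ∫ u in φ c..φ d, F n u :=
          fun n => base (F n) (hFc n)
        have t1 : Tendsto (fun n => ∫ t in c..d, deriv φ t * F n (φ t)) atTop
            (𝓝 (∫ t in c..d, deriv φ t * Set.indicator U (fun _ => (1:ℝ)) (φ t))) := by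
          apply interval_dct (C := B)
          · exact fun n => (measurable_deriv φ).mul ((hFc n).measurable.comp hφco.measurable)
          · intro n
            refine Filter.Eventually.of_forall (fun t ht => ?_)
            rw [Set.uIoc_of_le hcd] at ht
            rw [abs_mul]
            calc |deriv φ t| * |F n (φ t)| ≤ B * 1 :=
                  mul_le_mul (hB t (Set.Ioc_subset_Icc_self ht)) (hFb n _) (abs_nonneg _) hB0
              _ = B := mul_one B
          · exact Filter.Eventually.of_forall (fun t _ => (hFlim (φ t)).const_mul _)
        have t2 : Tendsto (fun n => ∫ u in φ c..φ d, F n u) atTop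
            (𝓝 (∫ u in φ c..φ d, Set.indicator U (fun _ => (1:ℝ)) u)) := by
          apply interval_dct (C := 1)
          · exact fun n => (hFc n).measurable
          · exact fun n => Filter.Eventually.of_forall (fun t _ => hFb n t)
          · exact Filter.Eventually.of_forall (fun t _ => hFlim t)
        exact tendsto_nhds_unique t1 (Tendsto.congr (fun n => (e1 n).symm) t2)
    · -- complement
      intro s hsm hs
      have hcompl : ∀ y : ℝ, Set.indicator sᶜ (fun _ => (1:ℝ)) y
          = 1 - Set.indicator s (fun _ => (1:ℝ)) y := by
        intro y; by_cases hy : y ∈ s <;> simp [hy]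
      have hL : (fun t => deriv φ t * Set.indicator sᶜ (fun _ => (1:ℝ)) (φ t))
          = fun t => deriv φ t - deriv φ t * Set.indicator s (fun _ => (1:ℝ)) (φ t) := by
        funext t; rw [hcompl]; ring
      have hR : (fun u => Set.indicator sᶜ (fun _ => (1:ℝ)) u)
          = fun u => 1 - Set.indicator s (fun _ => (1:ℝ)) u := funext hcompl
      rw [hL, hR, intervalIntegral.integral_sub int_deriv
          (int_left _ (measurable_const.indicator hsm) 1 (ind_bd s)),
        intervalIntegral.integral_sub intervalIntegrable_const
          (int_right _ (measurable_const.indicator hsm) 1 (ind_bd s)),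
        integral_one, ftc, hs]
    · -- countable disjoint unions
      intro sf hdisj hmeas hP
      set S : ℕ → ℝ → ℝ :=
        fun n y => ∑ i ∈ Finset.range n, (sf i).indicator (fun _ => (1:ℝ)) y with hS
      have hSmeas : ∀ n, Measurable (S n) :=
        fun n => Finset.measurable_sum _ (fun i _ => measurable_const.indicator (hmeas i))
      have hSone : ∀ n y i₀, i₀ ∈ Finset.range n → y ∈ sf i₀ → S n y = 1 := by
        intro n y i₀ hi₀ hyi₀
        simp only [hS]
        rw [Finset.sum_eq_single_of_mem i₀ hi₀]
        · simp [hyi₀]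
        · intro j _ hj
          refine Set.indicator_of_notMem (fun hyj => ?_) _
          exact Set.disjoint_left.mp (hdisj hj) hyj hyi₀
      have hSzero : ∀ n y, (∀ i, y ∉ sf i) → S n y = 0 := by
        intro n y hy
        simp only [hS]
        exact Finset.sum_eq_zero (fun i _ => Set.indicator_of_notMem (hy i) _)
      have hSb : ∀ n y, |S n y| ≤ 1 := by
        intro n y
        by_cases hy : ∃ i ∈ Finset.range n, y ∈ sf i
        · obtain ⟨i₀, hi₀, hyi₀⟩ := hy
          rw [hSone n y i₀ hi₀ hyi₀]; norm_num
        · push_neg at hy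
          have : S n y = 0 := Finset.sum_eq_zero (fun i hi => Set.indicator_of_notMem (hy i hi) _)
          rw [this]; norm_num
      have hSlim : ∀ y, Tendsto (fun n => S n y) atTop
          (𝓝 (Set.indicator (⋃ i, sf i) (fun _ => (1:ℝ)) y)) := by
        intro y
        by_cases hy : y ∈ ⋃ i, sf i
        · rw [Set.indicator_of_mem hy]
          obtain ⟨i₀, hyi₀⟩ := Set.mem_iUnion.mp hy
          apply tendsto_atTop_of_eventually_const (i₀ := i₀ + 1)
          intro n hn
          exact hSone n y i₀ (Finset.mem_range.mpr hn) hyi₀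
        · rw [Set.indicator_of_notMem hy]
          have hy' : ∀ i, y ∉ sf i := fun i hyi => hy (Set.mem_iUnion.mpr ⟨i, hyi⟩)
          simp only [hSzero _ y hy']
          exact tendsto_const_nhds
      have e1 : ∀ n, (∫ t in c..d, deriv φ t * S n (φ t)) = ∫ u in φ c..φ d, S n u := by
        intro n
        have hLfun : (fun t => deriv φ t * S n (φ t))
            = fun t => ∑ i ∈ Finset.range n,
                deriv φ t * (sf i).indicator (fun _ => (1:ℝ)) (φ t) := by
          funext t; simp only [hS]; rw [Finset.mul_sum]
        rw [hLfun, intervalIntegral.integral_finset_sum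
            (fun i _ => int_left _ (measurable_const.indicator (hmeas i)) 1 (ind_bd _))]
        rw [show (fun u => S n u) = fun u => ∑ i ∈ Finset.range n,
            (sf i).indicator (fun _ => (1:ℝ)) u from rfl]
        rw [intervalIntegral.integral_finset_sum
            (fun i _ => int_right _ (measurable_const.indicator (hmeas i)) 1 (ind_bd _))]
        exact Finset.sum_congr rfl (fun i _ => hP i)
      have t1 : Tendsto (fun n => ∫ t in c..d, deriv φ t * S n (φ t)) atTop
          (𝓝 (∫ t in c..d, deriv φ t * Set.indicator (⋃ i, sf i) (fun _ => (1:ℝ)) (φ t))) := by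
        apply interval_dct (C := B)
        · exact fun n => (measurable_deriv φ).mul ((hSmeas n).comp hφco.measurable)
        · intro n
          refine Filter.Eventually.of_forall (fun t ht => ?_)
          rw [Set.uIoc_of_le hcd] at ht
          rw [abs_mul]
          calc |deriv φ t| * |S n (φ t)| ≤ B * 1 :=
                mul_le_mul (hB t (Set.Ioc_subset_Icc_self ht)) (hSb n _) (abs_nonneg _) hB0
            _ = B := mul_one B
        · exact Filter.Eventually.of_forall (fun t _ => (hSlim (φ t)).const_mul _)
      have t2 : Tendsto (fun n => ∫ u in φ c..φ d, S n u) atTop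
          (𝓝 (∫ u in φ c..φ d, Set.indicator (⋃ i, sf i) (fun _ => (1:ℝ)) u)) := by
        apply interval_dct (C := 1)
        · exact fun n => hSmeas n
        · exact fun n => Filter.Eventually.of_forall (fun t _ => hSb n t)
        · exact Filter.Eventually.of_forall (fun t _ => hSlim t)
      exact tendsto_nhds_unique t1 (Tendsto.congr (fun n => (e1 n).symm) t2)
  -- simple functions
  have Psimple : ∀ ψ : MeasureTheory.SimpleFunc ℝ ℝ,
      (∫ t in c..d, deriv φ t * ψ (φ t)) = ∫ u in φ c..φ d, ψ u := by
    intro ψ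
    induction ψ using MeasureTheory.SimpleFunc.induction with
    | @const c' s hsm =>
      have hfun : ∀ y : ℝ, (MeasureTheory.SimpleFunc.piecewise s hsm
          (MeasureTheory.SimpleFunc.const ℝ c') (MeasureTheory.SimpleFunc.const ℝ 0)) y
          = c' * Set.indicator s (fun _ => (1:ℝ)) y := by
        intro y; by_cases hy : y ∈ s <;>
          simp [hy, MeasureTheory.SimpleFunc.coe_piecewise, Set.piecewise]
      simp only [hfun]
      have hLfun : (fun t => deriv φ t * (c' * Set.indicator s (fun _ => (1:ℝ)) (φ t)))
          = fun t => c' * (deriv φ t * Set.indicator s (fun _ => (1:ℝ)) (φ t)) := by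
        funext t; ring
      rw [hLfun, intervalIntegral.integral_const_mul, intervalIntegral.integral_const_mul,
        Pmeas s hsm]
    | @add f g hdisj hf hg =>
      obtain ⟨Cf, hCf⟩ := MeasureTheory.SimpleFunc.exists_forall_norm_le f
      obtain ⟨Cg, hCg⟩ := MeasureTheory.SimpleFunc.exists_forall_norm_le g
      simp only [Real.norm_eq_abs] at hCf hCg
      have hfm := f.measurable
      have hgm := g.measurable
      have hLfun : (fun t => deriv φ t * (f + g) (φ t))
          = fun t => deriv φ t * f (φ t) + deriv φ t * g (φ t) := by
        funext t
        simp only [MeasureTheory.SimpleFunc.coe_add, Pi.add_apply]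
        ring
      have hRfun : (fun u => (f + g) u) = fun u => f u + g u := by
        funext u
        simp [MeasureTheory.SimpleFunc.coe_add]
      rw [hLfun, hRfun,
        intervalIntegral.integral_add (int_left _ hfm Cf hCf) (int_left _ hgm Cg hCg),
        intervalIntegral.integral_add (int_right _ hfm Cf hCf) (int_right _ hgm Cg hCg),
        hf, hg]
  -- general bounded measurable h via approximation
  set ψn : ℕ → MeasureTheory.SimpleFunc ℝ ℝ :=
    fun n => MeasureTheory.SimpleFunc.approxOn h hm Set.univ 0 (Set.mem_univ 0) n with hψn
  have hψlim : ∀ y, Tendsto (fun n => ψn n y) atTop (𝓝 (h y)) := by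
    intro y
    apply MeasureTheory.SimpleFunc.tendsto_approxOn hm (Set.mem_univ 0)
    simp
  have hψb : ∀ n y, |ψn n y| ≤ C + C := by
    intro n y
    have := MeasureTheory.SimpleFunc.norm_approxOn_zero_le hm (Set.mem_univ 0) y n
    rw [Real.norm_eq_abs, Real.norm_eq_abs] at this
    linarith [hC y, this]
  have e1 : ∀ n, (∫ t in c..d, deriv φ t * ψn n (φ t)) = ∫ u in φ c..φ d, ψn n u :=
    fun n => Psimple (ψn n)
  have t1 : Tendsto (fun n => ∫ t in c..d, deriv φ t * ψn n (φ t)) atTop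
      (𝓝 (∫ t in c..d, deriv φ t * h (φ t))) := by
    apply interval_dct (C := B * (C + C))
    · exact fun n => (measurable_deriv φ).mul ((ψn n).measurable.comp hφco.measurable)
    · intro n
      refine Filter.Eventually.of_forall (fun t ht => ?_)
      rw [Set.uIoc_of_le hcd] at ht
      rw [abs_mul]
      exact mul_le_mul (hB t (Set.Ioc_subset_Icc_self ht)) (hψb n _) (abs_nonneg _) hB0
    · exact Filter.Eventually.of_forall (fun t _ => (hψlim (φ t)).const_mul _)
  have t2 : Tendsto (fun n => ∫ u in φ c..φ d, ψn n u) atTop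
      (𝓝 (∫ u in φ c..φ d, h u)) := by
    apply interval_dct (C := C + C)
    · exact fun n => (ψn n).measurable
    · exact fun n => Filter.Eventually.of_forall (fun t _ => hψb n t)
    · exact Filter.Eventually.of_forall (fun t _ => hψlim t)
  exact tendsto_nhds_unique t1 (Tendsto.congr (fun n => (e1 n).symm) t2)

lemma subst_bdd_global {φ : ℝ → ℝ} {α β : ℝ} (hαβ : α < β) (hφco : Continuous φ)
    (hφd : ∀ t ∈ Set.Ioo α β, DifferentiableAt ℝ φ t)
    (hbd : ∀ c d : ℝ, α < c → c ≤ d → d < β → ∃ B, ∀ t ∈ Set.Icc c d, |deriv φ t| ≤ B)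
    {h : ℝ → ℝ} (hm : Measurable h) {C : ℝ} (hC : ∀ y, |h y| ≤ C)
    {M : ℝ} (hM : 0 ≤ M)
    (hdom : ∀ᵐ t ∂volume, t ∈ Set.Ioo α β → |deriv φ t * h (φ t)| ≤ M) :
    ∫ t in α..β, deriv φ t * h (φ t) = ∫ u in φ α..φ β, h u := by
  set W : ℝ → ℝ := fun t => deriv φ t * h (φ t) with hW
  have hWm : Measurable W := (measurable_deriv φ).mul (hm.comp hφco.measurable)
  set Wt : ℝ → ℝ := fun t => trunc8 M (W t) with hWt
  have hWtm : Measurable Wt := trunc8_measurable hWm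
  have hWtb : ∀ t, |Wt t| ≤ M := fun t => trunc8_abs_le hM _
  have hae : ∀ᵐ t ∂volume, t ∈ Set.Ioo α β → Wt t = W t :=
    hdom.mono fun t ht hmem => trunc8_eq_self (ht hmem)
  have haeIoc : ∀ᵐ t ∂volume, t ∈ Set.uIoc α β → Wt t = W t := by
    have hβ : ∀ᵐ t ∂volume, t ∉ ({β} : Set ℝ) :=
      compl_mem_ae_iff.mpr (measure_singleton β)
    filter_upwards [hae, hβ] with t h1 h2 ht
    rw [Set.uIoc_of_le hαβ.le] at ht
    exact h1 ⟨ht.1, lt_of_le_of_ne ht.2 (by simpa using h2)⟩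
  have step0 : ∫ t in α..β, W t = ∫ t in α..β, Wt t :=
    intervalIntegral.integral_congr_ae (haeIoc.mono fun t h1 ht => (h1 ht).symm)
  -- the approximating sequence of subintervals
  set ε : ℕ → ℝ := fun n => (β - α) / (n + 2) with hε
  have hεpos : ∀ n, 0 < ε n := fun n => div_pos (by linarith) (by positivity)
  have hεhalf : ∀ n, ε n ≤ (β - α) / 2 := by
    intro n
    apply div_le_div_of_nonneg_left (by linarith) (by norm_num)
    · norm_num
  have hεlim : Tendsto ε atTop (𝓝 0) := by
    apply Tendsto.div_atTop (tendsto_const_nhds)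
    exact tendsto_atTop_add_const_right _ 2 tendsto_natCast_atTop_atTop
  set c : ℕ → ℝ := fun n => α + ε n with hc
  set d : ℕ → ℝ := fun n => β - ε n with hd
  have hcα : ∀ n, α < c n := fun n => by simp only [hc]; linarith [hεpos n]
  have hdβ : ∀ n, d n < β := fun n => by simp only [hd]; linarith [hεpos n]
  have hcd : ∀ n, c n ≤ d n := fun n => by
    simp only [hc, hd]; linarith [hεhalf n]
  have hsub : ∀ n, Set.Icc (c n) (d n) ⊆ Set.Ioo α β :=
    fun n => Set.Icc_subset_Ioo (hcα n) (hdβ n)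
  have hclim : Tendsto c atTop (𝓝 α) := by
    simpa using (tendsto_const_nhds (x := α)).add hεlim
  have hdlim : Tendsto d atTop (𝓝 β) := by
    simpa using (tendsto_const_nhds (x := β)).sub hεlim
  have hWtII : ∀ p q : ℝ, IntervalIntegrable Wt volume p q := fun p q =>
    intervalIntegrable_of_bdd hWtm (Filter.Eventually.of_forall fun t _ => hWtb t)
  have hhII : ∀ p q : ℝ, IntervalIntegrable h volume p q := fun p q =>
    intervalIntegrable_of_bdd hm (Filter.Eventually.of_forall fun t _ => hC t)
  -- the key identity on each subinterval
  have key : ∀ n, ∫ t in c n..d n, Wt t = ∫ u in φ (c n)..φ (d n), h u := by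
    intro n
    obtain ⟨B, hB⟩ := hbd (c n) (d n) (hcα n) (hcd n) (hdβ n)
    have e1 : ∫ t in c n..d n, Wt t = ∫ t in c n..d n, W t := by
      apply intervalIntegral.integral_congr_ae
      filter_upwards [hae] with t h1 ht
      rw [Set.uIoc_of_le (hcd n)] at ht
      exact h1 (hsub n (Set.Ioc_subset_Icc_self ht))
    rw [e1, hW]
    exact subst_bdd (hcd n) hφco (fun t ht => hφd t (hsub n ht)) hB hm hC
  -- limits
  have tends1 : Tendsto (fun n => ∫ t in c n..d n, Wt t) atTop (𝓝 (∫ t in α..β, Wt t)) := by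
    have hsplit : ∀ n, ∫ t in c n..d n, Wt t
        = (∫ t in α..β, Wt t) - (∫ t in α..c n, Wt t) - (∫ t in d n..β, Wt t) := by
      intro n
      have h1 : (∫ t in α..c n, Wt t) + (∫ t in c n..d n, Wt t) = ∫ t in α..d n, Wt t :=
        intervalIntegral.integral_add_adjacent_intervals (hWtII _ _) (hWtII _ _)
      have h2 : (∫ t in α..d n, Wt t) + (∫ t in d n..β, Wt t) = ∫ t in α..β, Wt t :=
        intervalIntegral.integral_add_adjacent_intervals (hWtII _ _) (hWtII _ _)
      linarith
    have e1 : Tendsto (fun n => ∫ t in α..c n, Wt t) atTop (𝓝 0) := by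
      apply squeeze_zero_norm (a := fun n => M * |c n - α|)
      · intro n
        exact intervalIntegral.norm_integral_le_of_norm_le_const
          (fun x _ => by simpa [Real.norm_eq_abs] using hWtb x)
      · have : Tendsto (fun n => |c n - α|) atTop (𝓝 0) := by
          have := (hclim.sub (tendsto_const_nhds (x := α))).abs
          simpa using this
        simpa using this.const_mul M
    have e2 : Tendsto (fun n => ∫ t in d n..β, Wt t) atTop (𝓝 0) := by
      apply squeeze_zero_norm (a := fun n => M * |β - d n|)
      · intro n
        exact intervalIntegral.norm_integral_le_of_norm_le_const
          (fun x _ => by simpa [Real.norm_eq_abs] using hWtb x)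
      · have : Tendsto (fun n => |β - d n|) atTop (𝓝 0) := by
          have := ((tendsto_const_nhds (x := β)).sub hdlim).abs
          simpa using this
        simpa using this.const_mul M
    have := ((tendsto_const_nhds (x := ∫ t in α..β, Wt t)).sub e1).sub e2
    simp only [sub_zero] at this
    exact Tendsto.congr (fun n => (hsplit n).symm) this
  have tends2 : Tendsto (fun n => ∫ u in φ (c n)..φ (d n), h u) atTop
      (𝓝 (∫ u in φ α..φ β, h u)) := by
    have hφc : Tendsto (fun n => φ (c n)) atTop (𝓝 (φ α)) :=
      ((hφco.tendsto α).comp hclim)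
    have hφd' : Tendsto (fun n => φ (d n)) atTop (𝓝 (φ β)) :=
      ((hφco.tendsto β).comp hdlim)
    have hsplit : ∀ n, ∫ u in φ (c n)..φ (d n), h u
        = (∫ u in φ α..φ β, h u) + (∫ u in φ β..φ (d n), h u) - (∫ u in φ α..φ (c n), h u) := by
      intro n
      have h1 : (∫ u in φ α..φ (c n), h u) + (∫ u in φ (c n)..φ (d n), h u)
          = ∫ u in φ α..φ (d n), h u :=
        intervalIntegral.integral_add_adjacent_intervals (hhII _ _) (hhII _ _)
      have h2 : (∫ u in φ α..φ β, h u) + (∫ u in φ β..φ (d n), h u)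
          = ∫ u in φ α..φ (d n), h u :=
        intervalIntegral.integral_add_adjacent_intervals (hhII _ _) (hhII _ _)
      linarith
    have e1 : Tendsto (fun n => ∫ u in φ α..φ (c n), h u) atTop (𝓝 0) := by
      apply squeeze_zero_norm (a := fun n => C * |φ (c n) - φ α|)
      · intro n
        exact intervalIntegral.norm_integral_le_of_norm_le_const
          (fun x _ => by simpa [Real.norm_eq_abs] using hC x)
      · have : Tendsto (fun n => |φ (c n) - φ α|) atTop (𝓝 0) := by
          have := (hφc.sub (tendsto_const_nhds (x := φ α))).abs
          simpa using this
        simpa using this.const_mul C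
    have e2 : Tendsto (fun n => ∫ u in φ β..φ (d n), h u) atTop (𝓝 0) := by
      apply squeeze_zero_norm (a := fun n => C * |φ (d n) - φ β|)
      · intro n
        exact intervalIntegral.norm_integral_le_of_norm_le_const
          (fun x _ => by simpa [Real.norm_eq_abs] using hC x)
      · have : Tendsto (fun n => |φ (d n) - φ β|) atTop (𝓝 0) := by
          have := (hφd'.sub (tendsto_const_nhds (x := φ β))).abs
          simpa using this
        simpa using this.const_mul C
    have := (((tendsto_const_nhds (x := ∫ u in φ α..φ β, h u)).add e2).sub e1)
    simp only [add_zero, sub_zero] at this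
    exact Tendsto.congr (fun n => (hsplit n).symm) this
  rw [step0]
  exact tendsto_nhds_unique (Tendsto.congr (fun n => key n) tends1) tends2

lemma image_null_of_deriv {φ : ℝ → ℝ} {s : Set ℝ} (hs : MeasurableSet s)
    (hd : ∀ t ∈ s, DifferentiableAt ℝ φ t)
    (h0 : ∫⁻ t in s, ENNReal.ofReal |deriv φ t| ∂volume = 0) :
    volume (φ '' s) = 0 := by
  have key := MeasureTheory.addHaar_image_le_lintegral_abs_det_fderiv volume hs
    (f' := fun t => ContinuousLinearMap.smulRight (1 : ℝ →L[ℝ] ℝ) (deriv φ t))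
    (fun x hx => ((hd x hx).hasDerivAt).hasFDerivAt.hasFDerivWithinAt)
  simp only [ContinuousLinearMap.smulRight_one_eq_toSpanSingleton, ContinuousLinearMap.det_toSpanSingleton] at key
  rw [h0] at key
  exact le_antisymm key zero_le

lemma cont_of_good {f φ φ' : ℝ → ℝ} {a b t₀ : ℝ}
    (hφd : ∀ s ∈ Set.Ioo a b, HasDerivAt φ (φ' s) s)
    (ht₀ : t₀ ∈ Set.Ioo a b)
    (hgc : ContinuousAt (fun s => f (φ s) * φ' s) t₀)
    (hφ'c : ContinuousAt φ' t₀) (hne : φ' t₀ ≠ 0) :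
    ContinuousAt f (φ t₀) := by
  rw [Metric.continuousAt_iff]
  intro ε hε
  set q : ℝ → ℝ := fun s => (f (φ s) * φ' s) / φ' s with hqdef
  have hq : ContinuousAt q t₀ := hgc.div hφ'c hne
  have hqval : q t₀ = f (φ t₀) := by
    simp only [hqdef]
    field_simp
  have h1 : ∀ᶠ s in 𝓝 t₀, dist (q s) (f (φ t₀)) < ε / 2 := by
    have := hq (Metric.ball_mem_nhds (q t₀) (half_pos hε))
    filter_upwards [this] with s hshows
    rw [← hqval]
    exact hshows
  have h2 : ∀ᶠ s in 𝓝 t₀, φ' s ∈ Metric.ball (φ' t₀) |φ' t₀| :=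
    hφ'c (Metric.ball_mem_nhds _ (abs_pos.mpr hne))
  have h3 : ∀ᶠ s in 𝓝 t₀, s ∈ Set.Ioo a b := (isOpen_Ioo).mem_nhds ht₀
  obtain ⟨δ, hδpos, hδ⟩ := Metric.eventually_nhds_iff_ball.mp ((h1.and h2).and h3)
  set l := t₀ - δ / 2 with hl
  set r := t₀ + δ / 2 with hr
  have hIccball : Set.Icc l r ⊆ Metric.ball t₀ δ := by
    intro s hsmem
    rw [Metric.mem_ball, Real.dist_eq, abs_lt]
    have h1 := hsmem.1
    have h2 := hsmem.2
    simp only [hl, hr] at h1 h2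
    constructor <;> linarith
  have hP : ∀ s ∈ Set.Icc l r, (dist (q s) (f (φ t₀)) < ε / 2 ∧
      φ' s ∈ Metric.ball (φ' t₀) |φ' t₀|) ∧ s ∈ Set.Ioo a b :=
    fun s hsmem => hδ s (hIccball hsmem)
  have hlr : l ≤ r := by simp only [hl, hr]; linarith
  have hlt : l < t₀ := by simp only [hl]; linarith
  have hrt : t₀ < r := by simp only [hr]; linarith
  have htmem : t₀ ∈ Set.Icc l r := ⟨hlt.le, hrt.le⟩
  have hφdiff : ∀ s ∈ Set.Icc l r, DifferentiableAt ℝ φ s :=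
    fun s hsmem => (hφd s (hP s hsmem).2).differentiableAt
  have hφcont : ContinuousOn φ (Set.Icc l r) :=
    fun s hsmem => ((hφdiff s hsmem).continuousAt).continuousWithinAt
  have hderiv : ∀ s ∈ Set.Icc l r, deriv φ s = φ' s :=
    fun s hsmem => (hφd s (hP s hsmem).2).deriv
  have hne' : ∀ s ∈ Set.Icc l r, φ' s ≠ 0 := by
    intro s hsmem
    have := (hP s hsmem).1.2
    rw [Metric.mem_ball, Real.dist_eq] at this
    intro h0
    rw [h0, zero_sub, abs_neg] at this
    exact lt_irrefl _ this
  have hfq : ∀ s ∈ Set.Icc l r, f (φ s) = q s := by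
    intro s hsmem
    simp only [hqdef]
    field_simp [hne' s hsmem]
  rcases hne.lt_or_gt with hsign | hsign
  · -- φ' t₀ < 0 : strictly decreasing
    have hneg : ∀ s ∈ Set.Icc l r, φ' s < 0 := by
      intro s hsmem
      have := (hP s hsmem).1.2
      rw [Metric.mem_ball, Real.dist_eq, abs_lt, abs_of_neg hsign] at this
      linarith [this.2]
    have hanti : StrictAntiOn φ (Set.Icc l r) := by
      apply strictAntiOn_of_deriv_neg (convex_Icc l r) hφcont
      intro s hsmem
      rw [interior_Icc] at hsmem
      rw [hderiv s (Set.Ioo_subset_Icc_self hsmem)]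
      exact hneg s (Set.Ioo_subset_Icc_self hsmem)
    have hv1 : φ r < φ t₀ := hanti htmem (Set.right_mem_Icc.mpr hlr) hrt
    have hv2 : φ t₀ < φ l := hanti (Set.left_mem_Icc.mpr hlr) htmem hlt
    refine ⟨min (φ t₀ - φ r) (φ l - φ t₀), by apply lt_min <;> linarith, ?_⟩
    intro y hy
    rw [Real.dist_eq] at hy
    have hy1 : φ r ≤ y := by
      have := abs_lt.mp hy
      have := min_le_left (φ t₀ - φ r) (φ l - φ t₀)
      linarith [this, (abs_lt.mp hy).1]
    have hy2 : y ≤ φ l := by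
      have := min_le_right (φ t₀ - φ r) (φ l - φ t₀)
      linarith [this, (abs_lt.mp hy).2]
    obtain ⟨s, hsmem, hφs⟩ := intermediate_value_Icc' hlr hφcont ⟨hy1, hy2⟩
    rw [← hφs, hfq s hsmem]
    calc dist (q s) (f (φ t₀)) < ε / 2 := (hP s hsmem).1.1
      _ < ε := by linarith
  · -- 0 < φ' t₀ : strictly increasing
    have hpos : ∀ s ∈ Set.Icc l r, 0 < φ' s := by
      intro s hsmem
      have := (hP s hsmem).1.2
      rw [Metric.mem_ball, Real.dist_eq, abs_lt, abs_of_pos hsign] at this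
      linarith [this.1]
    have hmono : StrictMonoOn φ (Set.Icc l r) := by
      apply strictMonoOn_of_deriv_pos (convex_Icc l r) hφcont
      intro s hsmem
      rw [interior_Icc] at hsmem
      rw [hderiv s (Set.Ioo_subset_Icc_self hsmem)]
      exact hpos s (Set.Ioo_subset_Icc_self hsmem)
    have hv1 : φ l < φ t₀ := hmono (Set.left_mem_Icc.mpr hlr) htmem hlt
    have hv2 : φ t₀ < φ r := hmono htmem (Set.right_mem_Icc.mpr hlr) hrt
    refine ⟨min (φ t₀ - φ l) (φ r - φ t₀), by apply lt_min <;> linarith, ?_⟩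
    intro y hy
    rw [Real.dist_eq] at hy
    have hy1 : φ l ≤ y := by
      have := min_le_left (φ t₀ - φ l) (φ r - φ t₀)
      linarith [this, (abs_lt.mp hy).1]
    have hy2 : y ≤ φ r := by
      have := min_le_right (φ t₀ - φ l) (φ r - φ t₀)
      linarith [this, (abs_lt.mp hy).2]
    obtain ⟨s, hsmem, hφs⟩ := intermediate_value_Icc hlr hφcont ⟨hy1, hy2⟩
    rw [← hφs, hfq s hsmem]
    calc dist (q s) (f (φ t₀)) < ε / 2 := (hP s hsmem).1.1
      _ < ε := by linarith

theorem stmt8 (I : Set ℝ) (hI : I.OrdConnected) (f : ℝ → ℝ)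
    (α β : ℝ) (hαβ : α ≤ β) (φ φ' : ℝ → ℝ)
    (hmap : ∀ t ∈ Set.Icc α β, φ t ∈ I)
    (hφc : ContinuousOn φ (Set.Icc α β))
    (hφd : ∀ t ∈ Set.Ioo α β, HasDerivAt φ (φ' t) t)
    (hφ'int : ∀ c d : ℝ, α < c → c ≤ d → d < β → RiemannIntegrableOn φ' (Set.Icc c d))
    (hprod : RiemannIntegrableOn (fun t => f (φ t) * φ' t) (Set.Icc α β))
    (hfJbd : ∃ M, ∀ x ∈ Set.uIcc (φ α) (φ β), |f x| ≤ M) :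
    RiemannIntegrableOn f (Set.uIcc (φ α) (φ β)) ∧
    ∫ x in (φ α)..(φ β), f x = ∫ t in α..β, f (φ t) * φ' t := by
  rcases eq_or_lt_of_le hαβ with rfl | hlt
  · -- degenerate case α = β
    refine ⟨⟨hfJbd, ?_⟩, by simp⟩
    have h0 : volume.restrict (Set.uIcc (φ α) (φ α)) = 0 := by
      rw [Set.uIcc_self, Measure.restrict_eq_zero]
      exact measure_singleton _
    rw [h0]
    simp
  -- main case α < β
  obtain ⟨M, hM⟩ := hfJbd
  obtain ⟨M₀, hM₀⟩ := hprod.1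
  have hM₀0 : 0 ≤ M₀ := (abs_nonneg _).trans (hM₀ α (Set.left_mem_Icc.mpr hαβ))
  set J := Set.uIcc (φ α) (φ β) with hJ
  set g : ℝ → ℝ := fun t => f (φ t) * φ' t with hg
  -- globally continuous clamped version ψ of φ
  set ψ : ℝ → ℝ := fun t => φ (max α (min β t)) with hψ
  have hclamp : ∀ t : ℝ, max α (min β t) ∈ Set.Icc α β := by
    intro t
    exact ⟨le_max_left _ _, max_le hαβ (min_le_left _ _)⟩
  have hψcont : Continuous ψ :=
    hφc.comp_continuous (continuous_const.max (continuous_const.min continuous_id)) hclamp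
  have hψeq : ∀ t ∈ Set.Icc α β, ψ t = φ t := by
    intro t ht
    simp only [hψ, min_eq_right ht.2, max_eq_right ht.1]
  have hψα : ψ α = φ α := hψeq α (Set.left_mem_Icc.mpr hαβ)
  have hψβ : ψ β = φ β := hψeq β (Set.right_mem_Icc.mpr hαβ)
  have hψd : ∀ t ∈ Set.Ioo α β, HasDerivAt ψ (φ' t) t := by
    intro t ht
    apply (hφd t ht).congr_of_eventuallyEq
    filter_upwards [isOpen_Ioo.mem_nhds ht] with s hs
    exact hψeq s (Set.Ioo_subset_Icc_self hs)
  have hψderiv : ∀ t ∈ Set.Ioo α β, deriv ψ t = φ' t := fun t ht => (hψd t ht).deriv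
  have hψdiff : ∀ t ∈ Set.Ioo α β, DifferentiableAt ℝ ψ t :=
    fun t ht => (hψd t ht).differentiableAt
  have hbd : ∀ c d : ℝ, α < c → c ≤ d → d < β → ∃ B, ∀ t ∈ Set.Icc c d, |deriv ψ t| ≤ B := by
    intro c d hc hcd hd
    obtain ⟨B, hB⟩ := (hφ'int c d hc hcd hd).1
    refine ⟨B, fun t ht => ?_⟩
    rw [hψderiv t (Set.Icc_subset_Ioo hc hd ht)]
    exact hB t ht
  -- set of continuity points of f and measurable version h of f
  set D := {x | ContinuousAt f x} with hD
  set h : ℝ → ℝ := D.indicator f with hh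
  have hhm : Measurable h := measurable_indicator_continuousAt f
  -- the a.e. bad set
  set Bad := {t | t ∈ Set.Ioo α β ∧ ¬(ContinuousAt g t ∧ ContinuousAt φ' t)} with hBad
  have hBadnull : volume Bad = 0 := by
    have hset1 : volume ({x | ¬ ContinuousWithinAt g (Set.Icc α β) x} ∩ Set.Icc α β) = 0 := by
      have := hprod.2
      rw [ae_iff] at this
      rwa [Measure.restrict_apply' measurableSet_Icc] at this
    set ε : ℕ → ℝ := fun n => (β - α) / (n + 2) with hε
    set c : ℕ → ℝ := fun n => α + ε n with hc
    set d : ℕ → ℝ := fun n => β - ε n with hd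
    have hεpos : ∀ n, 0 < ε n := fun n => div_pos (by linarith) (by positivity)
    have hεhalf : ∀ n, ε n ≤ (β - α) / 2 := by
      intro n
      apply div_le_div_of_nonneg_left (by linarith) (by norm_num) (by norm_num)
    have hset2 : ∀ n : ℕ, volume ({x | ¬ ContinuousWithinAt φ' (Set.Icc (c n) (d n)) x}
        ∩ Set.Icc (c n) (d n)) = 0 := by
      intro n
      have h1 : α < c n := by simp only [hc]; linarith [hεpos n]
      have h3 : d n < β := by simp only [hd]; linarith [hεpos n]
      have h2 : c n ≤ d n := by simp only [hc, hd]; linarith [hεhalf n]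
      have := (hφ'int (c n) (d n) h1 h2 h3).2
      rw [ae_iff] at this
      rwa [Measure.restrict_apply' measurableSet_Icc] at this
    apply measure_mono_null (t := ({x | ¬ ContinuousWithinAt g (Set.Icc α β) x} ∩ Set.Icc α β)
      ∪ ⋃ n : ℕ, ({x | ¬ ContinuousWithinAt φ' (Set.Icc (c n) (d n)) x} ∩ Set.Icc (c n) (d n)))
    · intro t ht
      obtain ⟨htIoo, hnot⟩ := ht
      by_cases hgc : ContinuousAt g t
      · -- then φ' must fail continuity at t
        have hnφ' : ¬ ContinuousAt φ' t := fun hφ'c => hnot ⟨hgc, hφ'c⟩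
        right
        -- choose n such that t ∈ Ioo (c n) (d n)
        set m := min (t - α) (β - t) with hm
        have hmpos : 0 < m := lt_min (by linarith [htIoo.1]) (by linarith [htIoo.2])
        obtain ⟨n, hn⟩ := exists_nat_gt ((β - α) / m)
        have hεm : ε n < m := by
          rw [hε]
          rw [div_lt_iff₀ (by positivity)]
          have h1 : β - α < n * m := by
            rw [div_lt_iff₀ hmpos] at hn
            linarith
          have h2 : (n : ℝ) * m ≤ ((n : ℝ) + 2) * m := by nlinarith [hmpos.le]
          linarith
        have htmem : t ∈ Set.Ioo (c n) (d n) := by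
          constructor
          · simp only [hc]
            have : m ≤ t - α := min_le_left _ _
            linarith
          · simp only [hd]
            have : m ≤ β - t := min_le_right _ _
            linarith
        refine Set.mem_iUnion.mpr ⟨n, ?_, Set.Ioo_subset_Icc_self htmem⟩
        intro hCWA
        exact hnφ' (hCWA.continuousAt (Icc_mem_nhds htmem.1 htmem.2))
      · left
        refine ⟨?_, Set.Ioo_subset_Icc_self htIoo⟩
        intro hCWA
        exact hgc (hCWA.continuousAt (Icc_mem_nhds htIoo.1 htIoo.2))
    · exact measure_union_null hset1 (measure_iUnion_null hset2)
  have haeBad : ∀ᵐ t ∂volume, t ∉ Bad := by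
    rw [ae_iff]
    simpa using hBadnull
  -- Lemma 1: good points give continuity of f
  have key1 : ∀ t, t ∈ Set.Ioo α β → t ∉ Bad → φ' t ≠ 0 → ContinuousAt f (φ t) := by
    intro t htIoo htBad hne
    have hcg : ContinuousAt g t ∧ ContinuousAt φ' t := by
      by_contra hcon
      exact htBad ⟨htIoo, hcon⟩
    exact cont_of_good hφd htIoo hcg.1 hcg.2 hne
  -- Step A : almost every point of J is a continuity point of f
  set Z := Set.Ioo α β ∩ (deriv ψ) ⁻¹' {0} with hZ
  have hZmeas : MeasurableSet Z := measurableSet_Ioo.inter ((measurable_deriv ψ) (measurableSet_singleton 0))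
  set B' := toMeasurable volume Bad ∩ Set.Ioo α β with hB'
  have hB'meas : MeasurableSet B' := (measurableSet_toMeasurable _ _).inter measurableSet_Ioo
  have hB'null : volume B' = 0 :=
    measure_mono_null Set.inter_subset_left (by rwa [measure_toMeasurable])
  have hBadB' : Bad ⊆ B' := fun t ht => ⟨subset_toMeasurable _ _ ht, ht.1⟩
  have hZimg : volume (ψ '' Z) = 0 := by
    apply image_null_of_deriv hZmeas (fun t ht => hψdiff t ht.1)
    calc ∫⁻ t in Z, ENNReal.ofReal |deriv ψ t| ∂volume
        = ∫⁻ _t in Z, 0 ∂volume := by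
          apply setLIntegral_congr_fun hZmeas
          intro t ht
          have : deriv ψ t = 0 := ht.2
          simp only [this]
          simp
      _ = 0 := lintegral_zero
  have hB'img : volume (ψ '' B') = 0 := by
    apply image_null_of_deriv hB'meas (fun t ht => hψdiff t ht.2)
    exact setLIntegral_measure_zero _ _ hB'null
  set N := ψ '' Z ∪ ψ '' B' ∪ {φ α, φ β} with hN
  have hNnull : volume N = 0 := by
    apply measure_union_null (measure_union_null hZimg hB'img)
    have : ({φ α, φ β} : Set ℝ) = {φ α} ∪ {φ β} := by rfl
    rw [this]
    exact measure_union_null (measure_singleton _) (measure_singleton _)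
  have key2 : ∀ x, x ∈ J → x ∉ N → ContinuousAt f x := by
    intro x hxJ hxN
    have hximg : x ∈ φ '' Set.Icc α β := by
      have hsub : Set.uIcc (φ α) (φ β) ⊆ φ '' Set.uIcc α β :=
        intermediate_value_uIcc (by rwa [Set.uIcc_of_le hαβ])
      rw [Set.uIcc_of_le hαβ] at hsub
      exact hsub hxJ
    obtain ⟨t, htIcc, hφt⟩ := hximg
    have htne : t ≠ α ∧ t ≠ β := by
      constructor
      · rintro rfl
        exact hxN (Or.inr (by rw [← hφt]; exact Set.mem_insert _ _))
      · rintro rfl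
        exact hxN (Or.inr (by rw [← hφt]; exact Set.mem_insert_of_mem _ rfl))
    have htIoo : t ∈ Set.Ioo α β :=
      ⟨lt_of_le_of_ne htIcc.1 (Ne.symm htne.1), lt_of_le_of_ne htIcc.2 htne.2⟩
    have htZ : t ∉ Z := by
      intro htZ
      exact hxN (Or.inl (Or.inl ⟨t, htZ, by rw [hψeq t htIcc, hφt]⟩))
    have htBad : t ∉ Bad := by
      intro htBad
      exact hxN (Or.inl (Or.inr ⟨t, hBadB' htBad, by rw [hψeq t htIcc, hφt]⟩))
    have hne : φ' t ≠ 0 := by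
      intro h0
      apply htZ
      refine ⟨htIoo, ?_⟩
      simp only [Set.mem_preimage, Set.mem_singleton_iff]
      rw [hψderiv t htIoo, h0]
    rw [← hφt]
    exact key1 t htIoo htBad hne
  constructor
  · -- part 1 : Riemann integrability of f on J
    refine ⟨⟨M, hM⟩, ?_⟩
    rw [ae_iff, Measure.restrict_apply' measurableSet_uIcc]
    apply measure_mono_null (t := N) _ hNnull
    rintro x ⟨hxbad, hxJ⟩
    by_contra hxN
    exact hxbad ((key2 x hxJ hxN).continuousWithinAt)
  -- part 2 : the substitution formula
  set m1 := min (φ α) (φ β) with hm1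
  set m2 := max (φ α) (φ β) with hm2
  have hJIcc : J = Set.Icc m1 m2 := rfl
  have hm12 : m1 ≤ m2 := min_le_max
  have haeβ : ∀ᵐ t ∂(volume : Measure ℝ), t ≠ β := by
    rw [ae_iff]
    have he : {a : ℝ | ¬ a ≠ β} = {β} := by ext a; simp
    rw [he]
    exact measure_singleton β
  have haeN : ∀ᵐ y ∂(volume : Measure ℝ), y ∉ N := by
    rw [ae_iff]
    simpa using hNnull
  -- the three pieces of h
  set h1 : ℝ → ℝ := J.indicator h with hh1
  have hh1m : Measurable h1 := hhm.indicator measurableSet_uIcc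
  set C1 := max M 0 with hC1
  have hhJ : ∀ y ∈ J, |h y| ≤ C1 := by
    intro y hy
    rw [hh]
    by_cases hyD : y ∈ D
    · rw [Set.indicator_of_mem hyD]
      exact le_max_of_le_left (hM y hy)
    · rw [Set.indicator_of_notMem hyD]
      simp [hC1, le_max_right]
  have hh1b : ∀ y, |h1 y| ≤ C1 := by
    intro y
    rw [hh1]
    by_cases hy : y ∈ J
    · rw [Set.indicator_of_mem hy]; exact hhJ y hy
    · rw [Set.indicator_of_notMem hy]; simp [hC1]
  have hh1h : ∀ y, |h1 y| ≤ |h y| := by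
    intro y
    rw [hh1]
    by_cases hy : y ∈ J
    · rw [Set.indicator_of_mem hy]
    · rw [Set.indicator_of_notMem hy]; simp
  -- generic a.e. domination
  have hdom_all : ∀ k : ℝ → ℝ, (∀ y, |k y| ≤ |h y|) →
      ∀ᵐ t ∂volume, t ∈ Set.Ioo α β → |deriv ψ t * k (ψ t)| ≤ M₀ := by
    intro k hk
    filter_upwards [haeBad] with t htBad htIoo
    rw [hψeq t (Set.Ioo_subset_Icc_self htIoo), hψderiv t htIoo]
    by_cases hne : φ' t = 0
    · rw [hne]
      simpa using hM₀0
    · have hfd : φ t ∈ D := key1 t htIoo htBad hne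
      have hhf : h (φ t) = f (φ t) := Set.indicator_of_mem hfd f
      calc |φ' t * k (φ t)| = |φ' t| * |k (φ t)| := abs_mul _ _
        _ ≤ |φ' t| * |h (φ t)| := mul_le_mul_of_nonneg_left (hk _) (abs_nonneg _)
        _ = |f (φ t) * φ' t| := by rw [hhf, abs_mul]; ring
        _ ≤ M₀ := hM₀ t (Set.Ioo_subset_Icc_self htIoo)
  -- interval integrability of pieces
  have hint : ∀ k : ℝ → ℝ, Measurable k → (∀ y, |k y| ≤ |h y|) →
      IntervalIntegrable (fun t => deriv ψ t * k (ψ t)) volume α β := by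
    intro k hkm hkh
    apply intervalIntegrable_of_bdd (C := M₀)
      ((measurable_deriv ψ).mul (hkm.comp hψcont.measurable))
    filter_upwards [hdom_all k hkh, haeβ] with t h1t h2t htmem
    rw [Set.uIoc_of_le hαβ] at htmem
    exact h1t ⟨htmem.1, lt_of_le_of_ne htmem.2 h2t⟩
  -- the h1 piece
  have hW1 : ∫ t in α..β, deriv ψ t * h1 (ψ t) = ∫ u in φ α..φ β, f u := by
    have e := subst_bdd_global hlt hψcont hψdiff hbd hh1m hh1b hM₀0 (hdom_all h1 hh1h)
    rw [hψα, hψβ] at e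
    rw [e]
    apply intervalIntegral.integral_congr_ae
    filter_upwards [haeN] with y hyN hymem
    have hyJ : y ∈ J := Set.Ioc_subset_Icc_self hymem
    have hyD : y ∈ D := key2 y hyJ hyN
    rw [hh1, Set.indicator_of_mem hyJ, hh, Set.indicator_of_mem hyD]
  -- vanishing of the upper excursion
  have step_up : ∀ x, m2 < x →
      (∫ t in α..β, deriv ψ t * (fun y => if x < y then h y else 0) (ψ t)) = 0 := by
    intro x hx
    set k : ℕ → ℝ → ℝ := fun n y => if x < y then trunc8 n (h y) else 0 with hk
    have hkm : ∀ n, Measurable (k n) :=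
      fun n => Measurable.ite measurableSet_Ioi (trunc8_measurable hhm) measurable_const
    have hkb : ∀ n y, |k n y| ≤ (n : ℝ) := by
      intro n y
      simp only [hk]
      by_cases hy : x < y
      · rw [if_pos hy]; exact trunc8_abs_le (Nat.cast_nonneg n) _
      · rw [if_neg hy]; simpa using Nat.cast_nonneg n
    have hkh : ∀ n y, |k n y| ≤ |h y| := by
      intro n y
      simp only [hk]
      by_cases hy : x < y
      · rw [if_pos hy]; exact trunc8_abs_le_abs (Nat.cast_nonneg n) _
      · rw [if_neg hy]; simpa using abs_nonneg (h y)
    have hzero : ∀ n, (∫ u in φ α..φ β, k n u) = 0 := by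
      intro n
      have heq : Set.EqOn (k n) (fun _ => (0:ℝ)) (Set.uIcc (φ α) (φ β)) := by
        intro y hy
        have hy2 : y ≤ m2 := (hJIcc ▸ hy : y ∈ Set.Icc m1 m2).2
        simp only [hk]
        rw [if_neg (by linarith)]
      rw [intervalIntegral.integral_congr heq, intervalIntegral.integral_zero]
    have hn_eq : ∀ n, (∫ t in α..β, deriv ψ t * k n (ψ t)) = 0 := by
      intro n
      have e := subst_bdd_global hlt hψcont hψdiff hbd (hkm n) (hkb n) hM₀0
        (hdom_all (k n) (hkh n))
      rw [hψα, hψβ] at e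
      rw [e]
      exact hzero n
    have hlim : Tendsto (fun n => ∫ t in α..β, deriv ψ t * k n (ψ t)) atTop
        (𝓝 (∫ t in α..β, deriv ψ t * (fun y => if x < y then h y else 0) (ψ t))) := by
      apply interval_dct (C := M₀)
      · exact fun n => (measurable_deriv ψ).mul ((hkm n).comp hψcont.measurable)
      · intro n
        filter_upwards [hdom_all (k n) (hkh n), haeβ] with t h1t h2t htmem
        rw [Set.uIoc_of_le hαβ] at htmem
        exact h1t ⟨htmem.1, lt_of_le_of_ne htmem.2 h2t⟩
      · apply Filter.Eventually.of_forall
        intro t _eq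
        apply Tendsto.const_mul
        simp only [hk]
        by_cases hy : x < ψ t
        · simp only [if_pos hy]
          exact trunc8_tendsto _
        · simp only [if_neg hy]
          exact tendsto_const_nhds
    exact tendsto_nhds_unique hlim
      (Tendsto.congr (fun n => (hn_eq n).symm) tendsto_const_nhds)
  -- vanishing of the lower excursion
  have step_down : ∀ x, x < m1 →
      (∫ t in α..β, deriv ψ t * (fun y => if y < x then h y else 0) (ψ t)) = 0 := by
    intro x hx
    set k : ℕ → ℝ → ℝ := fun n y => if y < x then trunc8 n (h y) else 0 with hk
    have hkm : ∀ n, Measurable (k n) :=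
      fun n => Measurable.ite measurableSet_Iio (trunc8_measurable hhm) measurable_const
    have hkb : ∀ n y, |k n y| ≤ (n : ℝ) := by
      intro n y
      simp only [hk]
      by_cases hy : y < x
      · rw [if_pos hy]; exact trunc8_abs_le (Nat.cast_nonneg n) _
      · rw [if_neg hy]; simpa using Nat.cast_nonneg n
    have hkh : ∀ n y, |k n y| ≤ |h y| := by
      intro n y
      simp only [hk]
      by_cases hy : y < x
      · rw [if_pos hy]; exact trunc8_abs_le_abs (Nat.cast_nonneg n) _
      · rw [if_neg hy]; simpa using abs_nonneg (h y)
    have hzero : ∀ n, (∫ u in φ α..φ β, k n u) = 0 := by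
      intro n
      have heq : Set.EqOn (k n) (fun _ => (0:ℝ)) (Set.uIcc (φ α) (φ β)) := by
        intro y hy
        have hy1 : m1 ≤ y := (hJIcc ▸ hy : y ∈ Set.Icc m1 m2).1
        simp only [hk]
        rw [if_neg (by linarith)]
      rw [intervalIntegral.integral_congr heq, intervalIntegral.integral_zero]
    have hn_eq : ∀ n, (∫ t in α..β, deriv ψ t * k n (ψ t)) = 0 := by
      intro n
      have e := subst_bdd_global hlt hψcont hψdiff hbd (hkm n) (hkb n) hM₀0
        (hdom_all (k n) (hkh n))
      rw [hψα, hψβ] at e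
      rw [e]
      exact hzero n
    have hlim : Tendsto (fun n => ∫ t in α..β, deriv ψ t * k n (ψ t)) atTop
        (𝓝 (∫ t in α..β, deriv ψ t * (fun y => if y < x then h y else 0) (ψ t))) := by
      apply interval_dct (C := M₀)
      · exact fun n => (measurable_deriv ψ).mul ((hkm n).comp hψcont.measurable)
      · intro n
        filter_upwards [hdom_all (k n) (hkh n), haeβ] with t h1t h2t htmem
        rw [Set.uIoc_of_le hαβ] at htmem
        exact h1t ⟨htmem.1, lt_of_le_of_ne htmem.2 h2t⟩
      · apply Filter.Eventually.of_forall
        intro t _eq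
        apply Tendsto.const_mul
        simp only [hk]
        by_cases hy : ψ t < x
        · simp only [if_pos hy]
          exact trunc8_tendsto _
        · simp only [if_neg hy]
          exact tendsto_const_nhds
    exact tendsto_nhds_unique hlim
      (Tendsto.congr (fun n => (hn_eq n).symm) tendsto_const_nhds)
  -- the two excursion pieces
  set h2 : ℝ → ℝ := fun y => if m2 < y then h y else 0 with hh2
  have hh2m : Measurable h2 := Measurable.ite measurableSet_Ioi hhm measurable_const
  have hh2h : ∀ y, |h2 y| ≤ |h y| := by
    intro y
    simp only [hh2]
    by_cases hy : m2 < y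
    · rw [if_pos hy]
    · rw [if_neg hy]; simpa using abs_nonneg (h y)
  set h3 : ℝ → ℝ := fun y => if y < m1 then h y else 0 with hh3
  have hh3m : Measurable h3 := Measurable.ite measurableSet_Iio hhm measurable_const
  have hh3h : ∀ y, |h3 y| ≤ |h y| := by
    intro y
    simp only [hh3]
    by_cases hy : y < m1
    · rw [if_pos hy]
    · rw [if_neg hy]; simpa using abs_nonneg (h y)
  have hW2 : (∫ t in α..β, deriv ψ t * h2 (ψ t)) = 0 := by
    set xs : ℕ → ℝ := fun n => m2 + 1 / (n + 1) with hxs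
    have hxgt : ∀ n, m2 < xs n := by
      intro n
      simp only [hxs]
      have : (0:ℝ) < 1 / (n + 1) := by positivity
      linarith
    have hlim : Tendsto (fun n => ∫ t in α..β,
        deriv ψ t * (fun y => if xs n < y then h y else 0) (ψ t)) atTop
        (𝓝 (∫ t in α..β, deriv ψ t * h2 (ψ t))) := by
      apply interval_dct (C := M₀)
      · exact fun n => (measurable_deriv ψ).mul
          ((Measurable.ite measurableSet_Ioi hhm measurable_const).comp hψcont.measurable)
      · intro n
        have hkh : ∀ y, |(fun y => if xs n < y then h y else 0) y| ≤ |h y| := by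
          intro y
          by_cases hy : xs n < y
          · simp only [if_pos hy]; exact le_refl _
          · simp only [if_neg hy]; simpa using abs_nonneg (h y)
        filter_upwards [hdom_all _ hkh, haeβ] with t h1t h2t htmem
        rw [Set.uIoc_of_le hαβ] at htmem
        exact h1t ⟨htmem.1, lt_of_le_of_ne htmem.2 h2t⟩
      · apply Filter.Eventually.of_forall
        intro t _
        apply Tendsto.const_mul
        by_cases hy : m2 < ψ t
        · have hev : ∀ᶠ n in atTop, xs n < ψ t := by
            have hpos : 0 < ψ t - m2 := by linarith
            obtain ⟨Nn, hN⟩ := exists_nat_gt (1 / (ψ t - m2))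
            rw [eventually_atTop]
            refine ⟨Nn, fun b hb => ?_⟩
            simp only [hxs]
            have h1 : 1 / ((b:ℝ) + 1) < ψ t - m2 := by
              rw [div_lt_iff₀ (by positivity)]
              rw [div_lt_iff₀ hpos] at hN
              have hble : (Nn : ℝ) ≤ (b : ℝ) := by exact_mod_cast hb
              nlinarith
            linarith
          simp only [hh2, if_pos hy]
          refine Tendsto.congr' ?_ (tendsto_const_nhds (x := h (ψ t)))
          filter_upwards [hev] with n hn
          rw [if_pos hn]
        · simp only [hh2, if_neg hy]
          have hval : ∀ n : ℕ, (if xs n < ψ t then h (ψ t) else 0) = 0 := by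
            intro n
            rw [if_neg]
            push_neg at hy ⊢
            exact hy.trans (hxgt n).le
          refine Tendsto.congr (fun n => (hval n).symm) tendsto_const_nhds
    exact tendsto_nhds_unique hlim
      (Tendsto.congr (fun n => (step_up (xs n) (hxgt n)).symm) tendsto_const_nhds)
  have hW3 : (∫ t in α..β, deriv ψ t * h3 (ψ t)) = 0 := by
    set xs : ℕ → ℝ := fun n => m1 - 1 / (n + 1) with hxs
    have hxlt : ∀ n, xs n < m1 := by
      intro n
      simp only [hxs]
      have : (0:ℝ) < 1 / (n + 1) := by positivity
      linarith
    have hlim : Tendsto (fun n => ∫ t in α..β,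
        deriv ψ t * (fun y => if y < xs n then h y else 0) (ψ t)) atTop
        (𝓝 (∫ t in α..β, deriv ψ t * h3 (ψ t))) := by
      apply interval_dct (C := M₀)
      · exact fun n => (measurable_deriv ψ).mul
          ((Measurable.ite measurableSet_Iio hhm measurable_const).comp hψcont.measurable)
      · intro n
        have hkh : ∀ y, |(fun y => if y < xs n then h y else 0) y| ≤ |h y| := by
          intro y
          by_cases hy : y < xs n
          · simp only [if_pos hy]; exact le_refl _
          · simp only [if_neg hy]; simpa using abs_nonneg (h y)
        filter_upwards [hdom_all _ hkh, haeβ] with t h1t h2t htmem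
        rw [Set.uIoc_of_le hαβ] at htmem
        exact h1t ⟨htmem.1, lt_of_le_of_ne htmem.2 h2t⟩
      · apply Filter.Eventually.of_forall
        intro t _
        apply Tendsto.const_mul
        by_cases hy : ψ t < m1
        · have hev : ∀ᶠ n in atTop, ψ t < xs n := by
            have hpos : 0 < m1 - ψ t := by linarith
            obtain ⟨Nn, hN⟩ := exists_nat_gt (1 / (m1 - ψ t))
            rw [eventually_atTop]
            refine ⟨Nn, fun b hb => ?_⟩
            simp only [hxs]
            have h1 : 1 / ((b:ℝ) + 1) < m1 - ψ t := by
              rw [div_lt_iff₀ (by positivity)]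
              rw [div_lt_iff₀ hpos] at hN
              have hble : (Nn : ℝ) ≤ (b : ℝ) := by exact_mod_cast hb
              nlinarith
            linarith
          simp only [hh3, if_pos hy]
          refine Tendsto.congr' ?_ (tendsto_const_nhds (x := h (ψ t)))
          filter_upwards [hev] with n hn
          rw [if_pos hn]
        · simp only [hh3, if_neg hy]
          have hval : ∀ n : ℕ, (if ψ t < xs n then h (ψ t) else 0) = 0 := by
            intro n
            rw [if_neg]
            push_neg at hy ⊢
            exact (hxlt n).le.trans hy
          refine Tendsto.congr (fun n => (hval n).symm) tendsto_const_nhds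
    exact tendsto_nhds_unique hlim
      (Tendsto.congr (fun n => (step_down (xs n) (hxlt n)).symm) tendsto_const_nhds)
  -- assembling everything
  have hsum : ∀ y, h y = h1 y + h2 y + h3 y := by
    intro y
    rcases lt_or_ge m2 y with hy2 | hy2
    · have hyJ : y ∉ J := fun hc => absurd (hJIcc ▸ hc : y ∈ Set.Icc m1 m2).2 (not_le.mpr hy2)
      have hy1 : ¬ y < m1 := not_lt.mpr (hm12.trans hy2.le)
      rw [hh1, Set.indicator_of_notMem hyJ]
      simp only [hh2, hh3, if_pos hy2, if_neg hy1]
      ring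
    · rcases lt_or_ge y m1 with hy1 | hy1
      · have hyJ : y ∉ J := fun hc => absurd (hJIcc ▸ hc : y ∈ Set.Icc m1 m2).1 (not_le.mpr hy1)
        rw [hh1, Set.indicator_of_notMem hyJ]
        simp only [hh2, hh3, if_neg (not_lt.mpr hy2), if_pos hy1]
        ring
      · have hyJ : y ∈ J := hJIcc ▸ (⟨hy1, hy2⟩ : y ∈ Set.Icc m1 m2)
        rw [hh1, Set.indicator_of_mem hyJ]
        simp only [hh2, hh3, if_neg (not_lt.mpr hy2), if_neg (not_lt.mpr hy1)]
        ring
  have hgW : ∀ᵐ t ∂volume, t ∈ Set.uIoc α β → g t = deriv ψ t * h (ψ t) := by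
    filter_upwards [haeBad, haeβ] with t htBad htβ htmem
    rw [Set.uIoc_of_le hαβ] at htmem
    have htIoo : t ∈ Set.Ioo α β := ⟨htmem.1, lt_of_le_of_ne htmem.2 htβ⟩
    rw [hψeq t (Set.Ioo_subset_Icc_self htIoo), hψderiv t htIoo]
    by_cases hne : φ' t = 0
    · simp only [hg, hne, mul_zero, zero_mul]
    · have hfd : φ t ∈ D := key1 t htIoo htBad hne
      simp only [hg, hh, Set.indicator_of_mem hfd]
      ring
  have e0 : (∫ t in α..β, g t) = ∫ t in α..β, deriv ψ t * h (ψ t) :=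
    intervalIntegral.integral_congr_ae hgW
  have esplit : (fun t => deriv ψ t * h (ψ t))
      = fun t => deriv ψ t * h1 (ψ t) + (deriv ψ t * h2 (ψ t) + deriv ψ t * h3 (ψ t)) := by
    funext t
    rw [hsum (ψ t)]
    ring
  have e1 : (∫ t in α..β, deriv ψ t * h (ψ t))
      = (∫ t in α..β, deriv ψ t * h1 (ψ t))
        + ((∫ t in α..β, deriv ψ t * h2 (ψ t)) + (∫ t in α..β, deriv ψ t * h3 (ψ t))) := by
    rw [esplit, intervalIntegral.integral_add (hint h1 hh1m hh1h)
        ((hint h2 hh2m hh2h).add (hint h3 hh3m hh3h)),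
      intervalIntegral.integral_add (hint h2 hh2m hh2h) (hint h3 hh3m hh3h)]
  rw [e0, e1, hW1, hW2, hW3]
  ring
end

section
/- Let f : I → ℝ and let φ : [α,β] → I be continuous and differentiable on (α,β). Suppose t ∈ (α,β) is a point at which both φ' and the product (f∘φ)·φ' are continuous, and φ'(t) ≠ 0. Then f is continuous at φ(t). -/
open MeasureTheory Set Filter Topology intervalIntegral

theorem stmt10 (I : Set ℝ) (f : ℝ → ℝ) (α β : ℝ) (φ φ' : ℝ → ℝ)
    (hmap : ∀ s ∈ Set.Icc α β, φ s ∈ I)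
    (hφc : ContinuousOn φ (Set.Icc α β))
    (hφd : ∀ s ∈ Set.Ioo α β, HasDerivAt φ (φ' s) s)
    (t : ℝ) (ht : t ∈ Set.Ioo α β)
    (h1 : ContinuousWithinAt φ' (Set.Ioo α β) t)
    (h2 : ContinuousWithinAt (fun s => f (φ s) * φ' s) (Set.Ioo α β) t)
    (h3 : φ' t ≠ 0) :
    ContinuousWithinAt f I (φ t) := by
  obtain ⟨htα, htβ⟩ := ht
  -- g = f ∘ φ is continuous within Ioo at t
  have hg : ContinuousWithinAt (fun s => f (φ s)) (Set.Ioo α β) t := by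
    have hq := h2.div h1 h3
    apply hq.congr_of_eventuallyEq
    · have hne : ∀ᶠ s in 𝓝[Set.Ioo α β] t, φ' s ≠ 0 := h1.eventually_ne h3
      filter_upwards [hne] with s hs
      simp only [Pi.div_apply]; rw [mul_div_assoc, div_self hs, mul_one]
    · simp only [Pi.div_apply]; rw [mul_div_assoc, div_self h3, mul_one]
  -- slope sign near t
  have hslope : ∀ᶠ s in 𝓝[≠] t, (φ s - φ t) / (s - t) * φ' t > 0 := by
    have htend := hasDerivAt_iff_tendsto_slope.mp (hφd t ⟨htα, htβ⟩)
    have hopen : IsOpen {y : ℝ | y * φ' t > 0} :=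
      isOpen_lt continuous_const (continuous_id.mul continuous_const)
    have hmem : {y : ℝ | y * φ' t > 0} ∈ 𝓝 (φ' t) :=
      hopen.mem_nhds (by simpa using mul_self_pos.mpr h3)
    filter_upwards [htend.eventually hmem] with s hs
    simpa [slope_def_field] using hs
  rw [eventually_nhdsWithin_iff, Metric.eventually_nhds_iff] at hslope
  obtain ⟨δ2, hδ2pos, hδ2⟩ := hslope
  rw [Metric.continuousWithinAt_iff]
  intro ε hε
  have hgε := Metric.continuousWithinAt_iff.mp hg ε hε
  obtain ⟨δ1, hδ1pos, hδ1⟩ := hgε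
  set δ : ℝ := min (min δ1 δ2) (min (t - α) (β - t)) / 2 with hδdef
  have hM : 0 < min (min δ1 δ2) (min (t - α) (β - t)) := by
    simp only [lt_min_iff]
    exact ⟨⟨hδ1pos, hδ2pos⟩, by linarith, by linarith⟩
  have hMle1 : min (min δ1 δ2) (min (t - α) (β - t)) ≤ δ1 :=
    le_trans (min_le_left _ _) (min_le_left _ _)
  have hMle2 : min (min δ1 δ2) (min (t - α) (β - t)) ≤ δ2 :=
    le_trans (min_le_left _ _) (min_le_right _ _)
  have hMle3 : min (min δ1 δ2) (min (t - α) (β - t)) ≤ t - α :=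
    le_trans (min_le_right _ _) (min_le_left _ _)
  have hMle4 : min (min δ1 δ2) (min (t - α) (β - t)) ≤ β - t :=
    le_trans (min_le_right _ _) (min_le_right _ _)
  have hδpos : 0 < δ := by rw [hδdef]; linarith
  have hδ1' : δ < δ1 := by rw [hδdef]; linarith
  have hδ2' : δ < δ2 := by rw [hδdef]; linarith
  have hδα : δ < t - α := by rw [hδdef]; linarith
  have hδβ : δ < β - t := by rw [hδdef]; linarith
  set a : ℝ := t - δ with ha
  set b : ℝ := t + δ with hb
  have haIoo : a ∈ Set.Ioo α β := ⟨by simp [ha]; linarith, by simp [ha]; linarith⟩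
  have hbIoo : b ∈ Set.Ioo α β := ⟨by simp [hb]; linarith, by simp [hb]; linarith⟩
  have hsa := hδ2 (show dist a t < δ2 by simp [ha, Real.dist_eq, abs_of_nonpos, hδpos.le]; rw [abs_of_nonneg hδpos.le]; exact hδ2'
    ) (by simp [ha]; intro h; linarith [hδpos])
  have hsb := hδ2 (show dist b t < δ2 by simp [hb, Real.dist_eq]; rw [abs_of_nonneg hδpos.le]; exact hδ2'
    ) (by simp [hb]; linarith [hδpos])
  -- convert slope sign to straddle
  have hua : (φ a - φ t) * φ' t < 0 := by
    have h0 : a - t < 0 := by simp [ha]; linarith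
    rw [div_mul_eq_mul_div, gt_iff_lt, lt_div_iff_of_neg h0] at hsa
    simpa using hsa
  have hub : (φ b - φ t) * φ' t > 0 := by
    have h0 : (0:ℝ) < b - t := by simp [hb]; linarith
    rw [div_mul_eq_mul_div, gt_iff_lt, lt_div_iff₀ h0] at hsb
    simpa using hsb
  have hprod : (φ a - φ t) * (φ b - φ t) < 0 := by
    have hc2 : 0 < φ' t ^ 2 := by positivity
    nlinarith [mul_pos (neg_pos.mpr hua) hub]
  have hstrad : min (φ a) (φ b) < φ t ∧ φ t < max (φ a) (φ b) := by
    rcases lt_or_ge (φ a) (φ t) with h | h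
    · have hbgt : φ t < φ b := by nlinarith
      exact ⟨lt_of_le_of_lt (min_le_left _ _) h, lt_of_lt_of_le hbgt (le_max_right _ _)⟩
    · have hblt : φ b < φ t := by nlinarith
      have halt : φ t < φ a := by nlinarith
      exact ⟨lt_of_le_of_lt (min_le_right _ _) hblt, lt_of_lt_of_le halt (le_max_left _ _)⟩
  refine ⟨min (φ t - min (φ a) (φ b)) (max (φ a) (φ b) - φ t), by
      simp only [lt_min_iff]; constructor <;> linarith [hstrad.1, hstrad.2], ?_⟩
  intro x hxI hxd
  -- x lies in uIcc (φ a) (φ b)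
  have hxuIcc : x ∈ Set.uIcc (φ a) (φ b) := by
    show x ∈ Set.Icc (min (φ a) (φ b)) (max (φ a) (φ b))
    rw [Real.dist_eq] at hxd
    have hA : |x - φ t| < φ t - min (φ a) (φ b) := lt_of_lt_of_le hxd (min_le_left _ _)
    have hB : |x - φ t| < max (φ a) (φ b) - φ t := lt_of_lt_of_le hxd (min_le_right _ _)
    rw [abs_lt] at hA hB
    exact ⟨by linarith [hA.1], by linarith [hB.2]⟩
  have hab : a ≤ b := by simp [ha, hb]; linarith
  have hsub : Set.uIcc a b ⊆ Set.Icc α β := by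
    rw [Set.uIcc_of_le hab]
    exact Set.Icc_subset_Icc (by linarith [haIoo.1]) (by linarith [hbIoo.2])
  have hivt := intermediate_value_uIcc (hφc.mono hsub)
  obtain ⟨s, hsmem, hsx⟩ := hivt hxuIcc
  rw [Set.uIcc_of_le hab] at hsmem
  have hsIoo : s ∈ Set.Ioo α β :=
    ⟨lt_of_lt_of_le haIoo.1 hsmem.1, lt_of_le_of_lt hsmem.2 hbIoo.2⟩
  have hsd : dist s t < δ1 := by
    rw [Real.dist_eq, abs_lt]
    constructor <;> [skip; skip] <;>
      · obtain ⟨hs1, hs2⟩ := hsmem; simp [ha, hb] at hs1 hs2 ⊢ <;> linarith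
  have := hδ1 hsIoo hsd
  rw [hsx] at this
  exact this
end
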